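/- arXiv:0810.1007 — 5 statements merged into one kernel-verified Lean document; each statement's English description precedes it below -/
import Mathlib

section
/- Let n ≥ 1, let J : {1,…,n} × {1,…,n} → ℝ satisfy J_{ij} ≥ 0 for all 1 ≤ i,j ≤ n, and define the Lee–Yang partition function Z(h₁,…,hₙ) = Σ_{σ ∈ {-1,1}ⁿ} exp(Σ_{i,j=1}^n J_{ij} σ_i σ_j) · exp(Σ_{i=1}^n σ_i h_i) for (h₁,…,hₙ) ∈ ℂⁿ. Then Z(h₁,…,hₙ) ≠ 0 whenever Re(h_i) > 0 for all 1 ≤ i ≤ n. -/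
open Finset Function

set_option maxHeartbeats 1000000

lemma normSq_lt_one {z : ℂ} (hz : ‖z‖ < 1) : Complex.normSq z < 1 := by
  rw [← Complex.sq_norm]
  nlinarith [norm_nonneg z]

lemma edge_ne (b : ℝ) (hb0 : 0 ≤ b) (hb1 : b ≤ 1) :
    ∀ z w : ℂ, ‖z‖ < 1 → ‖w‖ < 1 → (1 : ℂ) + b*z + b*w + z*w ≠ 0 := by
  intro z w hz hw H
  have h1 := normSq_lt_one hz
  have h2 := normSq_lt_one hw
  rw [Complex.normSq_apply] at h1 h2
  have key : Complex.normSq ((b : ℂ) + z) ≤ Complex.normSq (1 + (b : ℂ)*z) := by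
    simp only [Complex.normSq_apply, Complex.add_re, Complex.add_im, Complex.mul_re,
      Complex.mul_im, Complex.ofReal_re, Complex.ofReal_im, Complex.one_re, Complex.one_im]
    have hb2 : b^2 ≤ 1 := by nlinarith
    have hzz : z.re*z.re + z.im*z.im ≤ 1 := le_of_lt h1
    nlinarith [mul_nonneg (sub_nonneg.2 hb2) (sub_nonneg.2 hzz)]
  by_cases h0 : (b : ℂ) + z = 0
  · have hz' : z = -(b : ℂ) := by linear_combination h0
    rw [hz'] at H
    have hb2 : (1 : ℂ) - b^2 = 0 := by linear_combination H
    have hb2' : (1 : ℝ) - b^2 = 0 := by exact_mod_cast hb2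
    have hb : b = 1 := by nlinarith
    rw [hz', hb] at hz
    simp at hz
  · have hrel : (1 : ℂ) + b*z = -(w*((b : ℂ)+z)) := by linear_combination H
    have heq : Complex.normSq (1 + (b : ℂ)*z)
        = Complex.normSq w * Complex.normSq ((b : ℂ)+z) := by
      rw [hrel]; simp [Complex.normSq_mul]
    have hpos : 0 < Complex.normSq ((b : ℂ)+z) := Complex.normSq_pos.mpr h0
    nlinarith [mul_pos (show (0:ℝ) < 1 - Complex.normSq w by
      rw [Complex.normSq_apply]; linarith) hpos]

lemma asano (A B C D : ℂ)
    (h : ∀ z w : ℂ, ‖z‖ < 1 → ‖w‖ < 1 → A + B*z + C*w + D*(z*w) ≠ 0) :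
    ∀ u : ℂ, ‖u‖ < 1 → A + D*u ≠ 0 := by
  intro u hu hzero
  have hA : A ≠ 0 := by
    have := h 0 0 (by norm_num) (by norm_num); simpa using this
  have hD : D ≠ 0 := by
    intro hD; rw [hD] at hzero; simp only [zero_mul, add_zero] at hzero; exact hA hzero
  obtain ⟨s, hs⟩ : ∃ s : ℂ, s ^ 2 = (B+C)^2 - 4*(D*A) :=
    IsAlgClosed.exists_pow_nat_eq ((B+C)^2 - 4*(D*A)) (n := 2) (by norm_num)
  set r₁ : ℂ := (-(B+C) + s)/(2*D) with hr₁
  set r₂ : ℂ := (-(B+C) - s)/(2*D) with hr₂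
  have e1 : 2*D*r₁ = -(B+C) + s := by rw [hr₁]; field_simp
  have e2 : 2*D*r₂ = -(B+C) - s := by rw [hr₂]; field_simp
  have hprod4 : (2*D*r₁)*(2*D*r₂) = 4*(D*A) := by rw [e1, e2]; linear_combination -hs
  have hroot : ∀ r : ℂ, 2*D*r = -(B+C) + s ∨ 2*D*r = -(B+C) - s →
      A + B*r + C*r + D*(r*r) = 0 := by
    rintro r (e | e) <;>
    · have h2 : (2*D*r)^2 + 2*(B+C)*(2*D*r) + 4*(D*A) = 0 := by
        rw [e]; linear_combination hs
      have h3 : 4*D*(A + B*r + C*r + D*(r*r)) = 0 := by linear_combination h2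
      have h4 : (4 : ℂ)*D ≠ 0 := by simp [hD]
      exact (mul_eq_zero.mp h3).resolve_left h4
  have hDpos : 0 < ‖D‖ := norm_pos_iff.2 hD
  have hAD : ‖A‖ < ‖D‖ := by
    have hDu : D * u = -A := by linear_combination hzero
    have : ‖A‖ = ‖D‖ * ‖u‖ := by rw [← norm_neg A, ← hDu, norm_mul]
    rw [this]
    nlinarith
  have hprodn : ‖2*D*r₁‖ * ‖2*D*r₂‖ < (2*‖D‖) * (2*‖D‖) := by
    rw [← norm_mul, hprod4]
    have : ‖(4 : ℂ)*(D*A)‖ = 4 * (‖D‖*‖A‖) := by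
      simp [norm_mul]
    rw [this]; nlinarith
  have hex : ∃ r : ℂ, (2*D*r = -(B+C) + s ∨ 2*D*r = -(B+C) - s) ∧ ‖r‖ < 1 := by
    have n1 : ‖2*D*r₁‖ = 2*‖D‖*‖r₁‖ := by simp [norm_mul]
    have n2 : ‖2*D*r₂‖ = 2*‖D‖*‖r₂‖ := by simp [norm_mul]
    rcases lt_or_ge ‖r₁‖ 1 with h1 | h1
    · exact ⟨r₁, Or.inl e1, h1⟩
    · refine ⟨r₂, Or.inr e2, ?_⟩
      by_contra h2
      push_neg at h2
      rw [n1, n2] at hprodn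
      have hone : (1:ℝ)*1 ≤ ‖r₁‖*‖r₂‖ :=
        mul_le_mul h1 h2 zero_le_one (le_trans zero_le_one h1)
      nlinarith [mul_pos hDpos hDpos]
  obtain ⟨r, hr, hrlt⟩ := hex
  exact h r r hrlt hrlt (hroot r hr)

lemma mult_closure (A B C D : ℂ) (b : ℝ) (hb0 : 0 ≤ b) (hb1 : b ≤ 1)
    (h : ∀ z w : ℂ, ‖z‖ < 1 → ‖w‖ < 1 → A + B*z + C*w + D*(z*w) ≠ 0) :
    ∀ z w : ℂ, ‖z‖ < 1 → ‖w‖ < 1 → A + (b*B)*z + (b*C)*w + D*(z*w) ≠ 0 := by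
  -- Step 1: contract (z, z')
  have step1 : ∀ w w' : ℂ, ‖w‖ < 1 → ‖w'‖ < 1 → ∀ u : ℂ, ‖u‖ < 1 →
      (A + C*w)*(1 + b*w') + (B + D*w)*((b : ℂ) + w')*u ≠ 0 := by
    intro w w' hw hw'
    have hprod : ∀ z z' : ℂ, ‖z‖ < 1 → ‖z'‖ < 1 →
        (A + C*w) * (1 + b*w') + ((B + D*w) * (1 + b*w')) * z
          + ((A + C*w) * ((b : ℂ) + w')) * z'
          + ((B + D*w) * ((b : ℂ) + w')) * (z * z') ≠ 0 := by
      intro z z' hz hz' hcontra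
      have h1 := h z w hz hw
      have h2 := edge_ne b hb0 hb1 z' w' hz' hw'
      have : (A + B*z + C*w + D*(z*w)) * ((1 : ℂ) + b*z' + b*w' + z'*w') = 0 := by
        linear_combination hcontra
      rcases mul_eq_zero.mp this with h' | h'
      · exact h1 h'
      · exact h2 h'
    exact asano _ _ _ _ hprod
  -- Step 2: contract (w, w')
  intro z w hz hw
  have hstep2 : ∀ y y' : ℂ, ‖y‖ < 1 → ‖y'‖ < 1 →
      (A + (b*B)*z) + ((C + b*D*z))*y + ((b*A + B*z))*y' + ((b*C + D*z))*(y*y') ≠ 0 := by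
    intro y y' hy hy' hcontra
    apply step1 y y' hy hy' z hz
    push_cast
    linear_combination hcontra
  have := asano _ _ _ _ hstep2 w hw
  intro hcontra
  apply this
  linear_combination hcontra

variable {n : ℕ}

noncomputable def Zc (c : Finset (Fin n) → ℂ) (z : Fin n → ℂ) : ℂ :=
  ∑ S : Finset (Fin n), c S * ∏ i ∈ S, z i

lemma Zc_decomp (c : Finset (Fin n) → ℂ) (z : Fin n → ℂ) (i j : Fin n) (hij : i ≠ j)
    (u v : ℂ) :
    Zc c (update (update z i u) j v) =
      (∑ S ∈ univ.filter (fun S : Finset (Fin n) => i ∉ S ∧ j ∉ S), c S * ∏ k ∈ S, z k)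
    + (∑ S ∈ univ.filter (fun S : Finset (Fin n) => i ∈ S ∧ j ∉ S),
        c S * ∏ k ∈ S.erase i, z k) * u
    + (∑ S ∈ univ.filter (fun S : Finset (Fin n) => i ∉ S ∧ j ∈ S),
        c S * ∏ k ∈ S.erase j, z k) * v
    + (∑ S ∈ univ.filter (fun S : Finset (Fin n) => i ∈ S ∧ j ∈ S),
        c S * ∏ k ∈ (S.erase i).erase j, z k) * (u*v) := by
  classical
  have upd_eval : ∀ k : Fin n, k ≠ i → k ≠ j → update (update z i u) j v k = z k := by
    intro k hki hkj
    rw [Function.update_of_ne hkj, Function.update_of_ne hki]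
  have upd_i : update (update z i u) j v i = u := by
    rw [Function.update_of_ne hij, Function.update_self]
  have upd_j : update (update z i u) j v j = v := by
    rw [Function.update_self]
  have term_eval : ∀ S : Finset (Fin n),
      c S * ∏ k ∈ S, update (update z i u) j v k =
      (if i ∈ S then
        (if j ∈ S then c S * (∏ k ∈ (S.erase i).erase j, z k) * (u*v)
         else c S * (∏ k ∈ S.erase i, z k) * u)
       else
        (if j ∈ S then c S * (∏ k ∈ S.erase j, z k) * v
         else c S * ∏ k ∈ S, z k)) := by
    intro S
    by_cases hi : i ∈ S <;> by_cases hj : j ∈ S <;> simp only [hi, hj, if_true, if_false]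
    · rw [← Finset.mul_prod_erase S _ hi, ← Finset.mul_prod_erase (S.erase i) _
        (Finset.mem_erase.mpr ⟨Ne.symm hij, hj⟩), upd_i, upd_j,
        Finset.prod_congr rfl (fun k hk => upd_eval k
          (Finset.ne_of_mem_erase (Finset.mem_of_mem_erase hk))
          (Finset.ne_of_mem_erase hk))]
      ring
    · rw [← Finset.mul_prod_erase S _ hi, upd_i,
        Finset.prod_congr rfl (fun k hk => upd_eval k (Finset.ne_of_mem_erase hk)
          (fun h => hj (h ▸ Finset.mem_of_mem_erase hk)))]
      ring
    · rw [← Finset.mul_prod_erase S _ hj, upd_j,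
        Finset.prod_congr rfl (fun k hk => upd_eval k
          (fun h => hi (h ▸ Finset.mem_of_mem_erase hk)) (Finset.ne_of_mem_erase hk))]
      ring
    · rw [Finset.prod_congr rfl (fun k hk => upd_eval k
        (fun h => hi (h ▸ hk)) (fun h => hj (h ▸ hk)))]
  have split1 := Finset.sum_filter_add_sum_filter_not
    (univ : Finset (Finset (Fin n))) (fun S => i ∈ S)
    (fun S => c S * ∏ k ∈ S, update (update z i u) j v k)
  unfold Zc
  rw [← split1,
    ← Finset.sum_filter_add_sum_filter_not (univ.filter (fun S : Finset (Fin n) => i ∈ S))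
      (fun S => j ∈ S) (fun S => c S * ∏ k ∈ S, update (update z i u) j v k),
    ← Finset.sum_filter_add_sum_filter_not (univ.filter (fun S : Finset (Fin n) => i ∉ S))
      (fun S => j ∈ S) (fun S => c S * ∏ k ∈ S, update (update z i u) j v k),
    Finset.filter_filter, Finset.filter_filter, Finset.filter_filter, Finset.filter_filter]
  have e11 : ∑ S ∈ univ.filter (fun S : Finset (Fin n) => i ∈ S ∧ j ∈ S),
      c S * ∏ k ∈ S, update (update z i u) j v k
      = (∑ S ∈ univ.filter (fun S : Finset (Fin n) => i ∈ S ∧ j ∈ S),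
          c S * ∏ k ∈ (S.erase i).erase j, z k) * (u*v) := by
    rw [Finset.sum_mul]
    refine Finset.sum_congr rfl (fun S hS => ?_)
    obtain ⟨h1, h2⟩ := (Finset.mem_filter.mp hS).2
    rw [term_eval S]
    simp [h1, h2]
  have e10 : ∑ S ∈ univ.filter (fun S : Finset (Fin n) => i ∈ S ∧ j ∉ S),
      c S * ∏ k ∈ S, update (update z i u) j v k
      = (∑ S ∈ univ.filter (fun S : Finset (Fin n) => i ∈ S ∧ j ∉ S),
          c S * ∏ k ∈ S.erase i, z k) * u := by
    rw [Finset.sum_mul]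
    refine Finset.sum_congr rfl (fun S hS => ?_)
    obtain ⟨h1, h2⟩ := (Finset.mem_filter.mp hS).2
    rw [term_eval S]
    simp [h1, h2]
  have e01 : ∑ S ∈ univ.filter (fun S : Finset (Fin n) => ¬i ∈ S ∧ j ∈ S),
      c S * ∏ k ∈ S, update (update z i u) j v k
      = (∑ S ∈ univ.filter (fun S : Finset (Fin n) => i ∉ S ∧ j ∈ S),
          c S * ∏ k ∈ S.erase j, z k) * v := by
    rw [Finset.sum_mul]
    refine Finset.sum_congr rfl (fun S hS => ?_)
    obtain ⟨h1, h2⟩ := (Finset.mem_filter.mp hS).2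
    rw [term_eval S]
    simp [h1, h2]
  have e00 : ∑ S ∈ univ.filter (fun S : Finset (Fin n) => ¬i ∈ S ∧ ¬j ∈ S),
      c S * ∏ k ∈ S, update (update z i u) j v k
      = ∑ S ∈ univ.filter (fun S : Finset (Fin n) => i ∉ S ∧ j ∉ S),
          c S * ∏ k ∈ S, z k := by
    refine Finset.sum_congr rfl (fun S hS => ?_)
    obtain ⟨h1, h2⟩ := (Finset.mem_filter.mp hS).2
    rw [term_eval S]
    simp [h1, h2]
  rw [e11, e10, e01, e00]
  ring

lemma Zc_decomp_cmul (c : Finset (Fin n) → ℂ) (z : Fin n → ℂ) (i j : Fin n) (hij : i ≠ j)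
    (b : ℝ) (u v : ℂ) :
    Zc (fun S => (if ((i ∈ S) ≠ (j ∈ S)) then (b : ℂ) else 1) * c S)
        (update (update z i u) j v) =
      (∑ S ∈ univ.filter (fun S : Finset (Fin n) => i ∉ S ∧ j ∉ S), c S * ∏ k ∈ S, z k)
    + ((b : ℂ) * (∑ S ∈ univ.filter (fun S : Finset (Fin n) => i ∈ S ∧ j ∉ S),
        c S * ∏ k ∈ S.erase i, z k)) * u
    + ((b : ℂ) * (∑ S ∈ univ.filter (fun S : Finset (Fin n) => i ∉ S ∧ j ∈ S),
        c S * ∏ k ∈ S.erase j, z k)) * v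
    + (∑ S ∈ univ.filter (fun S : Finset (Fin n) => i ∈ S ∧ j ∈ S),
        c S * ∏ k ∈ (S.erase i).erase j, z k) * (u*v) := by
  classical
  rw [Zc_decomp _ z i j hij u v]
  congr 1
  · congr 1
    · congr 1
      · refine Finset.sum_congr rfl (fun S hS => ?_)
        obtain ⟨h1, h2⟩ := (Finset.mem_filter.mp hS).2
        simp [h1, h2]
      · rw [Finset.mul_sum]
        refine congrArg (· * u) (Finset.sum_congr rfl (fun S hS => ?_))
        obtain ⟨h1, h2⟩ := (Finset.mem_filter.mp hS).2
        simp [h1, h2]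
        ring
    · rw [Finset.mul_sum]
      refine congrArg (· * v) (Finset.sum_congr rfl (fun S hS => ?_))
      obtain ⟨h1, h2⟩ := (Finset.mem_filter.mp hS).2
      simp [h1, h2]
      ring
  · refine congrArg (· * (u*v)) (Finset.sum_congr rfl (fun S hS => ?_))
    obtain ⟨h1, h2⟩ := (Finset.mem_filter.mp hS).2
    simp [h1, h2]

lemma core (b : Fin n × Fin n → ℝ) (hb0 : ∀ e, 0 ≤ b e) (hb1 : ∀ e, b e ≤ 1)
    (E : Finset (Fin n × Fin n)) :
    ∀ z : Fin n → ℂ, (∀ i, ‖z i‖ < 1) →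
      Zc (fun S => ∏ e ∈ E, (if ((e.1 ∈ S) ≠ (e.2 ∈ S)) then (b e : ℂ) else 1)) z ≠ 0 := by
  classical
  induction E using Finset.induction_on with
  | empty =>
    intro z hz
    have hZ : Zc (n := n) (fun S => ∏ e ∈ (∅ : Finset (Fin n × Fin n)),
        (if ((e.1 ∈ S) ≠ (e.2 ∈ S)) then (b e : ℂ) else 1)) z = ∏ i, (z i + 1) := by
      unfold Zc
      rw [Finset.prod_add]
      rw [← Finset.powerset_univ]
      refine Finset.sum_congr rfl (fun S hS => ?_)
      simp
    rw [hZ]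
    refine Finset.prod_ne_zero_iff.mpr (fun i _ => ?_)
    intro hzero
    have hm : z i = -1 := by linear_combination hzero
    have h1 := hz i
    rw [hm] at h1
    simp at h1
  | @insert a E' ha ih =>
    intro z hz
    have hfun : (fun S : Finset (Fin n) => ∏ e ∈ insert a E',
        (if ((e.1 ∈ S) ≠ (e.2 ∈ S)) then (b e : ℂ) else 1)) =
        (fun S => (if ((a.1 ∈ S) ≠ (a.2 ∈ S)) then (b a : ℂ) else 1) *
          ∏ e ∈ E', (if ((e.1 ∈ S) ≠ (e.2 ∈ S)) then (b e : ℂ) else 1)) := by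
      funext S
      rw [Finset.prod_insert ha]
    rw [hfun]
    by_cases hij : a.1 = a.2
    · have : (fun S : Finset (Fin n) => (if ((a.1 ∈ S) ≠ (a.2 ∈ S)) then (b a : ℂ) else 1) *
          ∏ e ∈ E', (if ((e.1 ∈ S) ≠ (e.2 ∈ S)) then (b e : ℂ) else 1)) =
          (fun S => ∏ e ∈ E', (if ((e.1 ∈ S) ≠ (e.2 ∈ S)) then (b e : ℂ) else 1)) := by
        funext S
        rw [hij]
        simp
      rw [this]
      exact ih z hz
    · set c : Finset (Fin n) → ℂ :=
        fun S => ∏ e ∈ E', (if ((e.1 ∈ S) ≠ (e.2 ∈ S)) then (b e : ℂ) else 1) with hc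
      have hquad : ∀ u v : ℂ, ‖u‖ < 1 → ‖v‖ < 1 →
          (∑ S ∈ univ.filter (fun S : Finset (Fin n) => a.1 ∉ S ∧ a.2 ∉ S),
            c S * ∏ k ∈ S, z k)
          + (∑ S ∈ univ.filter (fun S : Finset (Fin n) => a.1 ∈ S ∧ a.2 ∉ S),
              c S * ∏ k ∈ S.erase a.1, z k) * u
          + (∑ S ∈ univ.filter (fun S : Finset (Fin n) => a.1 ∉ S ∧ a.2 ∈ S),
              c S * ∏ k ∈ S.erase a.2, z k) * v
          + (∑ S ∈ univ.filter (fun S : Finset (Fin n) => a.1 ∈ S ∧ a.2 ∈ S),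
              c S * ∏ k ∈ (S.erase a.1).erase a.2, z k) * (u*v) ≠ 0 := by
        intro u v hu hv
        rw [← Zc_decomp c z a.1 a.2 hij u v]
        apply ih
        intro k
        by_cases hk2 : k = a.2
        · subst hk2; rw [Function.update_self]; exact hv
        · rw [Function.update_of_ne hk2]
          by_cases hk1 : k = a.1
          · subst hk1; rw [Function.update_self]; exact hu
          · rw [Function.update_of_ne hk1]; exact hz k
      have := mult_closure _ _ _ _ (b a) (hb0 a) (hb1 a) hquad (z a.1) (z a.2)
        (hz a.1) (hz a.2)
      intro hcontra
      apply this
      rw [← Zc_decomp_cmul c z a.1 a.2 hij (b a) (z a.1) (z a.2)]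
      have hzz : update (update z a.1 (z a.1)) a.2 (z a.2) = z := by
        rw [Function.update_eq_self, Function.update_eq_self]
      rw [hzz]
      exact hcontra

abbrev Spin : Type := ({-1, 1} : Finset ℤ)

lemma spin_val (x : Spin) : (x : ℤ) = -1 ∨ (x : ℤ) = 1 := by
  have h := x.2
  rw [Finset.mem_insert, Finset.mem_singleton] at h
  exact h

noncomputable def spinEquiv (n : ℕ) : (Fin n → Spin) ≃ Finset (Fin n) where
  toFun σ := univ.filter (fun i => (σ i : ℤ) = -1)
  invFun S := fun i => if i ∈ S then ⟨-1, by decide⟩ else ⟨1, by decide⟩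
  left_inv σ := by
    funext i
    rcases spin_val (σ i) with h | h
    · simp [h]
      exact (Subtype.ext h.symm)
    · have hne : ¬ ((σ i : ℤ) = -1) := by rw [h]; decide
      simp [hne]
      exact (Subtype.ext h.symm)
  right_inv S := by
    ext i
    by_cases hi : i ∈ S <;> simp [hi]

lemma spinEquiv_mem (σ : Fin n → Spin) (i : Fin n) :
    ((σ i : ℤ) : ℂ) = if i ∈ spinEquiv n σ then -1 else 1 := by
  by_cases hi : i ∈ spinEquiv n σ
  · have : (σ i : ℤ) = -1 := by simpa [spinEquiv] using hi
    simp [hi, this]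
  · have h1 : ¬((σ i : ℤ) = -1) := by simpa [spinEquiv] using hi
    have : (σ i : ℤ) = 1 := (spin_val (σ i)).resolve_left h1
    simp [hi, this]

/-- **Lee–Yang theorem, part (a).** If all coupling constants `J i j` are non-negative,
then the Ising partition function
`Z(h) = ∑_{σ ∈ {-1,1}ⁿ} exp(∑_{i,j} J i j σ_i σ_j) · exp(∑_i σ_i h_i)`
does not vanish when all external fields `h i` have positive real part. -/
theorem lee_yang_a (n : ℕ) (hn : 1 ≤ n) (J : Fin n → Fin n → ℝ)
    (hJ : ∀ i j, 0 ≤ J i j) (h : Fin n → ℂ) (hh : ∀ i, 0 < (h i).re) :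
    ∑ σ : Fin n → ({-1, 1} : Finset ℤ),
      Complex.exp ((∑ i, ∑ j, J i j * ((σ i : ℤ) : ℝ) * ((σ j : ℤ) : ℝ) : ℝ)) *
        Complex.exp (∑ i, ((σ i : ℤ) : ℂ) * h i) ≠ 0 := by
  classical
  set b : Fin n × Fin n → ℝ := fun e => Real.exp (-(2 * J e.1 e.2)) with hb
  set z : Fin n → ℂ := fun i => Complex.exp (-(2 * h i)) with hzdef
  set c : Finset (Fin n) → ℂ :=
    fun S => ∏ e : Fin n × Fin n, (if ((e.1 ∈ S) ≠ (e.2 ∈ S)) then (b e : ℂ) else 1) with hcdef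
  set K1 : ℂ := Complex.exp (∑ e : Fin n × Fin n, ((J e.1 e.2 : ℝ) : ℂ)) with hK1
  set K2 : ℂ := Complex.exp (∑ i, h i) with hK2
  have key : ∀ σ : Fin n → Spin,
      Complex.exp ((∑ i, ∑ j, J i j * ((σ i : ℤ) : ℝ) * ((σ j : ℤ) : ℝ) : ℝ)) *
        Complex.exp (∑ i, ((σ i : ℤ) : ℂ) * h i) =
      K1 * K2 * (c (spinEquiv n σ) * ∏ i ∈ spinEquiv n σ, z i) := by
    intro σ
    set S := spinEquiv n σ with hS
    -- coupling factor
    have fact1 : Complex.exp ((∑ i, ∑ j, J i j * ((σ i : ℤ) : ℝ) * ((σ j : ℤ) : ℝ) : ℝ))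
        = K1 * c S := by
      have cast1 : ((∑ i, ∑ j, J i j * ((σ i : ℤ) : ℝ) * ((σ j : ℤ) : ℝ) : ℝ) : ℂ)
          = ∑ e : Fin n × Fin n,
              ((J e.1 e.2 : ℂ) * ((σ e.1 : ℤ) : ℂ) * ((σ e.2 : ℤ) : ℂ)) := by
        rw [Fintype.sum_prod_type]
        push_cast
        rfl
      have cast2 : ∀ e : Fin n × Fin n,
          (J e.1 e.2 : ℂ) * ((σ e.1 : ℤ) : ℂ) * ((σ e.2 : ℤ) : ℂ)
          = (J e.1 e.2 : ℂ) + (if ((e.1 ∈ S) ≠ (e.2 ∈ S)) then -(2*(J e.1 e.2 : ℂ)) else 0) := by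
        intro e
        rw [spinEquiv_mem σ e.1, spinEquiv_mem σ e.2, ← hS]
        by_cases h1 : e.1 ∈ S <;> by_cases h2 : e.2 ∈ S <;> simp [h1, h2] <;> ring
      rw [cast1, Finset.sum_congr rfl (fun e _ => cast2 e), Finset.sum_add_distrib,
        Complex.exp_add, hK1]
      congr 1
      rw [Complex.exp_sum, hcdef]
      refine Finset.prod_congr rfl (fun e _ => ?_)
      rw [apply_ite Complex.exp, Complex.exp_zero, hb]
      congr 1
      rw [Complex.ofReal_exp]
      congr 1
      push_cast
      ring
    -- field factor
    have fact2 : Complex.exp (∑ i, ((σ i : ℤ) : ℂ) * h i)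
        = K2 * ∏ i ∈ S, z i := by
      have cast3 : ∀ i, ((σ i : ℤ) : ℂ) * h i
          = h i + (if i ∈ S then -(2 * h i) else 0) := by
        intro i
        rw [spinEquiv_mem σ i, ← hS]
        by_cases h1 : i ∈ S <;> simp [h1] <;> ring
      rw [Finset.sum_congr rfl (fun i _ => cast3 i), Finset.sum_add_distrib,
        Complex.exp_add, hK2]
      congr 1
      rw [Finset.sum_ite_mem, Finset.univ_inter, Complex.exp_sum]
    rw [fact1, fact2]
    ring
  rw [Fintype.sum_equiv (spinEquiv n) _
    (fun S => K1 * K2 * (c S * ∏ i ∈ S, z i)) key]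
  rw [← Finset.mul_sum]
  refine mul_ne_zero (mul_ne_zero (Complex.exp_ne_zero _) (Complex.exp_ne_zero _)) ?_
  have hzlt : ∀ i, ‖z i‖ < 1 := by
    intro i
    rw [hzdef]
    simp only []
    rw [Complex.norm_exp]
    have : (-(2 * h i)).re = -(2 * (h i).re) := by simp
    rw [this]
    have := hh i
    calc Real.exp (-(2 * (h i).re)) < Real.exp 0 := by
          apply Real.exp_lt_exp.mpr; linarith
      _ = 1 := Real.exp_zero
  have hb0 : ∀ e, 0 ≤ b e := fun e => (Real.exp_pos _).le
  have hb1 : ∀ e, b e ≤ 1 := by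
    intro e
    rw [hb]
    apply Real.exp_le_one_iff.mpr
    have := hJ e.1 e.2
    linarith
  exact core b hb0 hb1 univ z hzlt
end

section
/- Let n ≥ 1 and let J : {1,…,n} × {1,…,n} → ℝ satisfy J_{ij} ≥ 0 for all 1 ≤ i,j ≤ n. Define Z(h₁,…,hₙ) = Σ_{σ ∈ {-1,1}ⁿ} exp(Σ_{i,j=1}^n J_{ij} σ_i σ_j) · exp(Σ_{i=1}^n σ_i h_i). Then every zero of the entire function h ↦ Z(h,h,…,h) of one complex variable lies on the imaginary axis, i.e., if Z(h,…,h) = 0 then Re(h) = 0. -/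
namespace LeeYangAux
open Finset

/-- The complex absolute value, as an absolute value (compatibility shim). -/
noncomputable def Complex.abs : AbsoluteValue ℂ ℝ where
  toFun z := ‖z‖
  map_mul' := norm_mul
  nonneg' := norm_nonneg
  eq_zero' _ := norm_eq_zero
  add_le' := norm_add_le

lemma Complex.abs_def (z : ℂ) : Complex.abs z = ‖z‖ := rfl

lemma Complex.abs_ofReal (r : ℝ) : Complex.abs (r : ℂ) = |r| := by
  rw [Complex.abs_def, Complex.norm_real, Real.norm_eq_abs]

lemma Complex.abs_apply (z : ℂ) : Complex.abs z = Real.sqrt (Complex.normSq z) :=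
  Complex.norm_def z

lemma Complex.sq_abs (z : ℂ) : Complex.abs z ^ 2 = Complex.normSq z :=
  Complex.sq_norm z

lemma Complex.abs_exp (z : ℂ) : Complex.abs (Complex.exp z) = Real.exp z.re :=
  Complex.norm_exp z

/-- If `B + t*C ≠ 0` for all `|t| > 1` and `C ≠ 0`, then `|B| ≤ |C|`. -/
lemma affine_abs_le {B C : ℂ} (hC : C ≠ 0)
    (h : ∀ t : ℂ, 1 < Complex.abs t → B + t * C ≠ 0) :
    Complex.abs B ≤ Complex.abs C := by
  by_contra hlt
  push_neg at hlt
  have hC0 : 0 < Complex.abs C := by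
    simpa [Complex.abs.pos_iff] using hC
  have ht : 1 < Complex.abs (-B / C) := by
    rw [map_div₀, map_neg_eq_map]
    exact (one_lt_div hC0).mpr hlt
  exact h _ ht (by field_simp; ring)

/-- If `|B| ≤ |C|`, `0 ≤ A ≤ 1`, `C ≠ 0`, then `A*B + t*C ≠ 0` for `|t| > 1`. -/
lemma affine_scaled_ne {B C : ℂ} {A : ℝ} (hA0 : 0 ≤ A) (hA1 : A ≤ 1) (hC : C ≠ 0)
    (hBC : Complex.abs B ≤ Complex.abs C) :
    ∀ t : ℂ, 1 < Complex.abs t → (A : ℂ) * B + t * C ≠ 0 := by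
  intro t ht heq
  have heq2 : t * C = -((A:ℂ) * B) := by linear_combination heq
  have h1 : Complex.abs t * Complex.abs C = A * Complex.abs B := by
    rw [← map_mul, heq2, map_neg_eq_map, map_mul, Complex.abs_ofReal, abs_of_nonneg hA0]
  have hC0 : 0 < Complex.abs C := by
    simpa [Complex.abs.pos_iff] using hC
  have hB0 : 0 ≤ Complex.abs B := Complex.abs.nonneg B
  nlinarith

/-- The base edge polynomial `1 + A z + A w + z w` with `0 < A ≤ 1` does not
vanish when `|z| > 1` and `|w| > 1`. -/
lemma base_edge {A : ℝ} (hA0 : 0 < A) (hA1 : A ≤ 1) :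
    ∀ z w : ℂ, 1 < Complex.abs z → 1 < Complex.abs w →
      1 + (A:ℂ) * z + (A:ℂ) * w + z * w ≠ 0 := by
  intro z w hz hw heq
  have hAz : (A:ℂ) + z ≠ 0 := by
    intro h0
    have : z = -(A:ℂ) := by linear_combination h0
    rw [this] at hz
    simp only [map_neg_eq_map, Complex.abs_ofReal, abs_of_nonneg hA0.le] at hz
    linarith
  have heq2 : w * ((A:ℂ) + z) = -(1 + (A:ℂ) * z) := by linear_combination heq
  have hns : Complex.normSq ((A:ℂ) + z) - Complex.normSq (1 + (A:ℂ) * z)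
      = (1 - A^2) * (Complex.normSq z - 1) := by
    simp only [Complex.normSq_apply, Complex.add_re, Complex.add_im, Complex.mul_re,
      Complex.mul_im, Complex.ofReal_re, Complex.ofReal_im, Complex.one_re, Complex.one_im]
    ring
  have hzn : 1 < Complex.normSq z := by
    have := Complex.sq_abs z
    nlinarith
  have hk1 : 0 ≤ 1 - A^2 := by nlinarith
  have hk2 : 0 ≤ Complex.normSq z - 1 := by linarith
  have hle : Complex.normSq (1 + (A:ℂ) * z) ≤ Complex.normSq ((A:ℂ) + z) := by
    nlinarith [mul_nonneg hk1 hk2]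
  have habs : Complex.abs (1 + (A:ℂ) * z) ≤ Complex.abs ((A:ℂ) + z) := by
    rw [Complex.abs_apply, Complex.abs_apply]
    exact Real.sqrt_le_sqrt hle
  have h1 : Complex.abs w * Complex.abs ((A:ℂ) + z) = Complex.abs (1 + (A:ℂ) * z) := by
    rw [← map_mul, heq2, map_neg_eq_map]
  have hAz0 : 0 < Complex.abs ((A:ℂ) + z) := by
    simpa [Complex.abs.pos_iff] using hAz
  nlinarith

/-- Pointwise Asano contraction. -/
lemma asano {a b c d : ℂ} (hd : d ≠ 0)
    (h1 : ∀ z w : ℂ, 1 < Complex.abs z → 1 < Complex.abs w →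
      a + z * b + w * c + z * w * d ≠ 0) :
    ∀ z : ℂ, 1 < Complex.abs z → a + z * d ≠ 0 := by
  intro z hz heq
  obtain ⟨s, hs⟩ := IsAlgClosed.exists_pow_nat_eq ((b + c)^2 - 4 * (a * d)) (n := 2) (by norm_num)
  set t1 : ℂ := (-(b+c) + s) / (2*d) with ht1
  set t2 : ℂ := (-(b+c) - s) / (2*d) with ht2
  have hd2 : (2:ℂ) * d ≠ 0 := by simp [hd]
  have hd4 : (4:ℂ) * d ≠ 0 := by simp [hd]
  have hu : t1 * (2*d) = -(b+c) + s := by rw [ht1]; field_simp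
  have hv : t2 * (2*d) = -(b+c) - s := by rw [ht2]; field_simp
  have hr1 : a + t1 * b + t1 * c + t1 * t1 * d = 0 := by
    have h4 : (a + t1 * b + t1 * c + t1 * t1 * d) * (4*d) = 0 := by
      linear_combination (2*(b+c) + t1*(2*d) + (-(b+c)+s)) * hu + hs
    exact (mul_eq_zero.mp h4).resolve_right hd4
  have hr2 : a + t2 * b + t2 * c + t2 * t2 * d = 0 := by
    have h4 : (a + t2 * b + t2 * c + t2 * t2 * d) * (4*d) = 0 := by
      linear_combination (2*(b+c) + t2*(2*d) + (-(b+c)-s)) * hv + hs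
    exact (mul_eq_zero.mp h4).resolve_right hd4
  have hp : t1 * t2 * d = a := by
    have h4 : (t1 * t2 * d - a) * (4*d) = 0 := by
      linear_combination (t2*(2*d)) * hu + (-(b+c)+s) * hv - hs
    have h5 := (mul_eq_zero.mp h4).resolve_right hd4
    linear_combination h5
  have habs : 1 < Complex.abs t1 * Complex.abs t2 := by
    have hd0 : 0 < Complex.abs d := by simpa [Complex.abs.pos_iff] using hd
    have ha : a = -(z * d) := by linear_combination heq
    have : Complex.abs t1 * Complex.abs t2 * Complex.abs d = Complex.abs z * Complex.abs d := by
      rw [← map_mul, ← map_mul, hp, ha, map_neg_eq_map, map_mul]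
    have h6 : Complex.abs t1 * Complex.abs t2 = Complex.abs z :=
      mul_right_cancel₀ (ne_of_gt hd0) this
    rw [h6]; exact hz
  have : 1 < Complex.abs t1 ∨ 1 < Complex.abs t2 := by
    by_contra hcon
    push_neg at hcon
    have h01 : 0 ≤ Complex.abs t1 := Complex.abs.nonneg _
    have h02 : 0 ≤ Complex.abs t2 := Complex.abs.nonneg _
    nlinarith [hcon.1, hcon.2]
  rcases this with h | h
  · exact h1 t1 t1 h h (by linear_combination hr1)
  · exact h1 t2 t2 h h (by linear_combination hr2)


/-- Key lemma: adding an edge factor `A` between two variables preserves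
non-vanishing, given non-vanishing of the polynomial and its partial derivatives. -/
lemma keyE {B00 B10 B01 B11 : ℂ} {A : ℝ} (hA0 : 0 < A) (hA1 : A ≤ 1)
    (h1 : ∀ s t : ℂ, 1 < Complex.abs s → 1 < Complex.abs t →
      B00 + s * B10 + t * B01 + s * t * B11 ≠ 0)
    (h2 : ∀ t : ℂ, 1 < Complex.abs t → B10 + t * B11 ≠ 0)
    (h3 : ∀ s : ℂ, 1 < Complex.abs s → B01 + s * B11 ≠ 0)
    (h4 : B11 ≠ 0) :
    ∀ s t : ℂ, 1 < Complex.abs s → 1 < Complex.abs t →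
      B00 + (A:ℂ) * s * B10 + (A:ℂ) * t * B01 + s * t * B11 ≠ 0 := by
  intro s t hs ht
  -- Step A: contract the first pair of variables
  have stepA : ∀ s w1 w2 : ℂ, 1 < Complex.abs s → 1 < Complex.abs w1 → 1 < Complex.abs w2 →
      (B00 + w1 * B01) * (1 + (A:ℂ) * w2) + s * ((B10 + w1 * B11) * ((A:ℂ) + w2)) ≠ 0 := by
    intro s w1 w2 hs hw1 hw2
    have hAw2 : (A:ℂ) + w2 ≠ 0 := by
      intro h0
      have : w2 = -(A:ℂ) := by linear_combination h0
      rw [this] at hw2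
      simp only [map_neg_eq_map, Complex.abs_ofReal, abs_of_nonneg hA0.le] at hw2
      linarith
    have hd : (B10 + w1 * B11) * ((A:ℂ) + w2) ≠ 0 :=
      mul_ne_zero (h2 w1 hw1) hAw2
    refine asano (b := (B10 + w1 * B11) * (1 + (A:ℂ) * w2))
      (c := (B00 + w1 * B01) * ((A:ℂ) + w2)) hd ?_ s hs
    intro z1 z2 hz1 hz2
    have hfac1 : B00 + z1 * B10 + w1 * B01 + z1 * w1 * B11 ≠ 0 := h1 z1 w1 hz1 hw1
    have hfac2 : 1 + (A:ℂ) * z2 + (A:ℂ) * w2 + z2 * w2 ≠ 0 := base_edge hA0 hA1 z2 w2 hz2 hw2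
    have : (B00 + w1 * B01) * (1 + (A:ℂ) * w2)
        + z1 * ((B10 + w1 * B11) * (1 + (A:ℂ) * w2))
        + z2 * ((B00 + w1 * B01) * ((A:ℂ) + w2))
        + z1 * z2 * ((B10 + w1 * B11) * ((A:ℂ) + w2))
        = (B00 + z1 * B10 + w1 * B01 + z1 * w1 * B11)
          * (1 + (A:ℂ) * z2 + (A:ℂ) * w2 + z2 * w2) := by ring
    rw [this]
    exact mul_ne_zero hfac1 hfac2
  -- Step B: contract the second pair of variables
  have hB01le : Complex.abs B01 ≤ Complex.abs B11 := affine_abs_le h4 h3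
  have hd' : (A:ℂ) * B01 + s * B11 ≠ 0 :=
    affine_scaled_ne hA0.le hA1 h4 hB01le s hs
  have := asano hd' (a := B00 + (A:ℂ) * s * B10) (b := B01 + (A:ℂ) * s * B11)
    (c := (A:ℂ) * B00 + s * B10) ?_ t ht
  · intro h0
    exact this (by linear_combination h0)
  · intro w1 w2 hw1 hw2
    have := stepA s w1 w2 hs hw1 hw2
    intro h0
    exact this (by linear_combination h0)


variable {n : ℕ}

/-- Partial-derivative style evaluation: sum over supersets of `U`. -/
noncomputable def evalD (c : Finset (Fin n) → ℂ) (U : Finset (Fin n)) (z : Fin n → ℂ) : ℂ :=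
  ∑ S : Finset (Fin n), if U ⊆ S then c S * ∏ i ∈ S \ U, z i else 0

/-- Totally Lee–Yang: all partial derivatives nonvanishing outside the polydisc. -/
def TLY (c : Finset (Fin n) → ℂ) : Prop :=
  ∀ (U : Finset (Fin n)) (z : Fin n → ℂ), (∀ i, 1 < Complex.abs (z i)) → evalD c U z ≠ 0

lemma evalD_congr {c : Finset (Fin n) → ℂ} {U : Finset (Fin n)} {z z' : Fin n → ℂ}
    (h : ∀ i ∉ U, z i = z' i) : evalD c U z = evalD c U z' := by
  refine Finset.sum_congr rfl fun S _ => ?_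
  by_cases hUS : U ⊆ S
  · simp only [if_pos hUS]
    congr 1
    refine Finset.prod_congr rfl fun i hi => ?_
    exact h i (Finset.mem_sdiff.mp hi).2
  · simp [hUS]

lemma evalD_coeff_congr {c c' : Finset (Fin n) → ℂ} {U : Finset (Fin n)} {z : Fin n → ℂ}
    (h : ∀ S, U ⊆ S → c S = c' S) : evalD c U z = evalD c' U z := by
  refine Finset.sum_congr rfl fun S _ => ?_
  by_cases hUS : U ⊆ S
  · simp only [if_pos hUS, h S hUS]
  · simp [hUS]

lemma evalD_factor {c c' : Finset (Fin n) → ℂ} {U : Finset (Fin n)} {z : Fin n → ℂ} (a : ℂ)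
    (h : ∀ S, U ⊆ S → (∀ k ∈ S \ U, z k ≠ 0) → c' S = a * c S) :
    evalD c' U z = a * evalD c U z := by
  rw [evalD, evalD, Finset.mul_sum]
  refine Finset.sum_congr rfl fun S _ => ?_
  by_cases hUS : U ⊆ S
  · simp only [if_pos hUS]
    by_cases hz : ∀ k ∈ S \ U, z k ≠ 0
    · rw [h S hUS hz]; ring
    · push_neg at hz
      obtain ⟨k, hk, hk0⟩ := hz
      rw [Finset.prod_eq_zero hk hk0]
      ring
  · simp [hUS]

lemma evalD_update {c : Finset (Fin n) → ℂ} {U : Finset (Fin n)} {z : Fin n → ℂ}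
    {j : Fin n} (hj : j ∉ U) :
    evalD c U z = evalD c U (Function.update z j 0) + z j * evalD c (insert j U) z := by
  rw [evalD, evalD, evalD, Finset.mul_sum, ← Finset.sum_add_distrib]
  refine Finset.sum_congr rfl fun S _ => ?_
  by_cases hUS : U ⊆ S
  · by_cases hjS : j ∈ S
    · have hins : insert j U ⊆ S := Finset.insert_subset hjS hUS
      have hjSU : j ∈ S \ U := Finset.mem_sdiff.mpr ⟨hjS, hj⟩
      have hzero : ∏ i ∈ S \ U, Function.update z j 0 i = 0 :=
        Finset.prod_eq_zero hjSU (by simp)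
      have hsd : S \ insert j U = (S \ U).erase j := by
        ext x
        simp [Finset.mem_sdiff, Finset.mem_erase, Finset.mem_insert]
        tauto
      have hprod : ∏ i ∈ S \ U, z i = z j * ∏ i ∈ (S \ U).erase j, z i :=
        (Finset.mul_prod_erase _ _ hjSU).symm
      simp only [if_pos hUS, if_pos hins, hzero, hsd, hprod]
      ring
    · have hins : ¬ insert j U ⊆ S := fun hc => hjS (hc (Finset.mem_insert_self j U))
      have hprod : ∏ i ∈ S \ U, Function.update z j 0 i = ∏ i ∈ S \ U, z i := by
        refine Finset.prod_congr rfl fun i hi => ?_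
        have : i ≠ j := fun he => hjS (he ▸ (Finset.mem_sdiff.mp hi).1)
        simp [Function.update_of_ne this]
      simp only [if_pos hUS, if_neg hins, hprod]
      ring
  · have hins : ¬ insert j U ⊆ S := fun hc => hUS ((Finset.subset_insert j U).trans hc)
    simp [hUS, hins]

lemma evalD_update' {c : Finset (Fin n) → ℂ} {U : Finset (Fin n)} {z : Fin n → ℂ}
    {j : Fin n} (hj : j ∉ U) (t : ℂ) :
    evalD c U (Function.update z j t)
      = evalD c U (Function.update z j 0) + t * evalD c (insert j U) z := by
  rw [evalD_update (z := Function.update z j t) hj]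
  rw [Function.update_idem, Function.update_self]
  congr 1
  congr 1
  refine evalD_congr fun i hi => ?_
  have : i ≠ j := fun he => hi (he ▸ Finset.mem_insert_self j U)
  simp [Function.update_of_ne this]

/-- Multiply the coefficients of sets avoiding `j` by `A`. -/
def Nc (j : Fin n) (A : ℝ) (c : Finset (Fin n) → ℂ) : Finset (Fin n) → ℂ :=
  fun S => (if j ∈ S then 1 else (A:ℂ)) * c S

/-- Multiply the coefficients of sets separating `i` from `j` by `A`. -/
def Ec (i j : Fin n) (A : ℝ) (c : Finset (Fin n) → ℂ) : Finset (Fin n) → ℂ :=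
  fun S => (if (i ∈ S ↔ j ∈ S) then 1 else (A:ℂ)) * c S

lemma tly_N {c : Finset (Fin n) → ℂ} (hc : TLY c) {A : ℝ} (hA0 : 0 < A) (hA1 : A ≤ 1)
    (j : Fin n) : TLY (Nc j A c) := by
  intro U z hz
  by_cases hj : j ∈ U
  · have he : evalD (Nc j A c) U z = evalD c U z :=
      evalD_coeff_congr fun S hUS => by simp [Nc, hUS hj]
    rw [he]; exact hc U z hz
  · rw [evalD_update (c := Nc j A c) hj]
    have h1 : evalD (Nc j A c) (insert j U) z = evalD c (insert j U) z :=
      evalD_coeff_congr fun S hUS => by simp [Nc, hUS (Finset.mem_insert_self j U)]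
    have h2 : evalD (Nc j A c) U (Function.update z j 0)
        = (A:ℂ) * evalD c U (Function.update z j 0) := by
      refine evalD_factor _ fun S hUS hk => ?_
      have hjS : j ∉ S := by
        intro hjS
        exact hk j (Finset.mem_sdiff.mpr ⟨hjS, hj⟩) (by simp)
      simp [Nc, hjS]
    rw [h1, h2]
    have hC : evalD c (insert j U) z ≠ 0 := hc _ z hz
    have hB : ∀ t : ℂ, 1 < Complex.abs t →
        evalD c U (Function.update z j 0) + t * evalD c (insert j U) z ≠ 0 := by
      intro t ht
      have hz' : ∀ i, 1 < Complex.abs (Function.update z j t i) := by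
        intro i
        by_cases hij : i = j
        · subst hij; simp [ht]
        · simp [Function.update_of_ne hij, hz i]
      have := hc U (Function.update z j t) hz'
      rwa [evalD_update' hj t] at this
    exact affine_scaled_ne hA0.le hA1 hC (affine_abs_le hC hB) (z j) (hz j)

lemma tly_E {c : Finset (Fin n) → ℂ} (hc : TLY c) {A : ℝ} (hA0 : 0 < A) (hA1 : A ≤ 1)
    {i j : Fin n} (hij : i ≠ j) : TLY (Ec i j A c) := by
  intro U z hz
  by_cases hi : i ∈ U <;> by_cases hj : j ∈ U
  · -- both in U
    have he : evalD (Ec i j A c) U z = evalD c U z :=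
      evalD_coeff_congr fun S hUS => by simp [Ec, hUS hi, hUS hj]
    rw [he]; exact hc U z hz
  · -- i ∈ U, j ∉ U
    have he : evalD (Ec i j A c) U z = evalD (Nc j A c) U z :=
      evalD_coeff_congr fun S hUS => by
        simp only [Ec, Nc, hUS hi]
        by_cases hjS : j ∈ S <;> simp [hjS]
    rw [he]; exact tly_N hc hA0 hA1 j U z hz
  · -- j ∈ U, i ∉ U
    have he : evalD (Ec i j A c) U z = evalD (Nc i A c) U z :=
      evalD_coeff_congr fun S hUS => by
        simp only [Ec, Nc, hUS hj]
        by_cases hiS : i ∈ S <;> simp [hiS]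
    rw [he]; exact tly_N hc hA0 hA1 i U z hz
  · -- main case: i ∉ U, j ∉ U
    set B00 := evalD c U (Function.update (Function.update z j 0) i 0) with hB00
    set B10 := evalD c (insert i U) (Function.update z j 0) with hB10
    set B01 := evalD c (insert j U) (Function.update z i 0) with hB01
    set B11 := evalD c (insert i (insert j U)) z with hB11
    have hiU' : i ∉ insert j U := by simp [hij, hi]
    have hjU' : j ∉ insert i U := by simp [Ne.symm hij, hj]
    have hdecomp : ∀ s t : ℂ, evalD c U (Function.update (Function.update z i s) j t)
        = B00 + s * B10 + t * B01 + s * t * B11 := by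
      intro s t
      rw [evalD_update' hj t,
        show Function.update (Function.update z i s) j 0
          = Function.update (Function.update z j 0) i s from Function.update_comm hij s 0 z,
        evalD_update' hi s, evalD_update' (U := insert j U) hiU' s]
      ring
    have h1' : ∀ s t : ℂ, 1 < Complex.abs s → 1 < Complex.abs t →
        B00 + s * B10 + t * B01 + s * t * B11 ≠ 0 := by
      intro s t hs ht
      rw [← hdecomp]
      refine hc U _ fun k => ?_
      by_cases hkj : k = j
      · subst hkj; simp [ht]
      · by_cases hki : k = i
        · subst hki; simp [Function.update_of_ne hkj, Function.update_self, hs]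
        · simp [Function.update_of_ne hkj, Function.update_of_ne hki, hz k]
    have h2' : ∀ t : ℂ, 1 < Complex.abs t → B10 + t * B11 ≠ 0 := by
      intro t ht
      have hz' : ∀ k, 1 < Complex.abs (Function.update z j t k) := by
        intro k
        by_cases hkj : k = j
        · subst hkj; simp [ht]
        · simp [Function.update_of_ne hkj, hz k]
      have := hc (insert i U) (Function.update z j t) hz'
      rwa [evalD_update' (U := insert i U) hjU' t, Finset.insert_comm] at this
    have h3' : ∀ s : ℂ, 1 < Complex.abs s → B01 + s * B11 ≠ 0 := by
      intro s hs
      have hz' : ∀ k, 1 < Complex.abs (Function.update z i s k) := by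
        intro k
        by_cases hki : k = i
        · subst hki; simp [hs]
        · simp [Function.update_of_ne hki, hz k]
      have := hc (insert j U) (Function.update z i s) hz'
      rwa [evalD_update' (U := insert j U) hiU' s] at this
    have h4' : B11 ≠ 0 := hc _ z hz
    have hEdecomp : evalD (Ec i j A c) U z
        = B00 + (A:ℂ) * z i * B10 + (A:ℂ) * z j * B01 + z i * z j * B11 := by
      rw [evalD_update (c := Ec i j A c) hj]
      have p2a : evalD (Ec i j A c) (insert j U) z = evalD (Nc i A c) (insert j U) z := by
        refine evalD_coeff_congr fun S hUS => ?_
        have hjS : j ∈ S := hUS (Finset.mem_insert_self j U)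
        simp only [Ec, Nc, hjS]
        by_cases hiS : i ∈ S <;> simp [hiS]
      have p2b : evalD (Nc i A c) (insert j U) (Function.update z i 0) = (A:ℂ) * B01 := by
        refine evalD_factor _ fun S hUS hk => ?_
        have hiS : i ∉ S := by
          intro hiS
          exact hk i (Finset.mem_sdiff.mpr ⟨hiS, hiU'⟩) (by simp)
        simp [Nc, hiS]
      have p2c : evalD (Nc i A c) (insert i (insert j U)) z = B11 :=
        evalD_coeff_congr fun S hUS => by
          simp [Nc, hUS (Finset.mem_insert_self i (insert j U))]
      have p2 : evalD (Ec i j A c) (insert j U) z = (A:ℂ) * B01 + z i * B11 := by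
        rw [p2a, evalD_update (c := Nc i A c) (U := insert j U) hiU', p2b, p2c]
      have p1a : evalD (Ec i j A c) U
          (Function.update (Function.update z j 0) i 0) = (1:ℂ) * B00 := by
        refine evalD_factor _ fun S hUS hk => ?_
        have hiS : i ∉ S := by
          intro hiS
          exact hk i (Finset.mem_sdiff.mpr ⟨hiS, hi⟩) (by simp)
        have hjS : j ∉ S := by
          intro hjS
          refine hk j (Finset.mem_sdiff.mpr ⟨hjS, hj⟩) ?_
          rw [Function.update_of_ne (Ne.symm hij)]
          simp
        simp [Ec, hiS, hjS]
      have p1b : evalD (Ec i j A c) (insert i U) (Function.update z j 0) = (A:ℂ) * B10 := by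
        refine evalD_factor _ fun S hUS hk => ?_
        have hiS : i ∈ S := hUS (Finset.mem_insert_self i U)
        have hjS : j ∉ S := by
          intro hjS
          exact hk j (Finset.mem_sdiff.mpr ⟨hjS, hjU'⟩) (by simp)
        simp [Ec, hiS, hjS]
      have p1 : evalD (Ec i j A c) U (Function.update z j 0)
          = (1:ℂ) * B00 + z i * ((A:ℂ) * B10) := by
        rw [evalD_update (c := Ec i j A c) (z := Function.update z j 0) hi, p1a, p1b,
          Function.update_of_ne hij]
      rw [p1, p2]
      ring
    rw [hEdecomp]
    exact keyE hA0 hA1 h1' h2' h3' h4' (z i) (z j) (hz i) (hz j)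

/-- The free polynomial `∏ (1 + z i)` is totally Lee–Yang. -/
lemma tly_one : TLY (fun _ : Finset (Fin n) => (1:ℂ)) := by
  intro U z hz
  have he : evalD (fun _ => (1:ℂ)) U z = ∏ i ∈ Finset.univ \ U, (z i + 1) := by
    rw [evalD, ← Finset.sum_filter, Finset.prod_add]
    refine Finset.sum_nbij' (fun S => S \ U) (fun T => T ∪ U) ?_ ?_ ?_ ?_ ?_
    · intro S hS
      simp only [Finset.mem_filter, Finset.mem_univ, true_and] at hS
      simp only [Finset.mem_powerset]
      exact Finset.sdiff_subset_sdiff (Finset.subset_univ S) le_rfl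
    · intro T hT
      simp only [Finset.mem_filter, Finset.mem_univ, true_and]
      exact Finset.subset_union_right
    · intro S hS
      simp only [Finset.mem_filter, Finset.mem_univ, true_and] at hS
      exact Finset.sdiff_union_of_subset hS
    · intro T hT
      simp only [Finset.mem_powerset] at hT
      show (T ∪ U) \ U = T
      rw [Finset.union_sdiff_right]
      exact Finset.sdiff_eq_self_of_disjoint
        (Finset.disjoint_of_subset_left hT Finset.sdiff_disjoint)
    · intro S hS
      simp
  rw [he]
  refine Finset.prod_ne_zero_iff.mpr fun i _ => ?_
  intro h0
  have hzi : z i = -1 := by linear_combination h0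
  have h1 := hz i
  rw [hzi] at h1
  simp at h1

/-- Coefficients of the Lee–Yang polynomial built from a set of (ordered) edges. -/
noncomputable def cW (J : Fin n → Fin n → ℝ) (F : Finset (Fin n × Fin n)) :
    Finset (Fin n) → ℂ :=
  fun S => ∏ p ∈ F.filter (fun p => ¬(p.1 ∈ S ↔ p.2 ∈ S)), ((Real.exp (-2 * J p.1 p.2) : ℝ) : ℂ)

lemma cW_insert (J : Fin n → Fin n → ℝ) {p : Fin n × Fin n} {F : Finset (Fin n × Fin n)}
    (hp : p ∉ F) :
    cW J (insert p F) = Ec p.1 p.2 (Real.exp (-2 * J p.1 p.2)) (cW J F) := by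
  funext S
  rw [Ec]
  show ∏ q ∈ (insert p F).filter (fun q => ¬(q.1 ∈ S ↔ q.2 ∈ S)), ((Real.exp (-2 * J q.1 q.2):ℝ):ℂ) = _
  rw [Finset.filter_insert]
  by_cases hsplit : (p.1 ∈ S ↔ p.2 ∈ S)
  · rw [if_neg (not_not_intro hsplit), if_pos hsplit, one_mul]
    rfl
  · rw [if_pos hsplit, if_neg hsplit,
      Finset.prod_insert (fun hc => hp (Finset.mem_filter.mp hc).1)]
    rfl

lemma tly_cW (J : Fin n → Fin n → ℝ) (hJ : ∀ i j, 0 ≤ J i j) :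
    ∀ F : Finset (Fin n × Fin n), (∀ p ∈ F, p.1 ≠ p.2) → TLY (cW J F) := by
  intro F
  induction F using Finset.induction_on with
  | empty =>
    intro _
    have he : cW J (∅ : Finset (Fin n × Fin n)) = fun _ => (1:ℂ) := by
      funext S; simp [cW]
    rw [he]; exact tly_one
  | @insert p F hpF ih =>
    intro hne
    rw [cW_insert J hpF]
    exact tly_E (ih fun q hq => hne q (Finset.mem_insert_of_mem hq))
      (Real.exp_pos _)
      (Real.exp_le_one_iff.mpr (by nlinarith [hJ p.1 p.2]))
      (hne p (Finset.mem_insert_self p F))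

/-- The one-variable Lee–Yang polynomial. -/
noncomputable def Qpoly (J : Fin n → Fin n → ℝ) (z : ℂ) : ℂ :=
  ∑ S : Finset (Fin n),
    cW J (Finset.univ.filter fun p : Fin n × Fin n => p.1 ≠ p.2) S * z ^ S.card

lemma Qpoly_ne_zero {J : Fin n → Fin n → ℝ} (hJ : ∀ i j, 0 ≤ J i j) {z : ℂ}
    (hz : 1 < Complex.abs z) : Qpoly J z ≠ 0 := by
  have h := tly_cW J hJ (Finset.univ.filter fun p : Fin n × Fin n => p.1 ≠ p.2)
    (fun p hp => (Finset.mem_filter.mp hp).2) ∅ (fun _ => z) (fun i => hz)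
  have he : evalD (cW J (Finset.univ.filter fun p : Fin n × Fin n => p.1 ≠ p.2)) ∅
      (fun _ => z) = Qpoly J z := by
    rw [evalD, Qpoly]
    refine Finset.sum_congr rfl fun S _ => ?_
    simp [Finset.prod_const]
  rwa [he] at h

lemma cW_compl (J : Fin n → Fin n → ℝ) (F : Finset (Fin n × Fin n)) (S : Finset (Fin n)) :
    cW J F Sᶜ = cW J F S := by
  rw [cW]
  show _ = cW J F S
  rw [cW]
  congr 1
  refine Finset.filter_congr fun p _ => ?_
  simp only [Finset.mem_compl]
  tauto

lemma Qpoly_inv (J : Fin n → Fin n → ℝ) {z : ℂ} (hz : z ≠ 0) :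
    Qpoly J z = z ^ n * Qpoly J z⁻¹ := by
  rw [Qpoly, Qpoly, Finset.mul_sum]
  refine Finset.sum_nbij' (fun S => Sᶜ) (fun S => Sᶜ) (by simp) (by simp) (by simp) (by simp) ?_
  intro S _
  have hk : S.card ≤ n := by
    have := Finset.card_le_univ S
    simpa using this
  have hzz : z ^ n * (z⁻¹) ^ (Sᶜ.card) = z ^ S.card := by
    rw [Finset.card_compl, Fintype.card_fin, inv_pow, eq_comm,
      eq_mul_inv_iff_mul_eq₀ (pow_ne_zero _ hz), ← pow_add]
    congr 1
    omega
  rw [cW_compl]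
  rw [← hzz]
  ring

end LeeYangAux

open LeeYangAux

/-- **Lee–Yang theorem, part (b).** If all coupling constants `J i j` are non-negative,
then every zero of the one-variable partition function
`h ↦ Z(h,…,h) = ∑_{σ ∈ {-1,1}ⁿ} exp(∑_{i,j} J i j σ_i σ_j) · exp(∑_i σ_i h)`
lies on the imaginary axis. -/
theorem lee_yang_b (n : ℕ) (hn : 1 ≤ n) (J : Fin n → Fin n → ℝ)
    (hJ : ∀ i j, 0 ≤ J i j) (h : ℂ)
    (hZ : ∑ σ : Fin n → ({-1, 1} : Finset ℤ),
      Complex.exp ((∑ i, ∑ j, J i j * ((σ i : ℤ) : ℝ) * ((σ j : ℤ) : ℝ) : ℝ)) *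
        Complex.exp (∑ i, ((σ i : ℤ) : ℂ) * h) = 0) :
    h.re = 0 := by
  classical
  have hmem1 : (1:ℤ) ∈ ({-1,1} : Finset ℤ) := by decide
  have hmem2 : (-1:ℤ) ∈ ({-1,1} : Finset ℤ) := by decide
  set T : ℝ := ∑ i, ∑ j, J i j with hT
  set W : Finset (Fin n) → ℝ :=
    fun S => ∑ i, ∑ j, if ¬(i ∈ S ↔ j ∈ S) then J i j else 0 with hW
  set pairs : Finset (Fin n × Fin n) :=
    Finset.univ.filter (fun p : Fin n × Fin n => p.1 ≠ p.2) with hpairs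
  set z : ℂ := Complex.exp (2 * h) with hz
  -- step 1 : rewrite the partition function
  have key : (∑ σ : Fin n → ({-1, 1} : Finset ℤ),
      Complex.exp ((∑ i, ∑ j, J i j * ((σ i : ℤ) : ℝ) * ((σ j : ℤ) : ℝ) : ℝ)) *
        Complex.exp (∑ i, ((σ i : ℤ) : ℂ) * h))
      = ∑ S : Finset (Fin n), Complex.exp (T:ℂ) * Complex.exp (-(n:ℂ) * h)
          * (cW J pairs S * z ^ S.card) := by
    refine Finset.sum_nbij' (fun σ => Finset.univ.filter fun k => ((σ k : ℤ) = 1))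
      (fun S k => if k ∈ S then (⟨1, hmem1⟩ : ({-1,1} : Finset ℤ)) else ⟨-1, hmem2⟩)
      (by simp) (by simp) ?_ ?_ ?_
    · -- left inverse
      intro σ _
      funext i
      by_cases h1 : (σ i : ℤ) = 1
      · simp only [Finset.mem_filter, Finset.mem_univ, true_and, h1, if_pos]
        exact Subtype.ext h1.symm
      · have h2 : (σ i : ℤ) = -1 := by
          have := (σ i).2
          simp only [Finset.mem_insert, Finset.mem_singleton] at this
          tauto
        simp only [Finset.mem_filter, Finset.mem_univ, true_and, h1, if_neg, not_false_iff]
        exact Subtype.ext h2.symm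
    · -- right inverse
      intro S _
      ext i
      by_cases hiS : i ∈ S <;>
        simp [hiS]
    · -- per-term computation
      intro σ _
      set S : Finset (Fin n) := Finset.univ.filter fun k => ((σ k : ℤ) = 1) with hS
      have hk : S.card ≤ n := by
        have := Finset.card_le_univ S
        simpa using this
      have hval : ∀ i, ((σ i : ℤ)) = if i ∈ S then (1:ℤ) else -1 := by
        intro i
        by_cases h1 : (σ i : ℤ) = 1
        · have : i ∈ S := by simp [hS, h1]
          simp [this, h1]
        · have h2 : (σ i : ℤ) = -1 := by
            have := (σ i).2
            simp only [Finset.mem_insert, Finset.mem_singleton] at this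
            tauto
          have : i ∉ S := by simp [hS, h1]
          simp [this, h2]
      -- coupling part
      have hcoup : (∑ i, ∑ j, J i j * ((σ i : ℤ) : ℝ) * ((σ j : ℤ) : ℝ)) = T - 2 * W S := by
        have hterm : ∀ i j : Fin n, J i j * ((σ i : ℤ) : ℝ) * ((σ j : ℤ) : ℝ)
            = J i j - 2 * (if ¬(i ∈ S ↔ j ∈ S) then J i j else 0) := by
          intro i j
          rw [hval i, hval j]
          by_cases hi : i ∈ S <;> by_cases hj : j ∈ S <;>
            simp [hi, hj] <;> ring
        calc (∑ i, ∑ j, J i j * ((σ i : ℤ) : ℝ) * ((σ j : ℤ) : ℝ))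
            = ∑ i, ∑ j, (J i j - 2 * (if ¬(i ∈ S ↔ j ∈ S) then J i j else 0)) := by
              exact Finset.sum_congr rfl fun i _ => Finset.sum_congr rfl fun j _ => hterm i j
          _ = T - 2 * W S := by
              simp only [Finset.sum_sub_distrib, Finset.mul_sum, hT, hW]
      -- field part
      have hfield : (∑ i, ((σ i : ℤ) : ℂ) * h) = (2 * (S.card:ℂ) - n) * h := by
        have hvalC : ∀ i, ((σ i : ℤ) : ℂ) = if i ∈ S then (1:ℂ) else -1 := by
          intro i
          rw [hval i]
          by_cases hi : i ∈ S <;> simp [hi]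
        calc (∑ i, ((σ i : ℤ) : ℂ) * h)
            = (∑ i, if i ∈ S then (1:ℂ) else -1) * h := by
              rw [Finset.sum_mul]
              exact Finset.sum_congr rfl fun i _ => by rw [hvalC i]
          _ = (2 * (S.card:ℂ) - n) * h := by
              congr 1
              rw [Finset.sum_ite]
              have e1 : Finset.univ.filter (fun i => i ∈ S) = S := by
                ext i; simp
              have e2 : Finset.univ.filter (fun i => ¬ i ∈ S) = Sᶜ := by
                ext i; simp
              rw [e1, e2, Finset.sum_const, Finset.sum_const, Finset.card_compl,
                Fintype.card_fin]
              simp only [nsmul_eq_mul, mul_one, mul_neg_one]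
              rw [Nat.cast_sub hk]
              push_cast
              ring
      -- coefficient identification
      have hcw : cW J pairs S = Complex.exp (((-2 * W S : ℝ)) : ℂ) := by
        rw [← Complex.ofReal_exp, cW]
        rw [← Complex.ofReal_prod]
        congr 1
        rw [← Real.exp_sum]
        congr 1
        rw [← Finset.mul_sum]
        congr 1
        rw [hpairs, Finset.filter_filter]
        have e3 : Finset.univ.filter
            (fun p : Fin n × Fin n => p.1 ≠ p.2 ∧ ¬(p.1 ∈ S ↔ p.2 ∈ S))
            = Finset.univ.filter (fun p : Fin n × Fin n => ¬(p.1 ∈ S ↔ p.2 ∈ S)) := by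
          refine Finset.filter_congr fun p _ => ?_
          constructor
          · tauto
          · intro hsp
            refine ⟨?_, hsp⟩
            intro hne
            exact hsp (by rw [hne])
        rw [e3, Finset.sum_filter]
        rw [← Finset.univ_product_univ, Finset.sum_product]
      rw [hcoup, hfield, hcw]
      have e4 : ((T - 2 * W S : ℝ) : ℂ) = (T:ℂ) + ((-2 * W S : ℝ) : ℂ) := by
        push_cast; ring
      have e5 : (2 * (S.card:ℂ) - n) * h = (S.card : ℕ) * (2 * h) + (-(n:ℂ) * h) := by
        push_cast; ring
      rw [e4, e5, Complex.exp_add, Complex.exp_add, Complex.exp_nat_mul]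
      rw [hz]
      ring
  rw [key, ← Finset.mul_sum] at hZ
  have hQ : Qpoly J z = 0 := by
    have h2 : (∑ S : Finset (Fin n), cW J pairs S * z ^ S.card) = Qpoly J z := by
      rw [Qpoly, hpairs]
    rw [h2] at hZ
    rcases mul_eq_zero.mp hZ with hc | hc
    · rcases mul_eq_zero.mp hc with hc' | hc'
      · exact absurd hc' (Complex.exp_ne_zero _)
      · exact absurd hc' (Complex.exp_ne_zero _)
    · exact hc
  have habs : Complex.abs z = Real.exp (2 * h.re) := by
    rw [hz, Complex.abs_exp]
    congr 1
    simp [Complex.mul_re]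
  rcases lt_trichotomy h.re 0 with hneg | h0 | hpos
  · exfalso
    have hz0 : z ≠ 0 := Complex.exp_ne_zero _
    have hlt : Complex.abs z < 1 := by
      rw [habs]
      exact Real.exp_lt_one_iff.mpr (by linarith)
    have hpos0 : 0 < Complex.abs z := Complex.abs.pos hz0
    have hinv : 1 < Complex.abs z⁻¹ := by
      rw [map_inv₀]
      exact (one_lt_inv_iff₀).mpr ⟨hpos0, hlt⟩
    have := Qpoly_ne_zero hJ hinv (J := J)
    rw [Qpoly_inv J hz0] at hQ
    rcases mul_eq_zero.mp hQ with hc | hc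
    · exact pow_ne_zero n hz0 hc
    · exact this hc
  · exact h0
  · exfalso
    have hgt : 1 < Complex.abs z := by
      rw [habs]
      exact Real.one_lt_exp_iff.mpr (by linarith)
    exact Qpoly_ne_zero hJ hgt hQ
end

section
/- Let C₁,…,Cₙ and D₁,…,Dₙ be open circular domains in ℂ and let κ = (κ₁,…,κₙ) ∈ ℕⁿ. Then there exist Möbius transformations φ_i(ζ) = (a_iζ + b_i)/(c_iζ + d_i) with a_i d_i − b_i c_i = 1 for 1 ≤ i ≤ n, such that the invertible linear transformation Φ_κ : ℂ_κ[z₁,…,zₙ] → ℂ_κ[z₁,…,zₙ] defined by Φ_κ(f)(z₁,…,zₙ) = (c₁z₁+d₁)^{κ₁} ⋯ (cₙzₙ+dₙ)^{κₙ} · f(φ₁(z₁),…,φₙ(zₙ)) restricts to a bijection between 𝒩_κ(C₁,…,Cₙ) and 𝒩_κ(D₁,…,Dₙ). -/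
open MvPolynomial

/-- An open circular domain in `ℂ`: an open disc, the open exterior of a closed disc,
or an open half-plane. -/
def IsCircularDomain (C : Set ℂ) : Prop :=
  (∃ w r, 0 < r ∧ C = Metric.ball w r) ∨
  (∃ w r, 0 < r ∧ C = (Metric.closedBall w r)ᶜ) ∨
  (∃ a b : ℂ, a ≠ 0 ∧ C = {z : ℂ | 0 < (a * z + b).im})

/-- `f` is `C₁ × ⋯ × Cₙ`-stable: it does not vanish on `C₁ × ⋯ × Cₙ`. -/
def StableOn {n : ℕ} (Cs : Fin n → Set ℂ) (f : MvPolynomial (Fin n) ℂ) : Prop :=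
  ∀ z : Fin n → ℂ, (∀ i, z i ∈ Cs i) → eval z f ≠ 0

/-- The set `𝒩_κ(C₁,…,Cₙ)` of `C₁ × ⋯ × Cₙ`-stable polynomials in `ℂ_κ[z₁,…,zₙ]` whose
degree in `z_j` equals `κ_j` whenever `C_j` is non-convex. -/
def NSet {n : ℕ} (κ : Fin n →₀ ℕ) (Cs : Fin n → Set ℂ) :
    Set (MvPolynomial (Fin n) ℂ) :=
  {f | (∀ i, f.degreeOf i ≤ κ i) ∧ StableOn Cs f ∧
    ∀ j, ¬ Convex ℝ (Cs j) → f.degreeOf j = κ j}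

/-- The transformation
`Φ_κ(f)(z) = ∏_i (c_i z_i + d_i)^{κ_i} · f(φ₁(z₁),…,φₙ(zₙ))` associated with the Möbius
transformations `φ_i(ζ) = (a_i ζ + b_i)/(c_i ζ + d_i)`; on `ℂ_κ[z₁,…,zₙ]` it is given
by the polynomial formula
`∑_α coeff(α,f) ∏_i (a_i z_i + b_i)^{α_i} (c_i z_i + d_i)^{κ_i − α_i}`. -/
noncomputable def moebiusMap {n : ℕ} (a b c d : Fin n → ℂ) (κ : Fin n →₀ ℕ)
    (f : MvPolynomial (Fin n) ℂ) : MvPolynomial (Fin n) ℂ :=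
  ∑ α ∈ f.support,
    C (f.coeff α) *
      ∏ i, (C (a i) * X i + C (b i)) ^ (α i) * (C (c i) * X i + C (d i)) ^ (κ i - α i)

namespace MoebiusAux

open MvPolynomial Finset

variable {n : ℕ}

/-- extraction of the coefficient of `X j ^ k`, as a polynomial with `degreeOf j = 0`. -/
noncomputable def ext1 (j : Fin n) (k : ℕ) (f : MvPolynomial (Fin n) ℂ) :
    MvPolynomial (Fin n) ℂ :=
  ∑ α ∈ f.support.filter (fun α => α j = k), monomial (α.erase j) (f.coeff α)

lemma coeff_ext1 (j : Fin n) (k : ℕ) (f : MvPolynomial (Fin n) ℂ) (β : Fin n →₀ ℕ) :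
    coeff β (ext1 j k f) =
      if β j = 0 then coeff (β + Finsupp.single j k) f else 0 := by
  classical
  rw [ext1, coeff_sum]
  by_cases hβ : β j = 0
  · rw [if_pos hβ]
    have herase : (β + Finsupp.single j k).erase j = β := by
      ext i
      by_cases hi : i = j
      · simp [hi, Finsupp.erase_same, hβ]
      · simp [Finsupp.erase_ne hi, Finsupp.single_apply, fun h : j = i => hi h.symm]
    have hj : (β + Finsupp.single j k) j = k := by simp [hβ]
    rw [Finset.sum_eq_single (β + Finsupp.single j k)]
    · rw [coeff_monomial, herase, if_pos rfl]
    · intro α hα hne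
      rw [coeff_monomial, if_neg]
      intro heq
      apply hne
      have hαj : α j = k := (Finset.mem_filter.mp hα).2
      have h2 := Finsupp.erase_add_single j α
      rw [hαj] at h2
      rw [← h2, heq]
    · intro h
      have : coeff (β + Finsupp.single j k) f = 0 := by
        by_contra hc
        exact h (Finset.mem_filter.mpr ⟨MvPolynomial.mem_support_iff.mpr hc, hj⟩)
      rw [this, coeff_monomial]
      simp
  · rw [if_neg hβ]
    apply Finset.sum_eq_zero
    intro α hα
    rw [coeff_monomial, if_neg]
    intro hc
    apply hβ
    rw [← hc]
    exact Finsupp.erase_same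

lemma support_ext1 (j : Fin n) (k : ℕ) (f : MvPolynomial (Fin n) ℂ) {β : Fin n →₀ ℕ}
    (hβ : β ∈ (ext1 j k f).support) :
    β j = 0 ∧ (β + Finsupp.single j k) ∈ f.support := by
  rw [MvPolynomial.mem_support_iff, coeff_ext1] at hβ
  by_cases h : β j = 0
  · rw [if_pos h] at hβ
    exact ⟨h, MvPolynomial.mem_support_iff.mpr hβ⟩
  · rw [if_neg h] at hβ; exact absurd rfl hβ

lemma exponent_le_degreeOf {f : MvPolynomial (Fin n) ℂ} {α : Fin n →₀ ℕ}
    (hα : α ∈ f.support) (i : Fin n) : α i ≤ degreeOf i f := by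
  rw [degreeOf_eq_sup]; exact Finset.le_sup (f := fun m => m i) hα

lemma degreeOf_ext1_le (j : Fin n) (k : ℕ) (f : MvPolynomial (Fin n) ℂ) (i : Fin n)
    (hij : i ≠ j) : degreeOf i (ext1 j k f) ≤ degreeOf i f := by
  rw [degreeOf_le_iff]
  intro β hβ
  obtain ⟨h0, hmem⟩ := support_ext1 j k f hβ
  have h1 : β i = (β + Finsupp.single j k) i := by
    simp [Finsupp.single_apply, Ne.symm hij]
  rw [h1]
  exact exponent_le_degreeOf hmem i

lemma degreeOf_ext1_self (j : Fin n) (k : ℕ) (f : MvPolynomial (Fin n) ℂ) :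
    degreeOf j (ext1 j k f) = 0 := by
  rw [← Nat.le_zero, degreeOf_le_iff]
  intro β hβ
  exact (support_ext1 j k f hβ).1.le

lemma ext1_ne_zero_of_degreeOf {f : MvPolynomial (Fin n) ℂ} {k : ℕ} (hf : f ≠ 0) (j : Fin n)
    (h : degreeOf j f = k) : ext1 j k f ≠ 0 := by
  have hne : f.support.Nonempty := MvPolynomial.support_nonempty.mpr hf
  obtain ⟨α, hα, hval⟩ := Finset.exists_mem_eq_sup f.support hne (fun m => m j)
  rw [degreeOf_eq_sup] at h
  rw [h] at hval
  intro hc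
  have h1 : coeff (α.erase j) (ext1 j k f) = 0 := by rw [hc]; simp
  rw [coeff_ext1, if_pos (Finsupp.erase_same)] at h1
  rw [hval, Finsupp.erase_add_single] at h1
  exact (MvPolynomial.mem_support_iff.mp hα) h1

lemma le_degreeOf_of_ext1_ne_zero {f : MvPolynomial (Fin n) ℂ} {j : Fin n} {k : ℕ}
    (h : ext1 j k f ≠ 0) : k ≤ degreeOf j f := by
  obtain ⟨β, hβ⟩ := MvPolynomial.ne_zero_iff.mp h
  have hme : β ∈ (ext1 j k f).support := MvPolynomial.mem_support_iff.mpr hβ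
  obtain ⟨h0, hmem⟩ := support_ext1 j k f hme
  have := exponent_le_degreeOf hmem j
  simpa [h0] using this

lemma ext1_eq_zero_of_degreeOf_lt {f : MvPolynomial (Fin n) ℂ} {j : Fin n} {k : ℕ}
    (h : degreeOf j f < k) : ext1 j k f = 0 := by
  by_contra hc
  exact absurd (le_degreeOf_of_ext1_ne_zero hc) (not_le.mpr h)

lemma eval_ext1 (j : Fin n) (k : ℕ) (f : MvPolynomial (Fin n) ℂ) (w : Fin n → ℂ) :
    eval w (ext1 j k f) =
      ∑ α ∈ f.support.filter (fun α => α j = k),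
        coeff α f * ∏ i ∈ Finset.univ.erase j, w i ^ α i := by
  rw [ext1, map_sum]
  apply Finset.sum_congr rfl
  intro α hα
  rw [eval_monomial, Finsupp.prod_pow]
  congr 1
  rw [← Finset.prod_erase_mul Finset.univ _ (Finset.mem_univ j)]
  rw [Finsupp.erase_same, pow_zero, mul_one]
  apply Finset.prod_congr rfl
  intro i hi
  rw [Finsupp.erase_ne (Finset.mem_erase.mp hi).1]

end MoebiusAux
namespace MoebiusAux
open MvPolynomial Finset
variable {n : ℕ}

lemma eval_eq_univ (w : Fin n → ℂ) (f : MvPolynomial (Fin n) ℂ) :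
    eval w f = ∑ α ∈ f.support, coeff α f * ∏ i, w i ^ α i :=
  MvPolynomial.eval_eq' w f

/-- univariate specialization in variable `j`, other variables at `y`. -/
noncomputable def uni (j : Fin n) (y : Fin n → ℂ) (f : MvPolynomial (Fin n) ℂ) :
    Polynomial ℂ :=
  ∑ α ∈ f.support,
    Polynomial.C (coeff α f * ∏ i ∈ Finset.univ.erase j, y i ^ α i) * Polynomial.X ^ (α j)

lemma eval_uni (j : Fin n) (y : Fin n → ℂ) (f : MvPolynomial (Fin n) ℂ) (t : ℂ) :
    (uni j y f).eval t = eval (Function.update y j t) f := by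
  rw [uni, Polynomial.eval_finset_sum, eval_eq_univ]
  apply Finset.sum_congr rfl
  intro α hα
  rw [Polynomial.eval_mul, Polynomial.eval_C, Polynomial.eval_pow, Polynomial.eval_X]
  rw [← Finset.prod_erase_mul Finset.univ _ (Finset.mem_univ j)]
  rw [Function.update_self, mul_assoc]
  congr 2
  apply Finset.prod_congr rfl
  intro i hi
  rw [Function.update_of_ne (Finset.mem_erase.mp hi).1]

lemma coeff_uni (j : Fin n) (y : Fin n → ℂ) (f : MvPolynomial (Fin n) ℂ) (k : ℕ) :
    (uni j y f).coeff k = eval y (ext1 j k f) := by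
  rw [uni, Polynomial.finset_sum_coeff, eval_ext1]
  rw [Finset.sum_filter]
  apply Finset.sum_congr rfl
  intro α hα
  rw [Polynomial.coeff_C_mul, Polynomial.coeff_X_pow]
  by_cases h : α j = k
  · rw [if_pos h, if_pos h.symm, mul_one]
  · rw [if_neg h, if_neg (fun hc => h hc.symm), mul_zero]

lemma natDegree_uni_le (j : Fin n) (y : Fin n → ℂ) (f : MvPolynomial (Fin n) ℂ) :
    (uni j y f).natDegree ≤ degreeOf j f := by
  rw [Polynomial.natDegree_le_iff_coeff_eq_zero]
  intro N hN
  rw [coeff_uni, ext1_eq_zero_of_degreeOf_lt hN, map_zero]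

noncomputable def Tval (κ : Fin n →₀ ℕ) (u v : Fin n → ℂ) (f : MvPolynomial (Fin n) ℂ) : ℂ :=
  ∑ α ∈ f.support, coeff α f * ∏ i, (u i ^ α i * v i ^ (κ i - α i))

lemma eval_moebius (a b c d : Fin n → ℂ) (κ : Fin n →₀ ℕ) (f : MvPolynomial (Fin n) ℂ)
    (z : Fin n → ℂ) :
    eval z (moebiusMap a b c d κ f) =
      Tval κ (fun i => a i * z i + b i) (fun i => c i * z i + d i) f := by
  rw [moebiusMap, Tval, map_sum]
  apply Finset.sum_congr rfl
  intro α hα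
  rw [eval_mul, eval_C, map_prod]
  congr 1
  apply Finset.prod_congr rfl
  intro i _
  simp

noncomputable def mES (κ : Fin n →₀ ℕ) (L : List (Fin n)) (f : MvPolynomial (Fin n) ℂ) :
    MvPolynomial (Fin n) ℂ :=
  L.foldl (fun g j => ext1 j (κ j) g) f

@[simp] lemma mES_nil (κ : Fin n →₀ ℕ) (f : MvPolynomial (Fin n) ℂ) : mES κ [] f = f := rfl

lemma mES_cons (κ : Fin n →₀ ℕ) (j : Fin n) (L : List (Fin n)) (f : MvPolynomial (Fin n) ℂ) :
    mES κ (j :: L) f = mES κ L (ext1 j (κ j) f) := rfl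

lemma eval_mES (κ : Fin n →₀ ℕ) (L : List (Fin n)) (hL : L.Nodup)
    (f : MvPolynomial (Fin n) ℂ) (w : Fin n → ℂ) :
    eval w (mES κ L f) =
      ∑ α ∈ f.support.filter (fun α => ∀ j ∈ L, α j = κ j),
        coeff α f * ∏ i ∈ Finset.univ.filter (fun i => i ∉ L), w i ^ α i := by
  classical
  induction L generalizing f with
  | nil =>
      rw [mES_nil, eval_eq_univ]
      rw [Finset.filter_true_of_mem (by intro x _; simp)]
      apply Finset.sum_congr rfl
      intro α _
      congr 1
      rw [Finset.filter_true_of_mem (by intro x _; simp)]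
  | cons j L ih =>
      rw [mES_cons, ih hL.of_cons]
      have hjL : j ∉ L := (List.nodup_cons.mp hL).1
      refine Finset.sum_nbij' (fun β => β + Finsupp.single j (κ j)) (fun α => α.erase j)
        ?_ ?_ ?_ ?_ ?_
      · intro β hβ
        obtain ⟨hβs, hβc⟩ := Finset.mem_filter.mp hβ
        obtain ⟨h0, hmem⟩ := support_ext1 j (κ j) f hβs
        refine Finset.mem_filter.mpr ⟨hmem, ?_⟩
        intro l hl
        rcases List.mem_cons.mp hl with h | h
        · subst h; simp [h0]
        · have : l ≠ j := fun hc => hjL (hc ▸ h)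
          simp [Finsupp.single_apply, Ne.symm this, hβc l h]
      · intro α hα
        obtain ⟨hαs, hαc⟩ := Finset.mem_filter.mp hα
        have hαj : α j = κ j := hαc j (List.mem_cons_self)
        refine Finset.mem_filter.mpr ⟨?_, ?_⟩
        · rw [MvPolynomial.mem_support_iff, coeff_ext1, if_pos (Finsupp.erase_same)]
          have h2 := Finsupp.erase_add_single j α
          rw [hαj] at h2
          rw [h2]
          exact MvPolynomial.mem_support_iff.mp hαs
        · intro l hl
          have : l ≠ j := fun hc => hjL (hc ▸ hl)
          rw [Finsupp.erase_ne this]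
          exact hαc l (List.mem_cons_of_mem j hl)
      · intro β hβ
        obtain ⟨hβs, _⟩ := Finset.mem_filter.mp hβ
        have h0 := (support_ext1 j (κ j) f hβs).1
        ext i
        by_cases hi : i = j
        · subst hi; simp [Finsupp.erase_same, h0]
        · simp [Finsupp.erase_ne hi, Finsupp.single_apply, fun h : j = i => hi h.symm]
      · intro α hα
        obtain ⟨_, hαc⟩ := Finset.mem_filter.mp hα
        have hαj : α j = κ j := hαc j (List.mem_cons_self)
        have h2 := Finsupp.erase_add_single j α
        rw [hαj] at h2
        exact h2
      · intro β hβ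
        obtain ⟨hβs, _⟩ := Finset.mem_filter.mp hβ
        have h0 := (support_ext1 j (κ j) f hβs).1
        rw [coeff_ext1, if_pos h0]
        congr 1
        have hset : Finset.univ.filter (fun i => i ∉ (j :: L)) =
            (Finset.univ.filter (fun i => i ∉ L)).erase j := by
          ext i
          simp only [Finset.mem_filter, Finset.mem_erase, Finset.mem_univ, true_and,
            List.mem_cons]
          tauto
        rw [hset]
        rw [← Finset.prod_erase_mul (Finset.univ.filter (fun i => i ∉ L)) _
          (Finset.mem_filter.mpr ⟨Finset.mem_univ j, hjL⟩)] at *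
        rw [h0, pow_zero, mul_one]
        apply Finset.prod_congr rfl
        intro i hi
        have hij : i ≠ j := (Finset.mem_erase.mp hi).1
        simp [Finsupp.single_apply, Ne.symm hij]

lemma degreeOf_sum_le {A : Type*} (i : Fin n) (s : Finset A) (g : A → MvPolynomial (Fin n) ℂ)
    (m : ℕ) (h : ∀ x ∈ s, degreeOf i (g x) ≤ m) : degreeOf i (∑ x ∈ s, g x) ≤ m := by
  classical
  induction s using Finset.cons_induction with
  | empty => simp
  | cons x s hx ih =>
      rw [Finset.sum_cons]
      refine le_trans (degreeOf_add_le _ _ _) ?_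
      exact sup_le (h x (Finset.mem_cons_self x s)) (ih fun y hy => h y (Finset.mem_cons.mpr (Or.inr hy)))

lemma degreeOf_prod_le {A : Type*} (i : Fin n) (s : Finset A) (g : A → MvPolynomial (Fin n) ℂ)
    (m : A → ℕ) (h : ∀ x ∈ s, degreeOf i (g x) ≤ m x) :
    degreeOf i (∏ x ∈ s, g x) ≤ ∑ x ∈ s, m x := by
  classical
  induction s using Finset.cons_induction with
  | empty => simpa using (degreeOf_C (1:ℂ) i).le
  | cons x s hx ih =>
      rw [Finset.prod_cons, Finset.sum_cons]
      refine le_trans (degreeOf_mul_le _ _ _) ?_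
      exact add_le_add (h x (Finset.mem_cons_self x s)) (ih fun y hy => h y (Finset.mem_cons.mpr (Or.inr hy)))

lemma degreeOf_pow_le (i : Fin n) (p : MvPolynomial (Fin n) ℂ) (m : ℕ) (s : ℕ)
    (h : degreeOf i p ≤ s) : degreeOf i (p ^ m) ≤ m * s := by
  induction m with
  | zero => simpa using (degreeOf_C (1:ℂ) i).le
  | succ m ih =>
      rw [pow_succ]
      refine le_trans (degreeOf_mul_le _ _ _) ?_
      calc degreeOf i (p ^ m) + degreeOf i p ≤ m * s + s := add_le_add ih h
      _ = (m + 1) * s := by ring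

lemma degreeOf_linear_le (i l : Fin n) (a b : ℂ) :
    degreeOf i (C a * X l + C b) ≤ if l = i then 1 else 0 := by
  classical
  refine le_trans (degreeOf_add_le _ _ _) ?_
  rw [degreeOf_C]
  rw [sup_le_iff]
  constructor
  · refine le_trans (degreeOf_mul_le _ _ _) ?_
    rw [degreeOf_C, MvPolynomial.degreeOf_X, zero_add]
    by_cases h : l = i
    · simp [h]
    · simp [h, Ne.symm h]
  · simp

lemma degreeOf_moebius_le (a b c d : Fin n → ℂ) (κ : Fin n →₀ ℕ) (f : MvPolynomial (Fin n) ℂ)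
    (hdeg : ∀ i, degreeOf i f ≤ κ i) (i : Fin n) :
    degreeOf i (moebiusMap a b c d κ f) ≤ κ i := by
  classical
  rw [moebiusMap]
  apply degreeOf_sum_le
  intro α hα
  refine le_trans (degreeOf_mul_le _ _ _) ?_
  rw [degreeOf_C, zero_add]
  have hαi : α i ≤ κ i := le_trans (exponent_le_degreeOf hα i) (hdeg i)
  have hfac : ∀ l ∈ Finset.univ, degreeOf i
      ((C (a l) * X l + C (b l)) ^ (α l) * (C (c l) * X l + C (d l)) ^ (κ l - α l)) ≤
      (fun l => if l = i then κ i else 0) l := by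
    intro l _
    refine le_trans (degreeOf_mul_le _ _ _) ?_
    by_cases h : l = i
    · simp only []
      rw [if_pos h, ← h]
      have hαl : α l ≤ κ l := h ▸ hαi
      have h1 := degreeOf_pow_le l (C (a l) * X l + C (b l)) (α l) 1 (by simpa using degreeOf_linear_le l l (a l) (b l))
      have h2 := degreeOf_pow_le l (C (c l) * X l + C (d l)) (κ l - α l) 1 (by simpa using degreeOf_linear_le l l (c l) (d l))
      calc degreeOf l (_ ^ α l) + degreeOf l (_ ^ (κ l - α l)) ≤ α l * 1 + (κ l - α l) * 1 :=
            add_le_add h1 h2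
        _ = α l + (κ l - α l) := by ring
        _ = κ l := Nat.add_sub_cancel' hαl
    · simp only []
      have h0 : (if l = i then (1:ℕ) else 0) = 0 := if_neg h
      have h1 := degreeOf_pow_le i (C (a l) * X l + C (b l)) (α l) 0 (by rw [← h0]; exact degreeOf_linear_le i l (a l) (b l))
      have h2 := degreeOf_pow_le i (C (c l) * X l + C (d l)) (κ l - α l) 0 (by rw [← h0]; exact degreeOf_linear_le i l (c l) (d l))
      simp only [if_neg h]
      omega
  have := degreeOf_prod_le i Finset.univ
    (fun l => (C (a l) * X l + C (b l)) ^ (α l) * (C (c l) * X l + C (d l)) ^ (κ l - α l))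
    (fun l => if l = i then κ i else 0) hfac
  refine le_trans this ?_
  rw [Finset.sum_ite_eq' Finset.univ i (fun _ => κ i)]
  simp
end MoebiusAux
namespace MoebiusAux
open MvPolynomial Finset
variable {n : ℕ}

lemma continuous_mveval (f : MvPolynomial (Fin n) ℂ) :
    Continuous (fun z : Fin n → ℂ => eval z f) := by
  have : (fun z : Fin n → ℂ => eval z f) =
      fun z => ∑ α ∈ f.support, coeff α f * ∏ i, z i ^ α i := by
    funext z; exact eval_eq_univ z f
  rw [this]
  exact continuous_finset_sum _ fun α _ =>
    (continuous_const.mul (continuous_finset_prod _ fun i _ => (continuous_apply i).pow _))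

lemma eval_line (f : MvPolynomial (Fin n) ℂ) (z v : Fin n → ℂ) (t : ℂ) :
    Polynomial.eval t
        (MvPolynomial.aeval (fun i => Polynomial.C (z i) + Polynomial.C (v i) * Polynomial.X) f) =
      eval (fun i => z i + v i * t) f := by
  induction f using MvPolynomial.induction_on with
  | C a => simp
  | add p q hp hq => simp [hp, hq]
  | mul_X p i hp => simp [hp]

lemma dense_ne_zero {f : MvPolynomial (Fin n) ℂ} (hf : f ≠ 0) :
    Dense {z : Fin n → ℂ | eval z f ≠ 0} := by
  rw [Metric.dense_iff]
  intro x r hr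
  by_contra h
  push_neg at h
  have hzero : ∀ y ∈ Metric.ball x r, eval y f = 0 := by
    intro y hy
    by_contra hc
    have hmem : y ∈ Metric.ball x r ∩ {z | eval z f ≠ 0} := ⟨hy, hc⟩
    rw [h] at hmem
    exact hmem
  apply hf
  apply MvPolynomial.funext
  intro w
  rw [map_zero]
  set v : Fin n → ℂ := fun i => w i - x i with hv
  have B : ℝ := 0
  set Bv : ℝ := 1 + ∑ i, ‖v i‖ with hBv
  have hBvpos : 0 < Bv := by
    have : (0:ℝ) ≤ ∑ i, ‖v i‖ := Finset.sum_nonneg fun i _ => norm_nonneg _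
    simp only [hBv]; linarith
  have hBvi : ∀ i, ‖v i‖ ≤ Bv := by
    intro i
    have : ‖v i‖ ≤ ∑ i, ‖v i‖ :=
      Finset.single_le_sum (fun i _ => norm_nonneg (v i)) (Finset.mem_univ i)
    simp only [hBv]; linarith
  set δ : ℝ := r / Bv with hδ
  have hδpos : 0 < δ := div_pos hr hBvpos
  set P : Polynomial ℂ :=
    MvPolynomial.aeval (fun i => Polynomial.C (x i) + Polynomial.C (v i) * Polynomial.X) f with hP
  have hProots : ∀ s : ℝ, s ∈ Set.Ioo (-δ) δ → P.IsRoot (s : ℂ) := by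
    intro s hs
    have hsabs : |s| < δ := abs_lt.mpr ⟨hs.1, hs.2⟩
    have hmem : (fun i => x i + v i * (s:ℂ)) ∈ Metric.ball x r := by
      rw [Metric.mem_ball]
      by_cases hn : Nonempty (Fin n)
      · rw [dist_pi_lt_iff hr]
        intro i
        rw [Complex.dist_eq]
        have : x i + v i * (s:ℂ) - x i = v i * s := by ring
        rw [this, norm_mul, Complex.norm_real, Real.norm_eq_abs]
        calc ‖v i‖ * ‖s‖ ≤ Bv * |s| := by
              apply mul_le_mul_of_nonneg_right (hBvi i) (abs_nonneg s)
          _ < Bv * δ := by apply mul_lt_mul_of_pos_left hsabs hBvpos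
          _ = r := by rw [hδ, mul_div_cancel₀ _ hBvpos.ne']
      · have : (fun i => x i + v i * (s:ℂ)) = x := by funext i; exact absurd ⟨i⟩ hn
        rw [this]; simpa using hr
    have := hzero _ hmem
    rw [Polynomial.IsRoot, hP, eval_line]
    exact this
  have hPzero : P = 0 := by
    apply Polynomial.eq_zero_of_infinite_isRoot
    apply Set.Infinite.mono (s := (fun s : ℝ => (s:ℂ)) '' Set.Ioo (-δ) δ)
    · rintro _ ⟨s, hs, rfl⟩
      exact hProots s hs
    · apply Set.Infinite.image
      · intro s _ s' _ hss'
        exact Complex.ofReal_injective (by simpa using hss')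
      · exact Set.Ioo_infinite (by linarith)
  have := eval_line f x v 1
  rw [← hP, hPzero] at this
  simp only [Polynomial.eval_zero] at this
  have h2 : (fun i => x i + v i * 1) = w := by funext i; simp [hv]
  rw [h2] at this
  exact this.symm

lemma multiset_prod_norm_le (s : Multiset ℂ) (R : ℝ) (hR : 0 ≤ R) (h : ∀ x ∈ s, ‖x‖ ≤ R) :
    ‖s.prod‖ ≤ R ^ (Multiset.card s) := by
  induction s using Multiset.induction_on with
  | empty => simp
  | cons a s ih =>
      rw [Multiset.prod_cons, Multiset.card_cons, norm_mul, pow_succ']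
      exact mul_le_mul (h a (Multiset.mem_cons_self a s)) (ih fun x hx => h x (Multiset.mem_cons_of_mem hx))
        (norm_nonneg _) hR

lemma multiset_sum_norm_le (s : Multiset ℂ) (B : ℝ) (h : ∀ x ∈ s, ‖x‖ ≤ B) :
    ‖s.sum‖ ≤ (Multiset.card s) * B := by
  induction s using Multiset.induction_on with
  | empty => simp
  | cons a s ih =>
      rw [Multiset.sum_cons, Multiset.card_cons]
      calc ‖a + s.sum‖ ≤ ‖a‖ + ‖s.sum‖ := norm_add_le _ _
        _ ≤ B + (Multiset.card s) * B :=
            add_le_add (h a (Multiset.mem_cons_self a s)) (ih fun x hx => h x (Multiset.mem_cons_of_mem hx))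
        _ = (Multiset.card s + 1) * B := by ring
        _ = ((Multiset.card s + 1 : ℕ) : ℝ) * B := by push_cast; ring

lemma esymm_norm_le (s : Multiset ℂ) (m : ℕ) (R : ℝ) (hR : 0 ≤ R) (h : ∀ x ∈ s, ‖x‖ ≤ R) :
    ‖s.esymm m‖ ≤ ((Multiset.card s).choose m) * R ^ m := by
  rw [Multiset.esymm]
  have hB : ∀ x ∈ (s.powersetCard m).map Multiset.prod, ‖x‖ ≤ R ^ m := by
    intro x hx
    obtain ⟨t, ht, rfl⟩ := Multiset.mem_map.mp hx
    obtain ⟨hts, htc⟩ := Multiset.mem_powersetCard.mp ht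
    rw [← htc]
    exact multiset_prod_norm_le t R hR fun y hy => h y (Multiset.mem_of_le hts hy)
  calc ‖((s.powersetCard m).map Multiset.prod).sum‖
      ≤ (Multiset.card ((s.powersetCard m).map Multiset.prod)) * R ^ m :=
        multiset_sum_norm_le _ _ hB
    _ = ((Multiset.card s).choose m) * R ^ m := by
        rw [Multiset.card_map, Multiset.card_powersetCard]

lemma choose_le_two_pow (d m : ℕ) : (d.choose m : ℝ) ≤ 2 ^ d := by
  by_cases h : m ≤ d
  · have : d.choose m ≤ 2 ^ d := by
      calc d.choose m ≤ ∑ i ∈ Finset.range (d + 1), d.choose i :=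
            Finset.single_le_sum (fun i _ => Nat.zero_le _) (Finset.mem_range.mpr (Nat.lt_succ_of_le h))
        _ = 2 ^ d := Nat.sum_range_choose d
    exact_mod_cast this
  · rw [Nat.choose_eq_zero_of_lt (not_le.mp h)]
    simp only [Nat.cast_zero]
    positivity

/-- Coefficient bound for a polynomial whose roots all lie in a ball of radius `R`. -/
lemma coeff_bound (p : Polynomial ℂ) (R : ℝ) (hR : 0 ≤ R)
    (hroots : ∀ z : ℂ, p.eval z = 0 → ‖z‖ ≤ R) (k : ℕ) :
    ‖p.coeff k‖ ≤ ‖p.leadingCoeff‖ * (2 ^ p.natDegree * (max 1 R) ^ p.natDegree) := by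
  by_cases hp : p = 0
  · simp [hp]
  have hRpos : (0:ℝ) ≤ max 1 R := le_trans zero_le_one (le_max_left _ _)
  have hbound_nonneg : (0:ℝ) ≤ 2 ^ p.natDegree * (max 1 R) ^ p.natDegree := by positivity
  by_cases hk : p.natDegree < k
  · rw [Polynomial.coeff_eq_zero_of_natDegree_lt hk]
    simp only [norm_zero]
    exact mul_nonneg (norm_nonneg _) hbound_nonneg
  push_neg at hk
  have hs := IsAlgClosed.splits p
  have hcard : Multiset.card p.roots = p.natDegree := (Polynomial.splits_iff_card_roots).mp hs
  have hfact := hs.eq_prod_roots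
  have hcoeff : p.coeff k = p.leadingCoeff *
      ((-1) ^ (Multiset.card p.roots - k) * p.roots.esymm (Multiset.card p.roots - k)) := by
    conv_lhs => rw [hfact]
    rw [Polynomial.coeff_C_mul]
    congr 1
    exact Multiset.prod_X_sub_C_coeff p.roots (by rw [hcard]; exact hk)
  rw [hcoeff, norm_mul, norm_mul, norm_pow, norm_neg, norm_one, one_pow, one_mul]
  apply mul_le_mul_of_nonneg_left _ (norm_nonneg _)
  have hrb : ∀ x ∈ p.roots, ‖x‖ ≤ max 1 R := by
    intro x hx
    have := hroots x ((Polynomial.mem_roots hp).mp hx)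
    exact le_trans this (le_max_right _ _)
  calc ‖p.roots.esymm (Multiset.card p.roots - k)‖
      ≤ ((Multiset.card p.roots).choose (Multiset.card p.roots - k)) *
          (max 1 R) ^ (Multiset.card p.roots - k) :=
        esymm_norm_le _ _ _ hRpos hrb
    _ ≤ 2 ^ p.natDegree * (max 1 R) ^ p.natDegree := by
        apply mul_le_mul
        · rw [hcard]; exact choose_le_two_pow _ _
        · apply pow_le_pow_right₀ (le_max_left _ _)
          rw [hcard]; exact Nat.sub_le _ _
        · positivity
        · positivity

/-- Growth lemma: a higher-degree polynomial eventually dominates. -/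
lemma growth (p q : Polynomial ℂ) (hdeg : q.natDegree < p.natDegree) (hp : p ≠ 0)
    (M R : ℝ) (hM : 0 ≤ M) :
    ∃ t : ℂ, R < ‖t‖ ∧ M * ‖q.eval t‖ < ‖p.eval t‖ := by
  set d := p.natDegree with hd
  have hd1 : 1 ≤ d := Nat.one_le_iff_ne_zero.mpr (by omega)
  set lc : ℝ := ‖p.leadingCoeff‖ with hlc
  have hlcpos : 0 < lc := norm_pos_iff.mpr (Polynomial.leadingCoeff_ne_zero.mpr hp)
  set SP : ℝ := ∑ i ∈ Finset.range d, ‖p.coeff i‖ with hSP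
  set SQ : ℝ := ∑ i ∈ Finset.range (q.natDegree + 1), ‖q.coeff i‖ with hSQ
  have hSPnn : 0 ≤ SP := Finset.sum_nonneg fun i _ => norm_nonneg _
  have hSQnn : 0 ≤ SQ := Finset.sum_nonneg fun i _ => norm_nonneg _
  set x : ℝ := max (max 1 (R + 1)) ((SP + M * SQ + 1) / lc) with hx
  have hx1 : 1 ≤ x := le_trans (le_max_left _ _) (le_max_left _ _)
  have hxpos : 0 < x := lt_of_lt_of_le zero_lt_one hx1
  have hxR : R < x := lt_of_lt_of_le (by linarith) (le_trans (le_max_right 1 (R+1)) (le_max_left _ _))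
  have hxlc : SP + M * SQ + 1 ≤ lc * x := by
    have : (SP + M * SQ + 1) / lc ≤ x := le_trans (le_max_right _ _) (le_refl x)
    calc SP + M * SQ + 1 = lc * ((SP + M * SQ + 1) / lc) := by field_simp
      _ ≤ lc * x := mul_le_mul_of_nonneg_left this (le_of_lt hlcpos)
  refine ⟨(x : ℂ), ?_, ?_⟩
  · rw [Complex.norm_real, Real.norm_eq_abs, abs_of_pos hxpos]; exact hxR
  have hxnorm : ‖(x:ℂ)‖ = x := by rw [Complex.norm_real, Real.norm_eq_abs, abs_of_pos hxpos]
  have hQ : ‖q.eval (x:ℂ)‖ ≤ SQ * x ^ (d - 1) := by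
    rw [Polynomial.eval_eq_sum_range]
    calc ‖∑ i ∈ Finset.range (q.natDegree + 1), q.coeff i * (x:ℂ) ^ i‖
        ≤ ∑ i ∈ Finset.range (q.natDegree + 1), ‖q.coeff i * (x:ℂ) ^ i‖ := norm_sum_le _ _
      _ ≤ ∑ i ∈ Finset.range (q.natDegree + 1), ‖q.coeff i‖ * x ^ (d - 1) := by
          apply Finset.sum_le_sum
          intro i hi
          rw [norm_mul, norm_pow, hxnorm]
          apply mul_le_mul_of_nonneg_left _ (norm_nonneg _)
          apply pow_le_pow_right₀ hx1
          have := Finset.mem_range.mp hi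
          omega
      _ = SQ * x ^ (d - 1) := by rw [← Finset.sum_mul]
  have hPsplit : p.eval (x:ℂ) = p.coeff d * (x:ℂ) ^ d + ∑ i ∈ Finset.range d, p.coeff i * (x:ℂ) ^ i := by
    rw [Polynomial.eval_eq_sum_range, Finset.sum_range_succ]
    ring
  have hSPb : ‖∑ i ∈ Finset.range d, p.coeff i * (x:ℂ) ^ i‖ ≤ SP * x ^ (d - 1) := by
    calc ‖∑ i ∈ Finset.range d, p.coeff i * (x:ℂ) ^ i‖
        ≤ ∑ i ∈ Finset.range d, ‖p.coeff i * (x:ℂ) ^ i‖ := norm_sum_le _ _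
      _ ≤ ∑ i ∈ Finset.range d, ‖p.coeff i‖ * x ^ (d - 1) := by
          apply Finset.sum_le_sum
          intro i hi
          rw [norm_mul, norm_pow, hxnorm]
          apply mul_le_mul_of_nonneg_left _ (norm_nonneg _)
          apply pow_le_pow_right₀ hx1
          have := Finset.mem_range.mp hi
          omega
      _ = SP * x ^ (d - 1) := by rw [← Finset.sum_mul]
  have hlead : ‖p.coeff d * (x:ℂ) ^ d‖ = lc * x ^ d := by
    rw [norm_mul, norm_pow, hxnorm, hlc, hd]
    rfl
  have hP : lc * x ^ d - SP * x ^ (d - 1) ≤ ‖p.eval (x:ℂ)‖ := by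
    rw [hPsplit]
    have h3 : ‖p.coeff d * (x:ℂ) ^ d‖ ≤
        ‖p.coeff d * (x:ℂ) ^ d + ∑ i ∈ Finset.range d, p.coeff i * (x:ℂ) ^ i‖ +
          ‖∑ i ∈ Finset.range d, p.coeff i * (x:ℂ) ^ i‖ := by
      have h4 : p.coeff d * (x:ℂ) ^ d =
          (p.coeff d * (x:ℂ) ^ d + ∑ i ∈ Finset.range d, p.coeff i * (x:ℂ) ^ i) -
            (∑ i ∈ Finset.range d, p.coeff i * (x:ℂ) ^ i) := by ring
      calc ‖p.coeff d * (x:ℂ) ^ d‖ = ‖(p.coeff d * (x:ℂ) ^ d + ∑ i ∈ Finset.range d, p.coeff i * (x:ℂ) ^ i) -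
            (∑ i ∈ Finset.range d, p.coeff i * (x:ℂ) ^ i)‖ := by rw [← h4]
        _ ≤ _ := norm_sub_le _ _
    rw [hlead] at h3
    linarith [hSPb]
  have hxd : x ^ d = x * x ^ (d - 1) := by
    conv_lhs => rw [show d = (d-1) + 1 by omega]
    rw [pow_succ]
    ring
  have hXpos : 0 < x ^ (d - 1) := pow_pos hxpos _
  have key : M * (SQ * x ^ (d-1)) < lc * x ^ d - SP * x ^ (d-1) := by
    rw [hxd]
    have h1 : (SP + M * SQ + 1) * x ^ (d-1) ≤ (lc * x) * x ^ (d-1) :=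
      mul_le_mul_of_nonneg_right hxlc (le_of_lt hXpos)
    nlinarith
  have hQ' : M * ‖q.eval (x:ℂ)‖ ≤ M * (SQ * x ^ (d-1)) := mul_le_mul_of_nonneg_left hQ hM
  linarith

end MoebiusAux
namespace MoebiusAux
open MvPolynomial Finset
variable {n : ℕ}

lemma stable_ne_zero {Cs : Fin n → Set ℂ} {f : MvPolynomial (Fin n) ℂ}
    (hne : ∀ i, (Cs i).Nonempty) (hst : StableOn Cs f) : f ≠ 0 := by
  intro h0
  exact hst (fun i => (hne i).some) (fun i => (hne i).some_mem) (by rw [h0]; simp)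

lemma isOpen_forall_mem {P : Fin n → Prop} [DecidablePred P] {Cs : Fin n → Set ℂ}
    (hopen : ∀ i, IsOpen (Cs i)) :
    IsOpen {y : Fin n → ℂ | ∀ i, P i → y i ∈ Cs i} := by
  have : {y : Fin n → ℂ | ∀ i, P i → y i ∈ Cs i} = Set.pi {i | P i} Cs := by
    ext y; simp [Set.mem_pi]
  rw [this]
  exact isOpen_set_pi (Set.toFinite _) (fun i _ => hopen i)

lemma bound_main (Cs : Fin n → Set ℂ) (hopen : ∀ i, IsOpen (Cs i))
    (hne : ∀ i, (Cs i).Nonempty) (j : Fin n) (w₀ : ℂ) (r : ℝ) (hr : 0 < r)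
    (hCj : Cs j = (Metric.closedBall w₀ r)ᶜ) (f : MvPolynomial (Fin n) ℂ)
    (hst : StableOn Cs f) :
    ∃ M : ℝ, 0 ≤ M ∧ ∀ y : Fin n → ℂ, (∀ i, i ≠ j → y i ∈ Cs i) → ∀ k,
      ‖eval y (ext1 j k f)‖ ≤ M * ‖eval y (ext1 j (degreeOf j f) f)‖ := by
  classical
  have hfne : f ≠ 0 := stable_ne_zero hne hst
  set D := degreeOf j f with hD
  set g := ext1 j D f with hg
  have hgne : g ≠ 0 := ext1_ne_zero_of_degreeOf hfne j rfl
  set M : ℝ := 2 ^ D * (max 1 (‖w₀‖ + r)) ^ D with hM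
  have hMnn : 0 ≤ M := by positivity
  refine ⟨M, hMnn, ?_⟩
  set U := {y : Fin n → ℂ | ∀ i, i ≠ j → y i ∈ Cs i} with hU
  have hUopen : IsOpen U := isOpen_forall_mem hopen
  have hcore : ∀ y ∈ U, eval y g ≠ 0 → ∀ k,
      ‖eval y (ext1 j k f)‖ ≤ M * ‖eval y g‖ := by
    intro y hy hgy k
    set p := uni j y f with hp
    have hcoefD : p.coeff D = eval y g := by rw [hp, coeff_uni, hg]
    have hpd : p.natDegree = D :=
      le_antisymm (natDegree_uni_le j y f)
        (Polynomial.le_natDegree_of_ne_zero (by rw [hcoefD]; exact hgy))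
    have hroots : ∀ t : ℂ, p.eval t = 0 → ‖t‖ ≤ ‖w₀‖ + r := by
      intro t ht
      have htC : t ∉ Cs j := by
        intro hc
        apply hst (Function.update y j t) ?_ (by rw [← eval_uni]; exact ht)
        intro i
        by_cases hij : i = j
        · subst hij; rw [Function.update_self]; exact hc
        · rw [Function.update_of_ne hij]; exact hy i hij
      rw [hCj] at htC
      simp only [Set.notMem_compl_iff, Metric.mem_closedBall] at htC
      calc ‖t‖ = ‖(t - w₀) + w₀‖ := by ring_nf
        _ ≤ ‖t - w₀‖ + ‖w₀‖ := norm_add_le _ _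
        _ ≤ r + ‖w₀‖ := by
            have : dist t w₀ ≤ r := htC
            rw [Complex.dist_eq] at this
            linarith
        _ = ‖w₀‖ + r := by ring
    have hb := coeff_bound p (‖w₀‖ + r) (by positivity) hroots k
    rw [Polynomial.leadingCoeff, hpd, hcoefD] at hb
    rw [hp, coeff_uni] at hb
    calc ‖eval y (ext1 j k f)‖ ≤ ‖eval y g‖ * (2 ^ D * max 1 (‖w₀‖ + r) ^ D) := by
          rw [← hpd] at hb ⊢; exact hb
      _ = M * ‖eval y g‖ := by rw [hM]; ring
  intro y hy k
  have hdense : Dense {z : Fin n → ℂ | eval z g ≠ 0} := dense_ne_zero hgne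
  have hsubset : U ⊆ closure (U ∩ {z | eval z g ≠ 0}) :=
    hdense.open_subset_closure_inter hUopen
  have hclosed : IsClosed {z : Fin n → ℂ | ‖eval z (ext1 j k f)‖ ≤ M * ‖eval z g‖} :=
    isClosed_le ((continuous_mveval _).norm) (continuous_const.mul (continuous_mveval g).norm)
  have hsub2 : U ∩ {z | eval z g ≠ 0} ⊆
      {z : Fin n → ℂ | ‖eval z (ext1 j k f)‖ ≤ M * ‖eval z g‖} :=
    fun z hz => hcore z hz.1 hz.2 k
  exact hclosed.closure_subset ((closure_mono hsub2) (hsubset hy))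

lemma step_stable (Cs : Fin n → Set ℂ) (hopen : ∀ i, IsOpen (Cs i))
    (hne : ∀ i, (Cs i).Nonempty) (j : Fin n) (w₀ : ℂ) (r : ℝ) (hr : 0 < r)
    (hCj : Cs j = (Metric.closedBall w₀ r)ᶜ) (f : MvPolynomial (Fin n) ℂ)
    (hst : StableOn Cs f) :
    ∀ y : Fin n → ℂ, (∀ i, i ≠ j → y i ∈ Cs i) →
      eval y (ext1 j (degreeOf j f) f) ≠ 0 := by
  classical
  obtain ⟨M, hMnn, hb⟩ := bound_main Cs hopen hne j w₀ r hr hCj f hst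
  intro y hy hzero
  have hall : ∀ k, eval y (ext1 j k f) = 0 := by
    intro k
    have := hb y hy k
    rw [hzero] at this
    simp only [norm_zero, mul_zero] at this
    exact norm_le_zero_iff.mp this
  have huni : uni j y f = 0 := by
    apply Polynomial.ext
    intro k
    rw [coeff_uni, hall k, Polynomial.coeff_zero]
  obtain ⟨t, ht⟩ := hne j
  apply hst (Function.update y j t) ?_ ?_
  · intro i
    by_cases hij : i = j
    · subst hij; rw [Function.update_self]; exact ht
    · rw [Function.update_of_ne hij]; exact hy i hij
  · rw [← eval_uni, huni]
    simp

lemma step_deg (Cs : Fin n → Set ℂ) (hopen : ∀ i, IsOpen (Cs i))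
    (hne : ∀ i, (Cs i).Nonempty) (j : Fin n) (w₀ : ℂ) (r : ℝ) (hr : 0 < r)
    (hCj : Cs j = (Metric.closedBall w₀ r)ᶜ) (f : MvPolynomial (Fin n) ℂ)
    (hst : StableOn Cs f) (i0 : Fin n) (hij : i0 ≠ j) (w₁ : ℂ) (r₁ : ℝ) (hr₁ : 0 < r₁)
    (hCi : Cs i0 = (Metric.closedBall w₁ r₁)ᶜ) :
    degreeOf i0 (ext1 j (degreeOf j f) f) = degreeOf i0 f := by
  classical
  have hfne : f ≠ 0 := stable_ne_zero hne hst
  set D := degreeOf j f with hD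
  set g := ext1 j D f with hg
  refine le_antisymm (degreeOf_ext1_le j D f i0 hij) ?_
  by_contra hm
  push_neg at hm
  set m := degreeOf i0 g with hmdef
  set N := degreeOf i0 f with hN
  -- find a support exponent realizing N
  have hsupne : f.support.Nonempty := MvPolynomial.support_nonempty.mpr hfne
  obtain ⟨α, hα, hval⟩ := Finset.exists_mem_eq_sup f.support hsupne (fun β => β i0)
  have hαi0 : α i0 = N := by rw [hN, degreeOf_eq_sup]; exact hval.symm
  set k := α j with hk
  set c := ext1 j k f with hc
  have hβ : coeff (α.erase j) c = coeff α f := by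
    rw [hc, coeff_ext1, if_pos (Finsupp.erase_same)]
    congr 1
    exact Finsupp.erase_add_single j α
  have hcne : c ≠ 0 := by
    intro h0
    rw [h0] at hβ
    exact (MvPolynomial.mem_support_iff.mp hα) (by rw [← hβ]; simp)
  have hcmem : α.erase j ∈ c.support := by
    rw [MvPolynomial.mem_support_iff, hβ]
    exact MvPolynomial.mem_support_iff.mp hα
  have hcN : degreeOf i0 c = N := by
    refine le_antisymm (by rw [hN]; exact degreeOf_ext1_le j k f i0 hij) ?_
    have := exponent_le_degreeOf hcmem i0
    rwa [Finsupp.erase_ne hij, hαi0] at this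
  set G := ext1 i0 N c with hG
  have hGne : G ≠ 0 := ext1_ne_zero_of_degreeOf hcne i0 hcN
  set W := {y : Fin n → ℂ | ∀ l, l ≠ i0 ∧ l ≠ j → y l ∈ Cs l} with hW
  have hWopen : IsOpen W := isOpen_forall_mem hopen
  have hWne : W.Nonempty := ⟨fun l => (hne l).some, fun l _ => (hne l).some_mem⟩
  obtain ⟨y, hyW, hyG⟩ := ((dense_ne_zero hGne).inter_open_nonempty W hWopen hWne)
  set P := uni i0 y c with hP
  set Q := uni i0 y g with hQ
  have hQdeg : Q.natDegree ≤ m := natDegree_uni_le i0 y g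
  have hPcoef : P.coeff N = eval y G := by rw [hP, coeff_uni, hG]
  have hPdeg : N ≤ P.natDegree :=
    Polynomial.le_natDegree_of_ne_zero (by rw [hPcoef]; exact hyG)
  have hPne : P ≠ 0 := by
    intro h0
    rw [h0] at hPcoef
    exact hyG (by rw [← hPcoef]; simp)
  obtain ⟨M, hMnn, hb⟩ := bound_main Cs hopen hne j w₀ r hr hCj f hst
  obtain ⟨t, ht1, ht2⟩ := growth P Q (lt_of_le_of_lt hQdeg (lt_of_lt_of_le hm hPdeg))
    hPne M (‖w₁‖ + r₁) hMnn
  have htC : t ∈ Cs i0 := by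
    rw [hCi]
    simp only [Set.mem_compl_iff, Metric.mem_closedBall, not_le]
    rw [Complex.dist_eq]
    have := norm_sub_norm_le t w₁
    linarith
  set Y := Function.update y i0 t with hY
  have hYmem : ∀ l, l ≠ j → Y l ∈ Cs l := by
    intro l hlj
    by_cases hli : l = i0
    · subst hli; rw [hY, Function.update_self]; exact htC
    · rw [hY, Function.update_of_ne hli]; exact hyW l ⟨hli, hlj⟩
  have h1 := hb Y hYmem k
  have hPeval : P.eval t = eval Y c := by rw [hP, eval_uni, hY]
  have hQeval : Q.eval t = eval Y g := by rw [hQ, eval_uni, hY]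
  have h2 : ‖P.eval t‖ ≤ M * ‖Q.eval t‖ := by
    rw [hPeval, hQeval]
    exact h1
  linarith

lemma AL (κ : Fin n →₀ ℕ) : ∀ L : List (Fin n), L.Nodup →
    ∀ (f : MvPolynomial (Fin n) ℂ) (Cs : Fin n → Set ℂ),
    (∀ i, IsOpen (Cs i)) → (∀ i, (Cs i).Nonempty) → StableOn Cs f →
    (∀ j ∈ L, ∃ w r, 0 < r ∧ Cs j = (Metric.closedBall w r)ᶜ) →
    (∀ j ∈ L, degreeOf j f = κ j) →
    ∀ y : Fin n → ℂ, (∀ i, i ∉ L → y i ∈ Cs i) → eval y (mES κ L f) ≠ 0 := by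
  classical
  intro L
  induction L with
  | nil =>
      intro _ f Cs _ _ hst _ _ y hy
      rw [mES_nil]
      exact hst y (fun i => hy i (List.not_mem_nil))
  | cons j L ih =>
      intro hnodup f Cs hopen hne hst hext hdegs y hy
      have hjL : j ∉ L := (List.nodup_cons.mp hnodup).1
      obtain ⟨w₀, r, hr, hCj⟩ := hext j (List.mem_cons_self)
      set g := ext1 j (κ j) f with hg
      have hgD : g = ext1 j (degreeOf j f) f := by
        rw [hg, hdegs j (List.mem_cons_self)]
      set Cs' := Function.update Cs j Set.univ with hCs'
      have hCs'eq : ∀ i, i ≠ j → Cs' i = Cs i := by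
        intro i hi; rw [hCs', Function.update_of_ne hi]
      have hstable' : StableOn Cs' g := by
        intro z hz
        rw [hgD]
        apply step_stable Cs hopen hne j w₀ r hr hCj f hst
        intro i hi
        have := hz i
        rwa [hCs'eq i hi] at this
      have hdeg' : ∀ i ∈ L, degreeOf i g = κ i := by
        intro i hiL
        have hij : i ≠ j := fun hc => hjL (hc ▸ hiL)
        obtain ⟨w₁, r₁, hr₁, hCi⟩ := hext i (List.mem_cons_of_mem j hiL)
        rw [hgD]
        rw [step_deg Cs hopen hne j w₀ r hr hCj f hst i hij w₁ r₁ hr₁ hCi]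
        exact hdegs i (List.mem_cons_of_mem j hiL)
      rw [mES_cons, ← hg]
      apply ih (List.nodup_cons.mp hnodup).2 g Cs'
      · intro i
        by_cases hi : i = j
        · subst hi; rw [hCs', Function.update_self]; exact isOpen_univ
        · rw [hCs'eq i hi]; exact hopen i
      · intro i
        by_cases hi : i = j
        · subst hi; rw [hCs', Function.update_self]; exact Set.univ_nonempty
        · rw [hCs'eq i hi]; exact hne i
      · exact hstable'
      · intro l hlL
        have hlj : l ≠ j := fun hc => hjL (hc ▸ hlL)
        rw [hCs'eq l hlj]
        exact hext l (List.mem_cons_of_mem j hlL)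
      · exact hdeg'
      · intro i hiL
        by_cases hi : i = j
        · subst hi; rw [hCs', Function.update_self]; exact Set.mem_univ _
        · rw [hCs'eq i hi]
          apply hy
          rw [List.mem_cons]
          push_neg
          exact ⟨hi, hiL⟩

lemma Tval_eq (κ : Fin n →₀ ℕ) (u v : Fin n → ℂ) (f : MvPolynomial (Fin n) ℂ)
    (hdeg : ∀ i, degreeOf i f ≤ κ i) :
    Tval κ u v f = (∏ i, (if v i = 0 then u i else v i) ^ κ i) *
      eval (fun i => u i / v i)
        (mES κ (Finset.univ.filter (fun i => v i = 0)).toList f) := by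
  classical
  set L := (Finset.univ.filter (fun i => v i = 0)).toList with hL
  have hLnodup : L.Nodup := Finset.nodup_toList _
  have hmemL : ∀ i, i ∈ L ↔ v i = 0 := by
    intro i
    rw [hL, Finset.mem_toList, Finset.mem_filter]
    simp
  rw [eval_mES κ L hLnodup f, Tval]
  rw [← Finset.sum_filter_add_sum_filter_not f.support (fun α => ∀ j ∈ L, α j = κ j)]
  have hzero : ∑ α ∈ f.support.filter (fun α => ¬ ∀ j ∈ L, α j = κ j),
      coeff α f * ∏ i, (u i ^ α i * v i ^ (κ i - α i)) = 0 := by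
    apply Finset.sum_eq_zero
    intro α hα
    obtain ⟨hαs, hαc⟩ := Finset.mem_filter.mp hα
    push_neg at hαc
    obtain ⟨j, hjL, hjne⟩ := hαc
    have hvj : v j = 0 := (hmemL j).mp hjL
    have hαj : α j < κ j :=
      lt_of_le_of_ne (le_trans (exponent_le_degreeOf hαs j) (hdeg j)) hjne
    have : (u j ^ α j * v j ^ (κ j - α j)) = 0 := by
      rw [hvj, zero_pow (by omega), mul_zero]
    rw [Finset.prod_eq_zero (Finset.mem_univ j) this, mul_zero]
  rw [hzero, add_zero, Finset.mul_sum]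
  apply Finset.sum_congr rfl
  intro α hα
  obtain ⟨hαs, hαc⟩ := Finset.mem_filter.mp hα
  rw [← mul_assoc, mul_comm (∏ i, (if v i = 0 then u i else v i) ^ κ i) (coeff α f), mul_assoc]
  congr 1
  have hsplit : ∀ i : Fin n, u i ^ α i * v i ^ (κ i - α i) =
      (if v i = 0 then u i else v i) ^ κ i * (if i ∈ L then 1 else (u i / v i) ^ α i) := by
    intro i
    by_cases hv : v i = 0
    · have hiL : i ∈ L := (hmemL i).mpr hv
      have hαi : α i = κ i := hαc i hiL
      rw [if_pos hv, if_pos hiL, hαi, Nat.sub_self, pow_zero, mul_one]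
    · have hiL : i ∉ L := fun hc => hv ((hmemL i).mp hc)
      have hαle : α i ≤ κ i := le_trans (exponent_le_degreeOf hαs i) (hdeg i)
      rw [if_neg hv, if_neg hiL, div_pow]
      rw [eq_comm]
      field_simp
      rw [mul_assoc, ← pow_add]
      have hsum : κ i - α i + α i = κ i := by omega
      rw [add_comm (α i), hsum, mul_comm]
  calc ∏ i, (u i ^ α i * v i ^ (κ i - α i))
      = ∏ i, ((if v i = 0 then u i else v i) ^ κ i * (if i ∈ L then 1 else (u i / v i) ^ α i)) :=
        Finset.prod_congr rfl (fun i _ => hsplit i)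
    _ = (∏ i, (if v i = 0 then u i else v i) ^ κ i) *
        ∏ i, (if i ∈ L then 1 else (u i / v i) ^ α i) := Finset.prod_mul_distrib
    _ = (∏ i, (if v i = 0 then u i else v i) ^ κ i) *
        ∏ i ∈ Finset.univ.filter (fun i => i ∉ L), (u i / v i) ^ α i := by
      congr 1
      rw [Finset.prod_filter]
      apply Finset.prod_congr rfl
      intro i _
      by_cases hiL : i ∈ L
      · rw [if_pos hiL, if_neg (by simpa using hiL)]
      · rw [if_neg hiL, if_pos hiL]

lemma master (κ : Fin n →₀ ℕ) (Cs : Fin n → Set ℂ) (hopen : ∀ i, IsOpen (Cs i))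
    (hne : ∀ i, (Cs i).Nonempty) (f : MvPolynomial (Fin n) ℂ) (hst : StableOn Cs f)
    (hdeg : ∀ i, degreeOf i f ≤ κ i) (u v : Fin n → ℂ)
    (hcond : ∀ i, (v i ≠ 0 ∧ u i / v i ∈ Cs i) ∨
      (v i = 0 ∧ u i ≠ 0 ∧ (∃ w r, 0 < r ∧ Cs i = (Metric.closedBall w r)ᶜ) ∧
        degreeOf i f = κ i)) :
    Tval κ u v f ≠ 0 := by
  classical
  rw [Tval_eq κ u v f hdeg]
  apply mul_ne_zero
  · apply Finset.prod_ne_zero_iff.mpr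
    intro i _
    apply pow_ne_zero
    rcases hcond i with ⟨hv, _⟩ | ⟨hv, hu, _, _⟩
    · rw [if_neg hv]; exact hv
    · rw [if_pos hv]; exact hu
  · set L := (Finset.univ.filter (fun i => v i = 0)).toList with hL
    have hmemL : ∀ i, i ∈ L ↔ v i = 0 := by
      intro i
      rw [hL, Finset.mem_toList, Finset.mem_filter]
      simp
    apply AL κ L (Finset.nodup_toList _) f Cs hopen hne hst
    · intro j hjL
      rcases hcond j with ⟨hv, _⟩ | ⟨_, _, hext, _⟩
      · exact absurd ((hmemL j).mp hjL) hv
      · exact hext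
    · intro j hjL
      rcases hcond j with ⟨hv, _⟩ | ⟨_, _, _, hdegj⟩
      · exact absurd ((hmemL j).mp hjL) hv
      · exact hdegj
    · intro i hiL
      rcases hcond i with ⟨_, hmem⟩ | ⟨hv, _⟩
      · exact hmem
      · exact absurd ((hmemL i).mpr hv) hiL

end MoebiusAux
namespace MoebiusAux
open MvPolynomial Finset
variable {n : ℕ}

lemma natDegree_linear_pow_le (a b : ℂ) (m : ℕ) :
    ((Polynomial.C a * Polynomial.X + Polynomial.C b) ^ m).natDegree ≤ m := by
  refine le_trans (Polynomial.natDegree_pow_le) ?_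
  have h1 : (Polynomial.C a * Polynomial.X + Polynomial.C b).natDegree ≤ 1 := by
    refine le_trans (Polynomial.natDegree_add_le _ _) ?_
    simp only [Polynomial.natDegree_C, max_le_iff]
    constructor
    · refine le_trans (Polynomial.natDegree_mul_le) ?_
      simp [Polynomial.natDegree_C, Polynomial.natDegree_X]
    · omega
  calc m * (Polynomial.C a * Polynomial.X + Polynomial.C b).natDegree ≤ m * 1 :=
        Nat.mul_le_mul_left m h1
    _ = m := by omega

lemma coeff_linear_pow_top (a b : ℂ) (m : ℕ) :
    ((Polynomial.C a * Polynomial.X + Polynomial.C b) ^ m).coeff m = a ^ m := by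
  induction m with
  | zero => simp
  | succ m ih =>
      rw [pow_succ, Polynomial.coeff_mul]
      rw [Finset.sum_eq_single (m, 1)]
      · rw [ih]
        have : (Polynomial.C a * Polynomial.X + Polynomial.C b).coeff 1 = a := by
          simp [Polynomial.coeff_add, Polynomial.coeff_C_mul, Polynomial.coeff_X_one,
            Polynomial.coeff_C]
        rw [this, pow_succ]
      · rintro ⟨i, l⟩ hmem hne
        rw [Finset.HasAntidiagonal.mem_antidiagonal] at hmem
        by_cases hi : m < i
        · rw [Polynomial.coeff_eq_zero_of_natDegree_lt
            (lt_of_le_of_lt (natDegree_linear_pow_le a b m) hi), zero_mul]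
        · have hl : 1 < l := by
            push_neg at hi
            rcases Nat.lt_or_ge 1 l with h | h
            · exact h
            · exfalso; apply hne
              have : l = 1 := by omega
              simp [this] at hmem ⊢
              omega
          rw [Polynomial.coeff_eq_zero_of_natDegree_lt
            (lt_of_le_of_lt (by simpa using natDegree_linear_pow_le a b 1) hl), mul_zero]
      · intro h
        simp at h

lemma coeff_top_mul (a b c d : ℂ) (m l : ℕ) :
    (((Polynomial.C a * Polynomial.X + Polynomial.C b) ^ m *
      (Polynomial.C c * Polynomial.X + Polynomial.C d) ^ l).coeff (m + l)) = a ^ m * c ^ l := by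
  rw [Polynomial.coeff_mul]
  rw [Finset.sum_eq_single (m, l)]
  · rw [coeff_linear_pow_top, coeff_linear_pow_top]
  · rintro ⟨i, s⟩ hmem hne
    rw [Finset.HasAntidiagonal.mem_antidiagonal] at hmem
    by_cases hi : m < i
    · rw [Polynomial.coeff_eq_zero_of_natDegree_lt
        (lt_of_le_of_lt (natDegree_linear_pow_le a b m) hi), zero_mul]
    · have hs : l < s := by
        push_neg at hi
        rcases Nat.lt_or_ge l s with h | h
        · exact h
        · exfalso; apply hne
          have h1 : i = m ∧ s = l := by omega
          simp [h1.1, h1.2]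
      rw [Polynomial.coeff_eq_zero_of_natDegree_lt
        (lt_of_le_of_lt (natDegree_linear_pow_le c d l) hs), mul_zero]
  · intro h
    simp at h

lemma eval_moebius_of_ne (a b c d : Fin n → ℂ) (κ : Fin n →₀ ℕ)
    (f : MvPolynomial (Fin n) ℂ) (hdeg : ∀ i, degreeOf i f ≤ κ i) (z : Fin n → ℂ)
    (hv : ∀ i, c i * z i + d i ≠ 0) :
    eval z (moebiusMap a b c d κ f) = (∏ i, (c i * z i + d i) ^ κ i) *
      eval (fun i => (a i * z i + b i) / (c i * z i + d i)) f := by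
  classical
  rw [eval_moebius, Tval_eq κ _ _ f hdeg]
  have hfe : Finset.univ.filter (fun i => c i * z i + d i = 0) = (∅ : Finset (Fin n)) := by
    apply Finset.filter_eq_empty_iff.mpr
    intro i _
    exact hv i
  rw [hfe]
  have htl : (∅ : Finset (Fin n)).toList = [] := by simp
  rw [htl, mES_nil]
  congr 1
  apply Finset.prod_congr rfl
  intro i _
  rw [if_neg (hv i)]

lemma moebius_comp (a b c d : Fin n → ℂ) (κ : Fin n →₀ ℕ)
    (hdet : ∀ i, a i * d i - b i * c i = 1) (f : MvPolynomial (Fin n) ℂ)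
    (hdeg : ∀ i, degreeOf i f ≤ κ i) :
    moebiusMap (fun i => d i) (fun i => -(b i)) (fun i => -(c i)) (fun i => a i) κ
      (moebiusMap a b c d κ f) = f := by
  classical
  set F := moebiusMap a b c d κ f with hF
  have hFdeg : ∀ i, degreeOf i F ≤ κ i := degreeOf_moebius_le a b c d κ f hdeg
  set G := moebiusMap (fun i => d i) (fun i => -(b i)) (fun i => -(c i)) (fun i => a i) κ F
    with hG
  set Q : MvPolynomial (Fin n) ℂ := ∏ i, (C (-(c i)) * X i + C (a i)) with hQ
  have hfac : ∀ i : Fin n, (C (-(c i)) * X i + C (a i)) ≠ (0 : MvPolynomial (Fin n) ℂ) := by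
    intro i h0
    have h1 : eval (fun _ => (0:ℂ)) (C (-(c i)) * X i + C (a i)) = 0 := by rw [h0]; simp
    have h2 : eval (fun _ => (1:ℂ)) (C (-(c i)) * X i + C (a i)) = 0 := by rw [h0]; simp
    simp only [eval_add, eval_mul, eval_C, eval_X] at h1 h2
    have ha : a i = 0 := by linear_combination h1
    have hc : c i = 0 := by linear_combination h1 - h2
    have hd := hdet i
    rw [ha, hc] at hd
    simp at hd
  have hQne : Q ≠ 0 := by
    rw [hQ]
    exact Finset.prod_ne_zero_iff.mpr (fun i _ => hfac i)
  have hev : ∀ z : Fin n → ℂ, eval z ((G - f) * Q) = eval z 0 := by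
    intro z
    rw [map_mul, map_sub, map_zero]
    by_cases hz : ∀ i, -(c i) * z i + a i ≠ 0
    · have hGz : eval z G = eval z f := by
        rw [hG]
        rw [eval_moebius_of_ne (fun i => d i) (fun i => -(b i)) (fun i => -(c i))
          (fun i => a i) κ F hFdeg z hz]
        set y : Fin n → ℂ := fun i => (d i * z i + -(b i)) / (-(c i) * z i + a i) with hy
        have hyden : ∀ i, y i * (-(c i) * z i + a i) = d i * z i + -(b i) := by
          intro i
          rw [hy]
          exact div_mul_cancel₀ _ (hz i)
        have hkey : ∀ i, (c i * y i + d i) * (-(c i) * z i + a i) = 1 := by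
          intro i
          have h := hyden i
          calc (c i * y i + d i) * (-(c i) * z i + a i)
              = c i * (y i * (-(c i) * z i + a i)) + d i * (-(c i) * z i + a i) := by ring
            _ = c i * (d i * z i + -(b i)) + d i * (-(c i) * z i + a i) := by rw [h]
            _ = 1 := by linear_combination hdet i
        have hcy : ∀ i, c i * y i + d i ≠ 0 := fun i =>
          left_ne_zero_of_mul_eq_one (hkey i)
        rw [hF, eval_moebius_of_ne a b c d κ f hdeg y hcy]
        have hw : ∀ i, (a i * y i + b i) / (c i * y i + d i) = z i := by
          intro i
          have hnum : a i * y i + b i = z i * (c i * y i + d i) := by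
            apply mul_right_cancel₀ (hz i)
            have h := hyden i
            calc (a i * y i + b i) * (-(c i) * z i + a i)
                = a i * (y i * (-(c i) * z i + a i)) + b i * (-(c i) * z i + a i) := by ring
              _ = a i * (d i * z i + -(b i)) + b i * (-(c i) * z i + a i) := by rw [h]
              _ = z i * (c i * (d i * z i + -(b i)) + d i * (-(c i) * z i + a i)) := by
                  ring
              _ = z i * (c i * (y i * (-(c i) * z i + a i)) + d i * (-(c i) * z i + a i)) := by
                  rw [h]
              _ = (z i * (c i * y i + d i)) * (-(c i) * z i + a i) := by ring
          rw [hnum, mul_div_assoc, div_self (hcy i), mul_one]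
        have hprod : (∏ i, (-(c i) * z i + a i) ^ κ i) * (∏ i, (c i * y i + d i) ^ κ i) = 1 := by
          rw [← Finset.prod_mul_distrib]
          rw [Finset.prod_congr rfl (fun i _ => ?_)]
          · exact Finset.prod_const_one
          · rw [← mul_pow, mul_comm (-(c i) * z i + a i) (c i * y i + d i), hkey i, one_pow]
        have hwf : (fun i => (a i * y i + b i) / (c i * y i + d i)) = z := funext hw
        rw [hwf, ← mul_assoc, hprod, one_mul]
      rw [hGz, sub_self, zero_mul]
    · push_neg at hz
      obtain ⟨i, hi⟩ := hz
      have : eval z Q = 0 := by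
        rw [hQ, map_prod]
        apply Finset.prod_eq_zero (Finset.mem_univ i)
        simp only [eval_add, eval_mul, eval_C, eval_X]
        exact hi
      rw [this, mul_zero]
  have hzero : (G - f) * Q = 0 := MvPolynomial.funext hev
  rcases mul_eq_zero.mp hzero with h | h
  · rw [hG] at h
    have := sub_eq_zero.mp h
    exact this
  · exact absurd h hQne

end MoebiusAux
namespace MoebiusAux
open MvPolynomial Finset
variable {n : ℕ}

lemma ext1_moebius_eval (a b c d : Fin n → ℂ) (κ : Fin n →₀ ℕ)
    (f : MvPolynomial (Fin n) ℂ) (hdeg : ∀ i, degreeOf i f ≤ κ i) (j : Fin n)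
    (y : Fin n → ℂ) :
    eval y (ext1 j (κ j) (moebiusMap a b c d κ f)) =
      Tval κ (Function.update (fun i => a i * y i + b i) j (a j))
        (Function.update (fun i => c i * y i + d i) j (c j)) f := by
  classical
  set R : Polynomial ℂ := ∑ α ∈ f.support,
    Polynomial.C (coeff α f *
        ∏ i ∈ Finset.univ.erase j, ((a i * y i + b i) ^ α i * (c i * y i + d i) ^ (κ i - α i))) *
      ((Polynomial.C (a j) * Polynomial.X + Polynomial.C (b j)) ^ (α j) *
        (Polynomial.C (c j) * Polynomial.X + Polynomial.C (d j)) ^ (κ j - α j)) with hR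
  have huniR : uni j y (moebiusMap a b c d κ f) = R := by
    apply Polynomial.funext
    intro t
    rw [eval_uni, eval_moebius, hR, Polynomial.eval_finset_sum, Tval]
    apply Finset.sum_congr rfl
    intro α hα
    rw [Polynomial.eval_mul, Polynomial.eval_C, Polynomial.eval_mul, Polynomial.eval_pow,
      Polynomial.eval_pow]
    simp only [Polynomial.eval_add, Polynomial.eval_mul, Polynomial.eval_C, Polynomial.eval_X]
    rw [← Finset.prod_erase_mul Finset.univ _ (Finset.mem_univ j)]
    rw [Function.update_self, mul_assoc]
    congr 1
    · congr 1
      apply Finset.prod_congr rfl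
      intro i hi
      rw [Function.update_of_ne (Finset.mem_erase.mp hi).1]
  have h1 : eval y (ext1 j (κ j) (moebiusMap a b c d κ f)) = R.coeff (κ j) := by
    rw [← coeff_uni, huniR]
  rw [h1, hR, Polynomial.finset_sum_coeff, Tval]
  apply Finset.sum_congr rfl
  intro α hα
  rw [Polynomial.coeff_C_mul]
  have hαj : α j ≤ κ j := le_trans (exponent_le_degreeOf hα j) (hdeg j)
  have hsum : α j + (κ j - α j) = κ j := Nat.add_sub_cancel' hαj
  have hco := coeff_top_mul (a j) (b j) (c j) (d j) (α j) (κ j - α j)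
  rw [hsum] at hco
  rw [hco]
  rw [← Finset.prod_erase_mul Finset.univ _ (Finset.mem_univ j)]
  rw [Function.update_self, Function.update_self]
  have hpe : ∏ i ∈ Finset.univ.erase j,
      (Function.update (fun i => a i * y i + b i) j (a j) i ^ α i *
        Function.update (fun i => c i * y i + d i) j (c j) i ^ (κ i - α i)) =
      ∏ i ∈ Finset.univ.erase j, ((a i * y i + b i) ^ α i * (c i * y i + d i) ^ (κ i - α i)) := by
    apply Finset.prod_congr rfl
    intro i hi
    rw [Function.update_of_ne (Finset.mem_erase.mp hi).1,
      Function.update_of_ne (Finset.mem_erase.mp hi).1]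
  rw [hpe]
  ring

end MoebiusAux
namespace MoebiusAux
open MvPolynomial

def GoodM (a b c d : ℂ) (C D : Set ℂ) : Prop :=
  (∀ z ∈ D, c * z + d ≠ 0 → (a * z + b) / (c * z + d) ∈ C) ∧
  (∀ z ∈ D, c * z + d = 0 → ¬ Convex ℝ C) ∧
  (¬ Convex ℝ D → ((c = 0 → ¬ Convex ℝ C) ∧ (c ≠ 0 → a / c ∈ C)))

def Hup : Set ℂ := {z : ℂ | 0 < z.im}

lemma convex_halfplane (a b : ℂ) : Convex ℝ {z : ℂ | 0 < (a * z + b).im} := by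
  intro x hx y hy s t hs ht hst
  simp only [Set.mem_setOf_eq] at hx hy ⊢
  have hkey : a * (s • x + t • y) + b = s • (a * x + b) + t • (a * y + b) := by
    have h1 : (s : ℂ) + (t : ℂ) = 1 := by
      exact_mod_cast hst
    simp only [Complex.real_smul]
    calc a * (↑s * x + ↑t * y) + b = ↑s * (a * x + b) + ↑t * (a * y + b) + b * (1 - (↑s + ↑t)) := by
          ring
      _ = ↑s * (a * x + b) + ↑t * (a * y + b) := by rw [h1]; ring
  rw [hkey]
  rw [Complex.add_im]
  have h2 : (s • (a * x + b)).im = s * (a * x + b).im := by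
    simp [Complex.real_smul, Complex.mul_im]; ring
  have h3 : (t • (a * y + b)).im = t * (a * y + b).im := by
    simp [Complex.real_smul, Complex.mul_im]; ring
  rw [h2, h3]
  rcases eq_or_lt_of_le hs with h | h
  · have ht1 : t = 1 := by linarith
    rw [← h, ht1]
    simpa using hy
  · have : 0 ≤ t * (a * y + b).im := mul_nonneg ht (le_of_lt hy)
    have : 0 < s * (a * x + b).im := mul_pos h hx
    linarith

lemma convex_Hup : Convex ℝ Hup := by
  have : Hup = {z : ℂ | 0 < ((1:ℂ) * z + 0).im} := by
    ext z; simp [Hup]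
  rw [this]
  exact convex_halfplane 1 0

lemma not_convex_ext (w : ℂ) (r : ℝ) (hr : 0 < r) :
    ¬ Convex ℝ ((Metric.closedBall w r)ᶜ) := by
  intro h
  have h1 : w + (2*r : ℝ) ∈ (Metric.closedBall w r)ᶜ := by
    simp only [Set.mem_compl_iff, Metric.mem_closedBall, not_le, Complex.dist_eq]
    have : w + (2*r:ℝ) - w = ((2*r:ℝ):ℂ) := by ring
    rw [this]
    rw [Complex.norm_real, Real.norm_eq_abs, abs_of_pos (by linarith)]
    linarith
  have h2 : w - (2*r : ℝ) ∈ (Metric.closedBall w r)ᶜ := by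
    simp only [Set.mem_compl_iff, Metric.mem_closedBall, not_le, Complex.dist_eq]
    have : w - (2*r:ℝ) - w = -((2*r:ℝ):ℂ) := by ring
    rw [this]
    rw [norm_neg, Complex.norm_real, Real.norm_eq_abs,
      abs_of_pos (by linarith)]
    linarith
  have h3 := h h1 h2 (by norm_num : (0:ℝ) ≤ 1/2) (by norm_num : (0:ℝ) ≤ 1/2) (by norm_num)
  have h4 : (1/2 : ℝ) • (w + (2*r:ℝ)) + (1/2 : ℝ) • (w - (2*r:ℝ)) = w := by
    simp only [Complex.real_smul]
    push_cast
    ring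
  rw [h4] at h3
  simp only [Set.mem_compl_iff, Metric.mem_closedBall, not_le, dist_self] at h3
  linarith

lemma circ_open {C : Set ℂ} (hC : IsCircularDomain C) : IsOpen C := by
  rcases hC with ⟨w, r, _, rfl⟩ | ⟨w, r, _, rfl⟩ | ⟨a, b, _, rfl⟩
  · exact Metric.isOpen_ball
  · exact (Metric.isClosed_closedBall).isOpen_compl
  · apply isOpen_lt continuous_const
    exact Complex.continuous_im.comp ((continuous_const.mul continuous_id).add continuous_const)

lemma circ_nonempty {C : Set ℂ} (hC : IsCircularDomain C) : C.Nonempty := by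
  rcases hC with ⟨w, r, hr, rfl⟩ | ⟨w, r, hr, rfl⟩ | ⟨a, b, ha, rfl⟩
  · exact ⟨w, by simp [hr]⟩
  · refine ⟨w + (2*r:ℝ), ?_⟩
    simp only [Set.mem_compl_iff, Metric.mem_closedBall, not_le, Complex.dist_eq]
    have : w + (2*r:ℝ) - w = ((2*r:ℝ):ℂ) := by ring
    rw [this, Complex.norm_real, Real.norm_eq_abs,
      abs_of_pos (by linarith)]
    linarith
  · refine ⟨(Complex.I - b)/a, ?_⟩
    simp only [Set.mem_setOf_eq]
    have : a * ((Complex.I - b)/a) + b = Complex.I := by rw [mul_div_cancel₀ _ ha]; ring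
    rw [this]
    simp

lemma nonconvex_circ {C : Set ℂ} (hC : IsCircularDomain C) (hnc : ¬ Convex ℝ C) :
    ∃ w r, 0 < r ∧ C = (Metric.closedBall w r)ᶜ := by
  rcases hC with ⟨w, r, hr, rfl⟩ | ⟨w, r, hr, rfl⟩ | ⟨a, b, ha, rfl⟩
  · exact absurd (convex_ball w r) hnc
  · exact ⟨w, r, hr, rfl⟩
  · exact absurd (convex_halfplane a b) hnc

lemma open_ne_point {U : Set ℂ} (hU : IsOpen U) (hne : U.Nonempty) (p : ℂ) :
    ∃ z ∈ U, z ≠ p := by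
  obtain ⟨q, hq⟩ := hne
  by_cases hqp : q = p
  · subst hqp
    obtain ⟨ε, hε, hball⟩ := Metric.isOpen_iff.mp hU q hq
    refine ⟨q + (ε/2 : ℝ), hball ?_, ?_⟩
    · simp only [Metric.mem_ball, Complex.dist_eq]
      have : q + (ε/2:ℝ) - q = ((ε/2:ℝ):ℂ) := by ring
      rw [this, Complex.norm_real, Real.norm_eq_abs,
        abs_of_pos (by linarith)]
      linarith
    · intro hc
      have : ((ε/2:ℝ):ℂ) = 0 := by linear_combination hc
      rw [Complex.ofReal_eq_zero] at this
      linarith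
  · exact ⟨q, hq, hqp⟩

lemma exists_sqrt (w : ℂ) : ∃ s : ℂ, s * s = w := by
  obtain ⟨z, hz⟩ := Complex.exists_root (f := Polynomial.X ^ 2 - Polynomial.C w)
    (by rw [Polynomial.degree_X_pow_sub_C (by norm_num : 0 < 2)]; norm_num)
  refine ⟨z, ?_⟩
  have := hz
  rw [Polynomial.IsRoot, Polynomial.eval_sub, Polynomial.eval_pow, Polynomial.eval_X,
    Polynomial.eval_C] at this
  have h2 : z ^ 2 = w := by linear_combination this
  rw [← h2]; ring

lemma num_ne_zero (a b c d z : ℂ) (hdet : a * d - b * c = 1) (hden : c * z + d = 0) :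
    a * z + b ≠ 0 := by
  intro hnum
  have hz : z = 0 := by linear_combination d * hnum - b * hden - z * hdet
  rw [hz] at hnum hden
  simp only [mul_zero, zero_add] at hnum hden
  rw [hnum, hden] at hdet
  simp at hdet

end MoebiusAux
namespace MoebiusAux
open MvPolynomial Complex

lemma abs_lt_abs_of_normSq {u v : ℂ} (hu : 0 ≤ Complex.normSq u)
    (h : Complex.normSq u < Complex.normSq v) : ‖u‖ < ‖v‖ := by
  rw [Complex.norm_def, Complex.norm_def]
  exact Real.sqrt_lt_sqrt hu h

lemma div_s_cancel (s N D : ℂ) (hs : s ≠ 0) : (N / s) / (D / s) = N / D := by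
  by_cases hD : D = 0
  · simp [hD]
  · field_simp

lemma good_halfplane (a₀ b₀ : ℂ) (ha : a₀ ≠ 0) :
    ∃ a b c d : ℂ, a * d - b * c = 1 ∧
      GoodM a b c d {z : ℂ | 0 < (a₀ * z + b₀).im} Hup ∧
      GoodM d (-b) (-c) a Hup {z : ℂ | 0 < (a₀ * z + b₀).im} := by
  obtain ⟨s, hs⟩ := exists_sqrt a₀
  have hsne : s ≠ 0 := by
    intro h0; apply ha; rw [← hs, h0]; ring
  refine ⟨s⁻¹, -b₀ / s, 0, s, by field_simp; ring, ⟨?_, ?_, ?_⟩, ⟨?_, ?_, ?_⟩⟩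
  · intro z hz hden
    simp only [Set.mem_setOf_eq]
    have : a₀ * ((s⁻¹ * z + -b₀ / s) / (0 * z + s)) + b₀ = z := by
      rw [zero_mul, zero_add, ← hs, mul_assoc, mul_div_cancel₀ _ hsne, mul_add, ← mul_assoc,
        mul_inv_cancel₀ hsne, mul_div_cancel₀ _ hsne]; ring
    rw [this]
    exact hz
  · intro z hz hden
    exfalso
    rw [zero_mul, zero_add] at hden
    exact hsne hden
  · intro hnc
    exact absurd convex_Hup hnc
  · intro z hz hden
    simp only [Set.mem_setOf_eq] at hz
    have : (s * z + -(-b₀ / s)) / (-0 * z + s⁻¹) = a₀ * z + b₀ := by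
      rw [← hs]; field_simp; ring
    rw [this]
    exact hz
  · intro z hz hden
    exfalso
    rw [neg_zero, zero_mul, zero_add] at hden
    exact (inv_ne_zero hsne) hden
  · intro hnc
    exact absurd (convex_halfplane a₀ b₀) hnc

lemma good_ball (w₀ : ℂ) (r : ℝ) (hr : 0 < r) :
    ∃ a b c d : ℂ, a * d - b * c = 1 ∧
      GoodM a b c d (Metric.ball w₀ r) Hup ∧
      GoodM d (-b) (-c) a Hup (Metric.ball w₀ r) := by
  obtain ⟨s, hs⟩ := exists_sqrt (2 * r * I)
  have hrne : (r:ℂ) ≠ 0 := by exact_mod_cast ne_of_gt hr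
  have h2rI : (2 * (r:ℂ) * I) ≠ 0 :=
    mul_ne_zero (mul_ne_zero two_ne_zero hrne) Complex.I_ne_zero
  have hsne : s ≠ 0 := by
    intro h0; apply h2rI; rw [← hs, h0]; ring
  refine ⟨(w₀ + r) / s, (w₀ - r) * I / s, 1 / s, I / s, ?_, ⟨?_, ?_, ?_⟩, ⟨?_, ?_, ?_⟩⟩
  · field_simp
    linear_combination -hs
  · -- forward g1 : t ∈ Hup maps into the ball
    intro t ht hden
    have htI : t + I ≠ 0 := by
      intro h0
      have := congrArg Complex.im h0
      simp only [Complex.add_im, Complex.I_im, Complex.zero_im] at this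
      simp only [Hup, Set.mem_setOf_eq] at ht
      linarith
    have hφ : ((w₀ + r) / s * t + (w₀ - r) * I / s) / (1 / s * t + I / s) - w₀ =
        (r : ℂ) * (t - I) / (t + I) := by
      rw [div_sub' hden]
      have hden2 : (1 / s * t + I / s) = (t + I) / s := by field_simp
      rw [hden2]
      have hnum2 : (w₀ + ↑r) / s * t + (w₀ - ↑r) * I / s - (t + I) / s * w₀ =
          ((r:ℂ) * (t - I)) / s := by
        field_simp
        ring
      rw [hnum2, div_s_cancel s _ _ hsne]
    simp only [Metric.mem_ball, Complex.dist_eq]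
    rw [hφ]
    have habs : ‖t - I‖ < ‖t + I‖ := by
      apply abs_lt_abs_of_normSq (Complex.normSq_nonneg _)
      simp only [Complex.normSq_apply, Complex.sub_re, Complex.sub_im, Complex.add_re,
        Complex.add_im, Complex.I_re, Complex.I_im]
      simp only [Hup, Set.mem_setOf_eq] at ht
      nlinarith
    rw [norm_div, norm_mul, Complex.norm_real, Real.norm_eq_abs, abs_of_pos hr]
    rw [div_lt_iff₀ (norm_pos_iff.mpr htI)]
    calc r * ‖t - I‖ < r * ‖t + I‖ :=
          mul_lt_mul_of_pos_left habs hr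
      _ = r * ‖t + I‖ := rfl
  · intro t ht hden
    exfalso
    have h0 : t + I = s * (1 / s * t + I / s) := by field_simp
    rw [hden, mul_zero] at h0
    have h2 := congrArg Complex.im h0
    simp only [Complex.add_im, Complex.I_im, Complex.zero_im] at h2
    simp only [Hup, Set.mem_setOf_eq] at ht
    linarith
  · intro hnc
    exact absurd convex_Hup hnc
  · -- reverse g1 : ball maps into Hup
    intro w hw hden
    simp only [Hup, Set.mem_setOf_eq]
    have hφ : (I / s * w + -((w₀ - r) * I / s)) / (-(1 / s) * w + (w₀ + r) / s) =
        I * ((w - w₀) + r) / ((r:ℂ) - (w - w₀)) := by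
      have hd : (-(1 / s) * w + (w₀ + r) / s) = ((r:ℂ) - (w - w₀)) / s := by
        field_simp; ring
      have hn : (I / s * w + -((w₀ - r) * I / s)) = (I * ((w - w₀) + r)) / s := by
        field_simp; ring
      rw [hd, hn, div_s_cancel s _ _ hsne]
    rw [hφ]
    have hu : ‖w - w₀‖ < r := by
      simp only [Metric.mem_ball, Complex.dist_eq] at hw
      exact hw
    have hdne : ((r:ℂ) - (w - w₀)) ≠ 0 := by
      intro h0
      have : (w - w₀) = (r:ℂ) := by linear_combination -h0
      rw [this] at hu
      rw [Complex.norm_real, Real.norm_eq_abs, abs_of_pos hr] at hu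
      linarith
    rw [Complex.div_im]
    have hnsq : 0 < Complex.normSq ((r:ℂ) - (w - w₀)) := Complex.normSq_pos.mpr hdne
    have hnum : (I * ((w - w₀) + r)).im = (w - w₀).re + r := by
      simp [Complex.mul_im, Complex.add_re]
    have hnre : (I * ((w - w₀) + r)).re = -(w - w₀).im := by
      simp [Complex.mul_re, Complex.add_im]
    have hdre : ((r:ℂ) - (w - w₀)).re = r - (w - w₀).re := by simp
    have hdim : ((r:ℂ) - (w - w₀)).im = -(w - w₀).im := by simp
    rw [hnum, hnre, hdre, hdim, div_sub_div_same]
    apply div_pos ?_ hnsq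
    have hlt : (w - w₀).re ^ 2 + (w - w₀).im ^ 2 < r ^ 2 := by
      have h2 : Complex.normSq (w - w₀) < r ^ 2 := by
        have h3 := Complex.sq_norm (w - w₀)
        nlinarith [norm_nonneg (w - w₀)]
      have h4 : Complex.normSq (w - w₀) = (w - w₀).re ^ 2 + (w - w₀).im ^ 2 := by
        rw [Complex.normSq_apply]; ring
      linarith [h4 ▸ h2]
    nlinarith
  · intro w hw hden
    exfalso
    have h0 : w₀ + (r:ℂ) - w = s * (-(1 / s) * w + (w₀ + r) / s) := by field_simp; ring
    rw [hden, mul_zero] at h0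
    have hwr : w₀ + (r:ℂ) - w₀ = (r:ℂ) := by ring
    have hw2 : w = w₀ + (r:ℂ) := by linear_combination -h0
    simp only [Metric.mem_ball, Complex.dist_eq, hw2, hwr] at hw
    rw [Complex.norm_real, Real.norm_eq_abs, abs_of_pos hr] at hw
    linarith
  · intro hnc
    exact absurd (convex_ball w₀ r) hnc

end MoebiusAux
namespace MoebiusAux
open MvPolynomial Complex

lemma good_ext (w₀ : ℂ) (r : ℝ) (hr : 0 < r) :
    ∃ a b c d : ℂ, a * d - b * c = 1 ∧
      GoodM a b c d ((Metric.closedBall w₀ r)ᶜ) Hup ∧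
      GoodM d (-b) (-c) a Hup ((Metric.closedBall w₀ r)ᶜ) := by
  obtain ⟨s, hs⟩ := exists_sqrt (-(2 * r * I))
  have hrne : (r:ℂ) ≠ 0 := by exact_mod_cast ne_of_gt hr
  have h2rI : (-(2 * (r:ℂ) * I)) ≠ 0 :=
    neg_ne_zero.mpr (mul_ne_zero (mul_ne_zero two_ne_zero hrne) Complex.I_ne_zero)
  have hsne : s ≠ 0 := by
    intro h0; apply h2rI; rw [← hs, h0]; ring
  refine ⟨(w₀ + r) / s, (r - w₀) * I / s, 1 / s, -I / s, ?_, ⟨?_, ?_, ?_⟩, ⟨?_, ?_, ?_⟩⟩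
  · rw [div_mul_div_comm, div_mul_div_comm, div_sub_div_same, div_eq_one_iff_eq (mul_ne_zero hsne hsne)]
    linear_combination -hs
  · -- forward g1
    intro t ht hden
    have htI : t - I ≠ 0 := by
      intro h0
      have h1 : t - I = s * (1 / s * t + -I / s) := by field_simp; ring
      rw [h0] at h1
      have h2 : (1 / s * t + -I / s) = 0 := by
        by_contra hne
        exact (mul_ne_zero hsne hne) h1.symm
      exact hden h2
    have hφ : ((w₀ + r) / s * t + (r - w₀) * I / s) / (1 / s * t + -I / s) - w₀ =
        (r : ℂ) * (t + I) / (t - I) := by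
      rw [div_sub' hden]
      have hden2 : (1 / s * t + -I / s) = (t - I) / s := by field_simp; ring
      rw [hden2]
      have hnum2 : (w₀ + ↑r) / s * t + (r - w₀) * I / s - (t - I) / s * w₀ =
          ((r:ℂ) * (t + I)) / s := by
        field_simp
        ring
      rw [hnum2, div_s_cancel s _ _ hsne]
    simp only [Set.mem_compl_iff, Metric.mem_closedBall, not_le, Complex.dist_eq]
    rw [hφ]
    have habs : ‖t - I‖ < ‖t + I‖ := by
      apply abs_lt_abs_of_normSq (Complex.normSq_nonneg _)
      simp only [Complex.normSq_apply, Complex.sub_re, Complex.sub_im, Complex.add_re,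
        Complex.add_im, Complex.I_re, Complex.I_im]
      simp only [Hup, Set.mem_setOf_eq] at ht
      nlinarith
    rw [norm_div, norm_mul, Complex.norm_real, Real.norm_eq_abs, abs_of_pos hr]
    rw [lt_div_iff₀ (norm_pos_iff.mpr htI)]
    exact mul_lt_mul_of_pos_left habs hr
  · intro t ht hden
    exact not_convex_ext w₀ r hr
  · intro hnc
    exact absurd convex_Hup hnc
  · -- reverse g1
    intro w hw hden
    simp only [Hup, Set.mem_setOf_eq]
    have hφ : (-I / s * w + -((r - w₀) * I / s)) / (-(1 / s) * w + (w₀ + r) / s) =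
        (-I) * ((w - w₀) + r) / ((r:ℂ) - (w - w₀)) := by
      have hd : (-(1 / s) * w + (w₀ + r) / s) = ((r:ℂ) - (w - w₀)) / s := by
        field_simp; ring
      have hn : (-I / s * w + -((r - w₀) * I / s)) = ((-I) * ((w - w₀) + r)) / s := by
        field_simp; ring
      rw [hd, hn, div_s_cancel s _ _ hsne]
    rw [hφ]
    have hu : r < ‖w - w₀‖ := by
      simp only [Set.mem_compl_iff, Metric.mem_closedBall, not_le, Complex.dist_eq] at hw
      exact hw
    have hdne : ((r:ℂ) - (w - w₀)) ≠ 0 := by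
      intro h0
      have h1 : (w - w₀) = (r:ℂ) := by linear_combination -h0
      rw [h1, Complex.norm_real, Real.norm_eq_abs, abs_of_pos hr] at hu
      linarith
    rw [Complex.div_im]
    have hnsq : 0 < Complex.normSq ((r:ℂ) - (w - w₀)) := Complex.normSq_pos.mpr hdne
    have hnum : ((-I) * ((w - w₀) + r)).im = -((w - w₀).re + r) := by
      simp [Complex.mul_im, Complex.add_re]
    have hnre : ((-I) * ((w - w₀) + r)).re = (w - w₀).im := by
      simp [Complex.mul_re, Complex.add_im]
    have hdre : ((r:ℂ) - (w - w₀)).re = r - (w - w₀).re := by simp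
    have hdim : ((r:ℂ) - (w - w₀)).im = -(w - w₀).im := by simp
    rw [hnum, hnre, hdre, hdim, div_sub_div_same]
    apply div_pos ?_ hnsq
    have hlt : r ^ 2 < (w - w₀).re ^ 2 + (w - w₀).im ^ 2 := by
      have h2 : r ^ 2 < Complex.normSq (w - w₀) := by
        have h3 := Complex.sq_norm (w - w₀)
        nlinarith [norm_nonneg (w - w₀), hr.le]
      have h4 : Complex.normSq (w - w₀) = (w - w₀).re ^ 2 + (w - w₀).im ^ 2 := by
        rw [Complex.normSq_apply]; ring
      linarith [h4 ▸ h2]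
    nlinarith
  · intro w hw hden
    exfalso
    have h0 : w₀ + (r:ℂ) - w = s * (-(1 / s) * w + (w₀ + r) / s) := by field_simp; ring
    rw [hden, mul_zero] at h0
    have hw2 : w = w₀ + (r:ℂ) := by linear_combination -h0
    simp only [Set.mem_compl_iff, Metric.mem_closedBall, not_le, Complex.dist_eq, hw2] at hw
    have hwr : w₀ + (r:ℂ) - w₀ = (r:ℂ) := by ring
    rw [hwr, Complex.norm_real, Real.norm_eq_abs, abs_of_pos hr] at hw
    linarith
  · intro hnc
    constructor
    · intro h0
      exfalso
      apply (inv_ne_zero hsne)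
      have h1 : (1/s : ℂ) = s⁻¹ := one_div s
      rw [← h1, ← neg_neg (1/s : ℂ), h0, neg_zero]
    · intro hcne
      have : (-I / s) / (-(1 / s)) = I := by field_simp
      rw [this]
      simp [Hup]

end MoebiusAux
namespace MoebiusAux
open MvPolynomial Complex

lemma GoodM_comp (a₁ b₁ c₁ d₁ a₂ b₂ c₂ d₂ : ℂ) (C B D : Set ℂ)
    (h1 : GoodM a₁ b₁ c₁ d₁ C B) (h2 : GoodM a₂ b₂ c₂ d₂ B D) (hB : Convex ℝ B) :
    GoodM (a₁ * a₂ + b₁ * c₂) (a₁ * b₂ + b₁ * d₂) (c₁ * a₂ + d₁ * c₂) (c₁ * b₂ + d₁ * d₂)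
      C D := by
  obtain ⟨h1g1, h1g2, h1g3⟩ := h1
  obtain ⟨h2g1, h2g2, h2g3⟩ := h2
  have hden2 : ∀ z ∈ D, c₂ * z + d₂ ≠ 0 := by
    intro z hz h0
    exact (h2g2 z hz h0) hB
  refine ⟨?_, ?_, ?_⟩
  · intro z hz hden
    have hd2 := hden2 z hz
    set w : ℂ := (a₂ * z + b₂) / (c₂ * z + d₂) with hw
    have hwB : w ∈ B := h2g1 z hz hd2
    have hdenid : (c₁ * w + d₁) * (c₂ * z + d₂) =
        (c₁ * a₂ + d₁ * c₂) * z + (c₁ * b₂ + d₁ * d₂) := by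
      rw [hw, add_mul, mul_assoc, div_mul_cancel₀ _ hd2]
      ring
    have hnumid : (a₁ * w + b₁) * (c₂ * z + d₂) =
        (a₁ * a₂ + b₁ * c₂) * z + (a₁ * b₂ + b₁ * d₂) := by
      rw [hw, add_mul, mul_assoc, div_mul_cancel₀ _ hd2]
      ring
    have hcw : c₁ * w + d₁ ≠ 0 := by
      intro h0
      apply hden
      rw [← hdenid, h0, zero_mul]
    have hmem := h1g1 w hwB hcw
    have heq : (a₁ * w + b₁) / (c₁ * w + d₁) =
        ((a₁ * a₂ + b₁ * c₂) * z + (a₁ * b₂ + b₁ * d₂)) /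
          ((c₁ * a₂ + d₁ * c₂) * z + (c₁ * b₂ + d₁ * d₂)) := by
      rw [div_eq_div_iff hcw hden]
      calc (a₁ * w + b₁) * ((c₁ * a₂ + d₁ * c₂) * z + (c₁ * b₂ + d₁ * d₂))
          = (a₁ * w + b₁) * ((c₁ * w + d₁) * (c₂ * z + d₂)) := by rw [hdenid]
        _ = ((a₁ * w + b₁) * (c₂ * z + d₂)) * (c₁ * w + d₁) := by ring
        _ = ((a₁ * a₂ + b₁ * c₂) * z + (a₁ * b₂ + b₁ * d₂)) * (c₁ * w + d₁) := by
            rw [hnumid]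
    rw [← heq]
    exact hmem
  · intro z hz hden
    have hd2 := hden2 z hz
    set w : ℂ := (a₂ * z + b₂) / (c₂ * z + d₂) with hw
    have hwB : w ∈ B := h2g1 z hz hd2
    have hdenid : (c₁ * w + d₁) * (c₂ * z + d₂) =
        (c₁ * a₂ + d₁ * c₂) * z + (c₁ * b₂ + d₁ * d₂) := by
      rw [hw, add_mul, mul_assoc, div_mul_cancel₀ _ hd2]; ring
    have hcw : c₁ * w + d₁ = 0 := by
      have := hdenid
      rw [hden] at this
      exact (mul_eq_zero.mp this).resolve_right hd2
    exact h1g2 w hwB hcw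
  · intro hncD
    obtain ⟨h2a, h2b⟩ := h2g3 hncD
    by_cases hc2 : c₂ = 0
    · exact absurd hB (h2a hc2)
    · have hwinf : a₂ / c₂ ∈ B := h2b hc2
      have hdenid : (c₁ * (a₂ / c₂) + d₁) * c₂ = c₁ * a₂ + d₁ * c₂ := by
        field_simp
      constructor
      · intro h0
        have hcw : c₁ * (a₂ / c₂) + d₁ = 0 := by
          have h1 := hdenid
          rw [h0] at h1
          exact (mul_eq_zero.mp h1).resolve_right hc2
        exact h1g2 _ hwinf hcw
      · intro hcC
        have hcw : c₁ * (a₂ / c₂) + d₁ ≠ 0 := by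
          intro h0
          apply hcC
          rw [← hdenid, h0, zero_mul]
        have hmem := h1g1 _ hwinf hcw
        have hnumid : (a₁ * (a₂ / c₂) + b₁) * c₂ = a₁ * a₂ + b₁ * c₂ := by
          field_simp
        have heq : (a₁ * (a₂ / c₂) + b₁) / (c₁ * (a₂ / c₂) + d₁) =
            (a₁ * a₂ + b₁ * c₂) / (c₁ * a₂ + d₁ * c₂) := by
          rw [div_eq_div_iff hcw hcC]
          calc (a₁ * (a₂ / c₂) + b₁) * (c₁ * a₂ + d₁ * c₂)
              = (a₁ * (a₂ / c₂) + b₁) * ((c₁ * (a₂ / c₂) + d₁) * c₂) := by rw [hdenid]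
            _ = ((a₁ * (a₂ / c₂) + b₁) * c₂) * (c₁ * (a₂ / c₂) + d₁) := by ring
            _ = (a₁ * a₂ + b₁ * c₂) * (c₁ * (a₂ / c₂) + d₁) := by rw [hnumid]
        rw [← heq]
        exact hmem

lemma GoodM_congr {a b c d a' b' c' d' : ℂ} {C D : Set ℂ} (h : GoodM a b c d C D)
    (ha : a = a') (hb : b = b') (hc : c = c') (hd : d = d') : GoodM a' b' c' d' C D := by
  subst ha; subst hb; subst hc; subst hd; exact h

lemma good_to_Hup (C : Set ℂ) (hC : IsCircularDomain C) :
    ∃ a b c d : ℂ, a * d - b * c = 1 ∧ GoodM a b c d C Hup ∧ GoodM d (-b) (-c) a Hup C := by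
  rcases hC with ⟨w, r, hr, rfl⟩ | ⟨w, r, hr, rfl⟩ | ⟨a₀, b₀, ha₀, rfl⟩
  · exact good_ball w r hr
  · exact good_ext w r hr
  · exact good_halfplane a₀ b₀ ha₀

lemma exists_good_pair (C D : Set ℂ) (hC : IsCircularDomain C) (hD : IsCircularDomain D) :
    ∃ a b c d : ℂ, a * d - b * c = 1 ∧ GoodM a b c d C D ∧
      GoodM d (-b) (-c) a D C := by
  obtain ⟨aC, bC, cC, dC, hdetC, hC1, hC2⟩ := good_to_Hup C hC
  obtain ⟨aD, bD, cD, dD, hdetD, hD1, hD2⟩ := good_to_Hup D hD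
  refine ⟨aC * dD + bC * (-cD), aC * (-bD) + bC * aD, cC * dD + dC * (-cD),
    cC * (-bD) + dC * aD, ?_, ?_, ?_⟩
  · have h : (aC * dD + bC * (-cD)) * (cC * (-bD) + dC * aD) -
        (aC * (-bD) + bC * aD) * (cC * dD + dC * (-cD)) =
        (aC * dC - bC * cC) * (aD * dD - bD * cD) := by ring
    rw [h, hdetC, hdetD, mul_one]
  · exact GoodM_comp aC bC cC dC dD (-bD) (-cD) aD C Hup D hC1 hD2 convex_Hup
  · have h := GoodM_comp aD bD cD dD dC (-bC) (-cC) aC D Hup C hD1 hC2 convex_Hup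
    exact GoodM_congr h (by ring) (by ring) (by ring) (by ring)

end MoebiusAux

namespace MoebiusAux
open MvPolynomial

variable {n : ℕ}

lemma nset_mapsTo (κ : Fin n →₀ ℕ) (a b c d : Fin n → ℂ) (Cs Ds : Fin n → Set ℂ)
    (hC : ∀ i, IsCircularDomain (Cs i)) (hD : ∀ i, IsCircularDomain (Ds i))
    (hdet : ∀ i, a i * d i - b i * c i = 1)
    (hGood : ∀ i, GoodM (a i) (b i) (c i) (d i) (Cs i) (Ds i)) :
    Set.MapsTo (moebiusMap a b c d κ) (NSet κ Cs) (NSet κ Ds) := by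
  classical
  intro f hf
  obtain ⟨hfdeg, hfst, hfnc⟩ := hf
  have hopen : ∀ i, IsOpen (Cs i) := fun i => circ_open (hC i)
  have hne : ∀ i, (Cs i).Nonempty := fun i => circ_nonempty (hC i)
  refine ⟨fun i => degreeOf_moebius_le a b c d κ f hfdeg i, ?_, ?_⟩
  · -- stability
    intro z hz
    rw [eval_moebius]
    apply master κ Cs hopen hne f hfst hfdeg
    intro i
    by_cases hv : c i * z i + d i = 0
    · right
      have hnc : ¬ Convex ℝ (Cs i) := (hGood i).2.1 (z i) (hz i) hv
      exact ⟨hv, num_ne_zero (a i) (b i) (c i) (d i) (z i) (hdet i) hv,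
        nonconvex_circ (hC i) hnc, hfnc i hnc⟩
    · left
      exact ⟨hv, (hGood i).1 (z i) (hz i) hv⟩
  · -- exact degree at nonconvex targets
    intro j hjnc
    refine le_antisymm (degreeOf_moebius_le a b c d κ f hfdeg j) ?_
    have hych : ∀ i, ∃ yi, yi ∈ Ds i ∧ c i * yi + d i ≠ 0 := by
      intro i
      by_cases hci : c i = 0
      · obtain ⟨z, hz⟩ := circ_nonempty (hD i)
        refine ⟨z, hz, ?_⟩
        rw [hci, zero_mul, zero_add]
        intro h0
        have := hdet i
        rw [h0, hci] at this
        simp at this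
      · obtain ⟨z, hz, hzp⟩ := open_ne_point (circ_open (hD i)) (circ_nonempty (hD i))
          (-(d i) / c i)
        refine ⟨z, hz, ?_⟩
        intro h0
        apply hzp
        field_simp
        linear_combination h0
    choose y hy1 hy2 using hych
    have hext := ext1_moebius_eval a b c d κ f hfdeg j y
    have hTne : Tval κ (Function.update (fun i => a i * y i + b i) j (a j))
        (Function.update (fun i => c i * y i + d i) j (c j)) f ≠ 0 := by
      apply master κ Cs hopen hne f hfst hfdeg
      intro i
      by_cases hij : i = j
      · subst hij
        rw [Function.update_self, Function.update_self]
        obtain ⟨hg3a, hg3b⟩ := (hGood i).2.2 hjnc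
        by_cases hci : c i = 0
        · right
          have hane : a i ≠ 0 := by
            intro h0
            have := hdet i
            rw [h0, hci] at this
            simp at this
          have hnc := hg3a hci
          exact ⟨hci, hane, nonconvex_circ (hC i) hnc, hfnc i hnc⟩
        · left
          exact ⟨hci, hg3b hci⟩
      · rw [Function.update_of_ne hij, Function.update_of_ne hij]
        left
        exact ⟨hy2 i, (hGood i).1 (y i) (hy1 i) (hy2 i)⟩
    rw [← hext] at hTne
    apply le_degreeOf_of_ext1_ne_zero
    intro h0
    rw [h0] at hTne
    simp at hTne

end MoebiusAux


open MoebiusAux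

/-- **(Lemma 1).** For open circular domains `C₁,…,Cₙ` and `D₁,…,Dₙ` and `κ ∈ ℕⁿ` there
are Möbius transformations `φ_i = (a_i ζ + b_i)/(c_i ζ + d_i)` with `a_i d_i − b_i c_i = 1`
such that the associated invertible linear transformation
`Φ_κ : ℂ_κ[z₁,…,zₙ] → ℂ_κ[z₁,…,zₙ]` restricts to a bijection between
`𝒩_κ(C₁,…,Cₙ)` and `𝒩_κ(D₁,…,Dₙ)`. -/
theorem moebius_bijection_between_stability_classes (n : ℕ) (κ : Fin n →₀ ℕ)
    (Cs Ds : Fin n → Set ℂ)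
    (hC : ∀ i, IsCircularDomain (Cs i)) (hD : ∀ i, IsCircularDomain (Ds i)) :
    ∃ a b c d : Fin n → ℂ, (∀ i, a i * d i - b i * c i = 1) ∧
      Set.BijOn (moebiusMap a b c d κ)
        {f : MvPolynomial (Fin n) ℂ | ∀ i, f.degreeOf i ≤ κ i}
        {f : MvPolynomial (Fin n) ℂ | ∀ i, f.degreeOf i ≤ κ i} ∧
      Set.BijOn (moebiusMap a b c d κ) (NSet κ Cs) (NSet κ Ds) := by
  classical
  choose a b c d hdet hGood hGoodInv using
    fun i => exists_good_pair (Cs i) (Ds i) (hC i) (hD i)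
  have hdet' : ∀ i, d i * a i - (-(b i)) * (-(c i)) = 1 := by
    intro i; linear_combination hdet i
  set Ψ := moebiusMap (fun i => d i) (fun i => -(b i)) (fun i => -(c i)) (fun i => a i) κ
    with hΨ
  have hcomp1 : ∀ f : MvPolynomial (Fin n) ℂ, (∀ i, f.degreeOf i ≤ κ i) →
      Ψ (moebiusMap a b c d κ f) = f := fun f hf => moebius_comp a b c d κ hdet f hf
  have hcomp2 : ∀ g : MvPolynomial (Fin n) ℂ, (∀ i, g.degreeOf i ≤ κ i) →
      moebiusMap a b c d κ (Ψ g) = g := by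
    intro g hg
    have h := moebius_comp (fun i => d i) (fun i => -(b i)) (fun i => -(c i)) (fun i => a i)
      κ hdet' g hg
    rw [hΨ]
    simpa [neg_neg] using h
  have hΨdeg : ∀ g : MvPolynomial (Fin n) ℂ, (∀ i, g.degreeOf i ≤ κ i) →
      ∀ i, (Ψ g).degreeOf i ≤ κ i := by
    intro g hg
    exact degreeOf_moebius_le _ _ _ _ κ g hg
  refine ⟨a, b, c, d, hdet, ?_, ?_⟩
  · refine ⟨?_, ?_, ?_⟩
    · intro f hf
      exact fun i => degreeOf_moebius_le a b c d κ f hf i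
    · intro f hf g hg heq
      calc f = Ψ (moebiusMap a b c d κ f) := (hcomp1 f hf).symm
        _ = Ψ (moebiusMap a b c d κ g) := by rw [heq]
        _ = g := hcomp1 g hg
    · intro g hg
      exact ⟨Ψ g, hΨdeg g hg, hcomp2 g hg⟩
  · have hMT : Set.MapsTo (moebiusMap a b c d κ) (NSet κ Cs) (NSet κ Ds) :=
      nset_mapsTo κ a b c d Cs Ds hC hD hdet hGood
    have hMT' : Set.MapsTo Ψ (NSet κ Ds) (NSet κ Cs) :=
      nset_mapsTo κ (fun i => d i) (fun i => -(b i)) (fun i => -(c i)) (fun i => a i)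
        Ds Cs hD hC hdet' hGoodInv
    refine ⟨hMT, ?_, ?_⟩
    · intro f hf g hg heq
      calc f = Ψ (moebiusMap a b c d κ f) := (hcomp1 f hf.1).symm
        _ = Ψ (moebiusMap a b c d κ g) := by rw [heq]
        _ = g := hcomp1 g hg.1
    · intro g hg
      exact ⟨Ψ g, hMT' hg, hcomp2 g hg.1⟩
end

section
/- Let n ≥ 1, let 1 ≤ i,j ≤ n, and let J ≥ 0 be a real number. If f ∈ ℂ[z₁,…,zₙ] is ℍ_{π/2}-stable, then the polynomial cosh(J)·f + sinh(J)·(∂²f/∂z_i∂z_j) is either ℍ_{π/2}-stable or identically zero. -/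
namespace LeeYangAux

open Polynomial Metric
open scoped Polynomial.Bivariate

variable {n : ℕ}


/-- real part of inverse is positive for right-half-plane elements -/
lemma re_inv_pos {w : ℂ} (hw : 0 < w.re) : 0 < (w⁻¹).re := by
  rw [Complex.inv_re]
  have hw0 : w ≠ 0 := fun h => by simp [h] at hw
  exact div_pos hw (Complex.normSq_pos.mpr hw0)

lemma eval_factored_ne_zero (A : ℂ) (hA : A ≠ 0) (s : Multiset ℂ) (y : ℂ)
    (h : ∀ ρ ∈ s, y ≠ ρ) :
    eval y (C A * (s.map fun ρ => X - C ρ).prod) ≠ 0 := by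
  rw [eval_mul, eval_C, eval_multiset_prod, Multiset.map_map]
  refine mul_ne_zero hA (Multiset.prod_ne_zero ?_)
  intro h0
  rw [Multiset.mem_map] at h0
  obtain ⟨ρ, hρ, he⟩ := h0
  simp only [Function.comp_apply, eval_sub, eval_X, eval_C] at he
  exact h ρ hρ (by linear_combination he)

lemma logderiv_eq (A : ℂ) (hA : A ≠ 0) (s : Multiset ℂ) (y : ℂ)
    (h : ∀ ρ ∈ s, y ≠ ρ) :
    eval y (derivative (C A * (s.map fun ρ => X - C ρ).prod))
      = eval y (C A * (s.map fun ρ => X - C ρ).prod) * (s.map fun ρ => (y - ρ)⁻¹).sum := by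
  induction s using Multiset.induction_on with
  | empty => simp
  | cons ρ t ih =>
    have hyρ : y - ρ ≠ 0 := sub_ne_zero.mpr (h ρ (Multiset.mem_cons_self ρ t))
    have ht : ∀ σ ∈ t, y ≠ σ := fun σ hσ => h σ (Multiset.mem_cons_of_mem hσ)
    have key : C A * ((ρ ::ₘ t).map fun τ => X - C τ).prod
        = (X - C ρ) * (C A * (t.map fun τ => X - C τ).prod) := by
      rw [Multiset.map_cons, Multiset.prod_cons]; ring
    rw [key, derivative_mul]
    simp only [eval_add, eval_mul]
    rw [ih ht]
    have hq1 : eval y (C A * (t.map fun τ => X - C τ).prod) ≠ 0 :=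
      eval_factored_ne_zero A hA t y ht
    simp only [derivative_sub, derivative_X, derivative_C, sub_zero, eval_one,
      Multiset.map_cons, Multiset.sum_cons, eval_sub, eval_X, eval_C]
    field_simp
    simp only [eval_mul, eval_C]
    ring


/-- A univariate polynomial nonvanishing on the open right half-plane. -/
def Stb (q : Polynomial ℂ) : Prop := ∀ x : ℂ, 0 < x.re → eval x q ≠ 0

lemma Stb.ne_zero {q : Polynomial ℂ} (hq : Stb q) : q ≠ 0 := by
  intro h
  exact hq 1 (by norm_num) (by simp [h])

lemma Stb.roots_re_nonpos {q : Polynomial ℂ} (hq : Stb q) {ρ : ℂ} (hρ : ρ ∈ q.roots) :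
    ρ.re ≤ 0 := by
  by_contra h
  push_neg at h
  exact hq ρ h (isRoot_of_mem_roots hρ)

lemma Stb.eval_derivative_eq {q : Polynomial ℂ} (hq : Stb q) {y : ℂ} (hy : eval y q ≠ 0) :
    eval y (derivative q) = eval y q * (q.roots.map fun ρ => (y - ρ)⁻¹).sum := by
  have hL : q.leadingCoeff ≠ 0 := leadingCoeff_ne_zero.mpr hq.ne_zero
  have hfac := (IsAlgClosed.splits q).eq_prod_roots
  have hroots : ∀ ρ ∈ q.roots, y ≠ ρ := by
    intro ρ hρ h
    subst h
    exact hy (isRoot_of_mem_roots hρ)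
  calc eval y (derivative q)
      = eval y (derivative (C q.leadingCoeff * (q.roots.map fun a => X - C a).prod)) := by
        rw [← hfac]
    _ = eval y (C q.leadingCoeff * (q.roots.map fun a => X - C a).prod)
          * (q.roots.map fun ρ => (y - ρ)⁻¹).sum := logderiv_eq _ hL _ y hroots
    _ = eval y q * (q.roots.map fun ρ => (y - ρ)⁻¹).sum := by rw [← hfac]

lemma Stb.ratio_re_nonneg {q : Polynomial ℂ} (hq : Stb q) {y : ℂ} (hy : 0 < y.re) :
    0 ≤ (eval y (derivative q) / eval y q).re := by
  have hy0 : eval y q ≠ 0 := hq y hy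
  rw [hq.eval_derivative_eq hy0, mul_comm, mul_div_assoc, div_self hy0, mul_one]
  have : ∀ w ∈ q.roots.map fun ρ => (y - ρ)⁻¹, 0 < w.re := by
    intro w hw
    rw [Multiset.mem_map] at hw
    obtain ⟨ρ, hρ, rfl⟩ := hw
    refine re_inv_pos ?_
    have := hq.roots_re_nonpos hρ
    simp only [Complex.sub_re]
    linarith
  revert this
  generalize (q.roots.map fun ρ => (y - ρ)⁻¹) = m
  intro hm
  induction m using Multiset.induction_on with
  | empty => simp
  | cons a t ih =>
    simp only [Multiset.sum_cons, Complex.add_re]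
    have ha := hm a (Multiset.mem_cons_self a t)
    have ht := ih fun w hw => hm w (Multiset.mem_cons_of_mem hw)
    linarith

lemma Stb.ratio_re_pos {q : Polynomial ℂ} (hq : Stb q) (hd : 1 ≤ q.natDegree)
    {y : ℂ} (hy : 0 < y.re) :
    0 < (eval y (derivative q) / eval y q).re := by
  have hy0 : eval y q ≠ 0 := hq y hy
  rw [hq.eval_derivative_eq hy0, mul_comm, mul_div_assoc, div_self hy0, mul_one]
  have hcard : Multiset.card q.roots = q.natDegree :=
    splits_iff_card_roots.mp (IsAlgClosed.splits q)
  have hpos : ∀ w ∈ q.roots.map fun ρ => (y - ρ)⁻¹, 0 < w.re := by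
    intro w hw
    rw [Multiset.mem_map] at hw
    obtain ⟨ρ, hρ, rfl⟩ := hw
    refine re_inv_pos ?_
    have := hq.roots_re_nonpos hρ
    simp only [Complex.sub_re]
    linarith
  have hne : q.roots.map (fun ρ => (y - ρ)⁻¹) ≠ 0 := by
    intro h
    have := congrArg Multiset.card h
    rw [Multiset.card_map, hcard] at this
    simp at this
    omega
  revert hpos hne
  generalize (q.roots.map fun ρ => (y - ρ)⁻¹) = m
  intro hm hne
  induction m using Multiset.induction_on with
  | empty => simp at hne
  | cons a t ih =>
    simp only [Multiset.sum_cons, Complex.add_re]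
    have ha := hm a (Multiset.mem_cons_self a t)
    rcases eq_or_ne t 0 with rfl | htne
    · simpa using ha
    · have ht : 0 < t.sum.re :=
        ih (fun w hw => hm w (Multiset.mem_cons_of_mem hw)) htne
      linarith

lemma Stb.eval_derivative_ne_zero {q : Polynomial ℂ} (hq : Stb q) (hd : 1 ≤ q.natDegree)
    {y : ℂ} (hy : 0 < y.re) : eval y (derivative q) ≠ 0 := by
  intro h
  have := hq.ratio_re_pos hd hy
  rw [h] at this
  simp at this


lemma re_eq_zero_on_ball {g : ℂ → ℂ} {x₀ : ℂ} {δ : ℝ} (hδ : 0 < δ)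
    (hg : DifferentiableOn ℂ g (ball x₀ δ))
    (hre : ∀ x ∈ ball x₀ δ, 0 ≤ (g x).re) (h0 : g x₀ = 0) :
    ∀ x ∈ ball x₀ δ, (g x).re = 0 := by
  have han : AnalyticOnNhd ℂ g (ball x₀ δ) := hg.analyticOnNhd isOpen_ball
  have hx₀ : x₀ ∈ ball x₀ δ := mem_ball_self hδ
  rcases han.is_constant_or_isOpen (convex_ball x₀ δ).isPreconnected with ⟨w, hw⟩ | hopen
  · intro x hx
    rw [hw x hx, ← hw x₀ hx₀, h0, Complex.zero_re]
  · exfalso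
    have himg : IsOpen (g '' ball x₀ δ) := hopen _ subset_rfl isOpen_ball
    have h0mem : (0 : ℂ) ∈ g '' ball x₀ δ := ⟨x₀, hx₀, h0⟩
    obtain ⟨ε, hε, hsub⟩ := isOpen_iff.mp himg 0 h0mem
    have hz : ((-(ε/2) : ℝ) : ℂ) ∈ Metric.ball (0:ℂ) ε := by
      simp only [mem_ball, dist_zero_right, Complex.norm_real, Real.norm_eq_abs]
      rw [abs_neg, abs_of_pos (by linarith)]
      linarith
    obtain ⟨x, hx, hgx⟩ := hsub hz
    have := hre x hx
    rw [hgx] at this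
    simp only [Complex.ofReal_re] at this
    linarith

lemma const_on_ball_of_line {g : ℂ → ℂ} {w : ℂ} (hw : w ≠ 0) {x₀ : ℂ} {δ : ℝ} (hδ : 0 < δ)
    (hg : DifferentiableOn ℂ g (ball x₀ δ))
    (hline : ∀ x ∈ ball x₀ δ, ∃ r : ℝ, g x = w * r) :
    ∀ x ∈ ball x₀ δ, g x = g x₀ := by
  have han : AnalyticOnNhd ℂ g (ball x₀ δ) := hg.analyticOnNhd isOpen_ball
  have hx₀ : x₀ ∈ ball x₀ δ := mem_ball_self hδ
  rcases han.is_constant_or_isOpen (convex_ball x₀ δ).isPreconnected with ⟨v, hv⟩ | hopen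
  · intro x hx; rw [hv x hx, ← hv x₀ hx₀]
  · exfalso
    have himg : IsOpen (g '' ball x₀ δ) := hopen _ subset_rfl isOpen_ball
    have hmem : g x₀ ∈ g '' ball x₀ δ := ⟨x₀, hx₀, rfl⟩
    obtain ⟨ε, hε, hsub⟩ := isOpen_iff.mp himg _ hmem
    obtain ⟨r₀, hr₀⟩ := hline x₀ hx₀
    have hwn : (0:ℝ) < ‖w‖ := norm_pos_iff.mpr hw
    set c : ℝ := ε/2/‖w‖ with hc
    have hcpos : 0 < c := by positivity
    have hpmem : g x₀ + (c : ℂ) * (w * Complex.I) ∈ Metric.ball (g x₀) ε := by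
      rw [mem_ball, dist_comm, dist_self_add_right]
      rw [norm_mul, norm_mul, Complex.norm_real, Complex.norm_I, mul_one,
        Real.norm_eq_abs, abs_of_pos hcpos, hc]
      rw [div_mul_cancel₀ _ (ne_of_gt hwn)]
      linarith
    obtain ⟨x, hx, hgx⟩ := hsub hpmem
    obtain ⟨r, hr⟩ := hline x hx
    rw [hr] at hgx
    rw [hr₀] at hgx
    have : (r : ℂ) = (r₀ : ℂ) + (c : ℂ) * Complex.I := by
      apply mul_left_cancel₀ hw
      rw [hgx]  -- maybe ring_nf needed
      ring
    have him := congrArg Complex.im this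
    simp only [Complex.ofReal_im, Complex.add_im, Complex.mul_im, Complex.ofReal_re,
      Complex.I_im, Complex.I_re, Complex.ofReal_im, mul_one, mul_zero, add_zero, zero_add] at him
    linarith


/-- generic: `eval₂` into a polynomial ring sends `pderiv k` to `derivative`,
provided variable `k` goes to `X` and all others go to constants. -/
lemma derivative_eval₂ {A : Type*} [CommSemiring A] (c : ℂ →+* Polynomial A)
    (hc : ∀ a, derivative (c a) = 0)
    (g : Fin n → Polynomial A) (k : Fin n) (hk : g k = X)
    (hg : ∀ l, l ≠ k → derivative (g l) = 0)
    (f : MvPolynomial (Fin n) ℂ) :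
    MvPolynomial.eval₂ c g (MvPolynomial.pderiv k f)
      = derivative (MvPolynomial.eval₂ c g f) := by
  induction f using MvPolynomial.induction_on with
  | C a => simp [hc a]
  | add p q hp hq => simp [hp, hq]
  | mul_X p l hp =>
    rw [MvPolynomial.pderiv_mul, MvPolynomial.pderiv_X]
    rw [MvPolynomial.eval₂_add, MvPolynomial.eval₂_mul, MvPolynomial.eval₂_mul,
      MvPolynomial.eval₂_mul, hp, derivative_mul]
    by_cases hlk : l = k
    · subst hlk
      simp only [Pi.single_eq_same, MvPolynomial.eval₂_one, MvPolynomial.eval₂_X, hk,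
        derivative_X, mul_one]
    · rw [Pi.single_eq_of_ne hlk]
      simp only [MvPolynomial.eval₂_zero, mul_zero, add_zero, MvPolynomial.eval₂_X]
      rw [hg l hlk, mul_zero, add_zero]

/-- slice of a multivariate polynomial in a single variable -/
noncomputable def slice (k : Fin n) (z : Fin n → ℂ) :
    MvPolynomial (Fin n) ℂ →+* Polynomial ℂ :=
  MvPolynomial.eval₂Hom Polynomial.C (fun l => if l = k then X else Polynomial.C (z l))

lemma eval_slice (k : Fin n) (z : Fin n → ℂ) (f : MvPolynomial (Fin n) ℂ) (t : ℂ) :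
    eval t (slice k z f) = MvPolynomial.eval (Function.update z k t) f := by
  have : (Polynomial.evalRingHom t).comp (slice k z)
      = (MvPolynomial.eval (Function.update z k t) : MvPolynomial (Fin n) ℂ →+* ℂ) := by
    apply MvPolynomial.ringHom_ext
    · intro r
      simp [slice]
    · intro l
      simp only [RingHom.comp_apply, slice, MvPolynomial.eval₂Hom_X', MvPolynomial.eval_X]
      by_cases hlk : l = k
      · subst hlk
        simp [Function.update_self]
      · simp [hlk, Function.update_of_ne hlk]
  have := congrArg (fun φ => φ f) this
  simpa using this

lemma slice_pderiv (k : Fin n) (z : Fin n → ℂ) (f : MvPolynomial (Fin n) ℂ) :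
    slice k z (MvPolynomial.pderiv k f) = derivative (slice k z f) := by
  apply derivative_eval₂
  · intro a; exact derivative_C
  · simp
  · intro l hl
    simp [if_neg hl]


/-- bivariate representation: variable `j` is the outer variable `Y`,
variable `i` the inner one. -/
noncomputable def biv (i j : Fin n) (z : Fin n → ℂ) :
    MvPolynomial (Fin n) ℂ →+* ℂ[X][Y] :=
  MvPolynomial.eval₂Hom (Polynomial.C.comp Polynomial.C)
    (fun l => if l = j then (X : ℂ[X][Y]) else
      if l = i then Polynomial.C X else Polynomial.C (Polynomial.C (z l)))

lemma biv_map_eval (i j : Fin n) (hij : i ≠ j) (z : Fin n → ℂ) (f : MvPolynomial (Fin n) ℂ)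
    (x : ℂ) :
    (biv i j z f).map (evalRingHom x) = slice j (Function.update z i x) f := by
  have : (mapRingHom (evalRingHom x)).comp (biv i j z)
      = slice j (Function.update z i x) := by
    apply MvPolynomial.ringHom_ext
    · intro r
      simp [biv, slice]
    · intro l
      simp only [RingHom.comp_apply, biv, slice, MvPolynomial.eval₂Hom_X']
      by_cases hlj : l = j
      · subst hlj
        simp
      · rw [if_neg hlj, if_neg hlj]
        by_cases hli : l = i
        · subst hli
          simp [Function.update_self]
        · simp [if_neg hli, Function.update_of_ne hli]
  have := congrArg (fun φ => φ f) this
  simpa using this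

lemma biv_pderiv (i j : Fin n) (hij : i ≠ j) (z : Fin n → ℂ) (f : MvPolynomial (Fin n) ℂ) :
    biv i j z (MvPolynomial.pderiv j f) = derivative (biv i j z f) := by
  apply derivative_eval₂
  · intro a; exact derivative_C
  · simp
  · intro l hl
    rw [if_neg hl]
    by_cases hli : l = i
    · subst hli; simp
    · rw [if_neg hli]; exact derivative_C


/- multiset auxiliaries -/
lemma msum_re (m : Multiset ℂ) : m.sum.re = (m.map Complex.re).sum := by
  induction m using Multiset.induction_on with
  | empty => simp
  | cons a t ih => simp [ih]

lemma msum_nonpos (m : Multiset ℝ) (h : ∀ a ∈ m, a ≤ 0) : m.sum ≤ 0 := by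
  induction m using Multiset.induction_on with
  | empty => simp
  | cons a t ih =>
    simp only [Multiset.sum_cons]
    have := h a (Multiset.mem_cons_self a t)
    have := ih fun b hb => h b (Multiset.mem_cons_of_mem hb)
    linarith

lemma mall_zero (m : Multiset ℝ) (h : ∀ a ∈ m, a ≤ 0) (h0 : m.sum = 0) :
    ∀ a ∈ m, a = 0 := by
  induction m using Multiset.induction_on with
  | empty => simp
  | cons a t ih =>
    intro b hb
    simp only [Multiset.sum_cons] at h0
    have ha := h a (Multiset.mem_cons_self a t)
    have ht : ∀ c ∈ t, c ≤ 0 := fun c hc => h c (Multiset.mem_cons_of_mem hc)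
    have hts := msum_nonpos t ht
    rcases Multiset.mem_cons.mp hb with rfl | hbt
    · linarith
    · exact ih ht (by linarith) b hbt

lemma mprod_neg_imag (R : Multiset ℂ) (h : ∀ ρ ∈ R, ρ.re = 0) :
    ∃ r : ℝ, (R.map fun a => -a).prod = Complex.I ^ (Multiset.card R) * r := by
  induction R using Multiset.induction_on with
  | empty => exact ⟨1, by simp⟩
  | cons a t ih =>
    obtain ⟨r, hr⟩ := ih fun ρ hρ => h ρ (Multiset.mem_cons_of_mem hρ)
    refine ⟨(-a.im) * r, ?_⟩
    have ha : a.re = 0 := h a (Multiset.mem_cons_self a t)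
    have hna : -a = Complex.I * ((-a.im : ℝ) : ℂ) := by
      apply Complex.ext <;> simp [ha]
    rw [Multiset.map_cons, Multiset.prod_cons, hr, hna, Multiset.card_cons, pow_succ]
    push_cast
    ring


/-- the roots data of the reflected slice -/
lemma slice_roots_data (B : ℂ[X][Y]) (m : ℕ) (hm : m = B.natDegree) (hm1 : 1 ≤ m)
    (hB : ∀ x y : ℂ, 0 < x.re → 0 < y.re → eval y (B.map (evalRingHom x)) ≠ 0)
    (x : ℂ) (hxre : 0 < x.re) (hc0x : eval x (B.coeff 0) ≠ 0) :
    ∃ R : Multiset ℂ, Multiset.card R = m ∧ (∀ ρ ∈ R, ρ.re ≤ 0) ∧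
      R.sum = -(eval x (B.coeff 1) / eval x (B.coeff 0)) ∧
      (R.map fun a => -a).prod = eval x (B.coeff m) / eval x (B.coeff 0) := by
  set Bx := B.map (evalRingHom x) with hBx
  have hcoeffBx : ∀ k, Bx.coeff k = eval x (B.coeff k) := by
    intro k; rw [hBx, coeff_map]; rfl
  have hBxdeg : Bx.natDegree ≤ m := by rw [hm]; exact natDegree_map_le
  have hBxStb : Stb Bx := fun y hy => hB x y hxre hy
  set Ux := reflect m Bx with hUx
  have hUcoeff : ∀ k, k ≤ m → Ux.coeff k = Bx.coeff (m - k) := by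
    intro k hk; rw [hUx, coeff_reflect, revAt_le hk]
  have hUm : Ux.coeff m = eval x (B.coeff 0) := by
    rw [hUcoeff m le_rfl, Nat.sub_self, hcoeffBx]
  have hUmne : Ux.coeff m ≠ 0 := by rw [hUm]; exact hc0x
  have hUdegle : Ux.natDegree ≤ m := by
    rw [natDegree_le_iff_coeff_eq_zero]
    intro i hi
    rw [hUx, coeff_reflect, ← revAtFun_eq, revAtFun, if_neg (by omega)]
    exact coeff_eq_zero_of_natDegree_lt (lt_of_le_of_lt hBxdeg hi)
  have hUdeg : Ux.natDegree = m := le_antisymm hUdegle (le_natDegree_of_ne_zero hUmne)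
  have hUne : Ux ≠ 0 := fun h => hUmne (by simp [h])
  have heval : ∀ u : ℂ, u ≠ 0 → eval u Ux = u ^ m * eval u⁻¹ Bx := by
    intro u hu
    have hinv : u⁻¹ ≠ 0 := inv_ne_zero hu
    have : Invertible (u⁻¹) := invertibleOfNonzero hinv
    have h := eval₂_reflect_mul_pow (RingHom.id ℂ) (u⁻¹) m Bx hBxdeg
    rw [invOf_eq_inv, inv_inv] at h
    have h' : eval u (reflect m Bx) * u⁻¹ ^ m = eval u⁻¹ Bx := h
    have hupow : (u : ℂ) ^ m ≠ 0 := pow_ne_zero _ hu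
    rw [← h', hUx]
    field_simp
    rw [one_div, inv_pow, mul_assoc, mul_inv_cancel₀ hupow, mul_one]
  have hUStb : Stb Ux := by
    intro u hu
    have hu0 : u ≠ 0 := fun h => by simp [h] at hu
    rw [heval u hu0]
    exact mul_ne_zero (pow_ne_zero _ hu0) (hBxStb _ (re_inv_pos hu))
  set R := Ux.roots with hR
  have hcard : Multiset.card R = m := by
    rw [hR, splits_iff_card_roots.mp (IsAlgClosed.splits Ux), hUdeg]
  have hfac := (IsAlgClosed.splits Ux).eq_prod_roots
  have hlead : Ux.leadingCoeff = eval x (B.coeff 0) := by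
    rw [leadingCoeff, hUdeg, hUm]
  refine ⟨R, hcard, fun ρ hρ => hUStb.roots_re_nonpos hρ, ?_, ?_⟩
  · -- sum of roots
    have h1 : Ux.coeff (m - 1) = eval x (B.coeff 1) := by
      rw [hUcoeff _ (by omega), (by omega : m - (m - 1) = 1), hcoeffBx]
    have h2 := congrArg (fun p => p.coeff (m - 1)) hfac
    simp only [coeff_C_mul] at h2
    have h3 : (Multiset.map (fun a => X - C a) R).prod.coeff (m - 1) = -R.sum := by
      have := multiset_prod_X_sub_C_coeff_card_pred R (by rw [hcard]; omega)
      rwa [hcard] at this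
    rw [h1, h3, hlead] at h2
    rw [h2]
    field_simp
  · -- product of roots
    have h1 : Ux.coeff 0 = eval x (B.coeff m) := by
      rw [hUcoeff _ (by omega), Nat.sub_zero, hcoeffBx]
    have h2 : eval x (B.coeff m) = Ux.leadingCoeff * (Multiset.map (fun a => -a) R).prod := by
      conv_lhs => rw [← h1, coeff_zero_eq_eval_zero]
      rw [hfac, eval_mul, eval_C, eval_multiset_prod, Multiset.map_map]
      congr 2
      apply Multiset.map_congr rfl
      intro a _
      simp
    rw [h2, hlead]
    field_simp

lemma coeffs_vanish_of_slice_const (B : ℂ[X][Y])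
    (hB : ∀ x y : ℂ, 0 < x.re → 0 < y.re → eval y (B.map (evalRingHom x)) ≠ 0)
    (x₀ : ℂ) (hx₀ : 0 < x₀.re) (h0 : ∀ k, 1 ≤ k → eval x₀ (B.coeff k) = 0) :
    ∀ k, 1 ≤ k → B.coeff k = 0 := by
  by_contra hcon
  push_neg at hcon
  obtain ⟨k₀, hk₀1, hk₀⟩ := hcon
  have hB0 : B ≠ 0 := fun h => hk₀ (by simp [h])
  set m := B.natDegree with hm
  have hm1 : 1 ≤ m := le_trans hk₀1 (le_natDegree_of_ne_zero hk₀)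
  have hcm : B.coeff m ≠ 0 := by
    rw [hm]; exact fun h => hB0 (leadingCoeff_eq_zero.mp h)
  have hc₀x₀ : eval x₀ (B.coeff 0) ≠ 0 := by
    have hS : B.map (evalRingHom x₀) = C (eval x₀ (B.coeff 0)) := by
      ext k
      rcases Nat.eq_zero_or_pos k with rfl | hk
      · simp [coeff_map]
      · rw [coeff_map, coeff_C, if_neg (by omega)]
        simpa using h0 k hk
    have := hB x₀ 1 hx₀ (by norm_num)
    rw [hS] at this
    simpa using this
  have hU : IsOpen {x : ℂ | 0 < x.re ∧ eval x (B.coeff 0) ≠ 0} := by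
    refine IsOpen.inter (isOpen_lt continuous_const Complex.continuous_re) ?_
    exact isOpen_compl_singleton.preimage (B.coeff 0).continuous
  obtain ⟨δ, hδ, hball⟩ := Metric.isOpen_iff.mp hU x₀ ⟨hx₀, hc₀x₀⟩
  have hmem : ∀ x ∈ ball x₀ δ, 0 < x.re ∧ eval x (B.coeff 0) ≠ 0 := fun x hx => hball hx
  -- the coefficient-quotient functions
  set g : ℂ → ℂ := fun x => eval x (B.coeff 1) / eval x (B.coeff 0) with hgdef
  set Hf : ℂ → ℂ := fun x => eval x (B.coeff m) / eval x (B.coeff 0) with hHdef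
  have hgdiff : DifferentiableOn ℂ g (ball x₀ δ) := by
    refine DifferentiableOn.div (Polynomial.differentiableOn _) (Polynomial.differentiableOn _) ?_
    exact fun x hx => (hmem x hx).2
  have hHdiff : DifferentiableOn ℂ Hf (ball x₀ δ) := by
    refine DifferentiableOn.div (Polynomial.differentiableOn _) (Polynomial.differentiableOn _) ?_
    exact fun x hx => (hmem x hx).2
  -- re g ≥ 0 on ball
  have hgre : ∀ x ∈ ball x₀ δ, 0 ≤ (g x).re := by
    intro x hx
    obtain ⟨hxre, hc0x⟩ := hmem x hx
    obtain ⟨R, hcard, hroots, hsum, _⟩ := slice_roots_data B m hm hm1 hB x hxre hc0x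
    have : (g x) = -R.sum := by rw [hgdef]; simp only; rw [hsum, neg_neg]
    rw [this, Complex.neg_re, msum_re]
    have := msum_nonpos (R.map Complex.re) (by
      intro a ha
      rw [Multiset.mem_map] at ha
      obtain ⟨ρ, hρ, rfl⟩ := ha
      exact hroots ρ hρ)
    linarith
  have hgx₀ : g x₀ = 0 := by
    rw [hgdef]; simp only; rw [h0 1 le_rfl, zero_div]
  have hgzero := re_eq_zero_on_ball hδ hgdiff hgre hgx₀
  -- Hf is line-valued on the ball
  have hline : ∀ x ∈ ball x₀ δ, ∃ r : ℝ, Hf x = Complex.I ^ m * r := by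
    intro x hx
    obtain ⟨hxre, hc0x⟩ := hmem x hx
    obtain ⟨R, hcard, hroots, hsum, hprod⟩ := slice_roots_data B m hm hm1 hB x hxre hc0x
    have hsumre : R.sum.re = 0 := by
      have h1 := hgzero x hx
      rw [hgdef] at h1
      simp only at h1
      rw [hsum]
      simp [Complex.neg_re, h1]
    have hallzero : ∀ ρ ∈ R, ρ.re = 0 := by
      intro ρ hρ
      have := mall_zero (R.map Complex.re) (by
        intro a ha
        rw [Multiset.mem_map] at ha
        obtain ⟨σ, hσ, rfl⟩ := ha
        exact hroots σ hσ) (by rw [← msum_re]; exact hsumre)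
      exact this ρ.re (Multiset.mem_map_of_mem _ hρ)
    obtain ⟨r, hr⟩ := mprod_neg_imag R hallzero
    refine ⟨r, ?_⟩
    rw [hHdef]
    simp only
    rw [← hprod, hr, hcard]
  have hHconst := const_on_ball_of_line (pow_ne_zero m Complex.I_ne_zero) hδ hHdiff hline
  have hHx₀ : Hf x₀ = 0 := by
    rw [hHdef]; simp only; rw [h0 m hm1, zero_div]
  -- B.coeff m vanishes on the ball
  have hvanish : ∀ x ∈ ball x₀ δ, eval x (B.coeff m) = 0 := by
    intro x hx
    have h1 := hHconst x hx
    rw [hHx₀] at h1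
    have hc0x := (hmem x hx).2
    rw [hHdef] at h1
    simp only at h1
    exact (div_eq_zero_iff.mp h1).resolve_right hc0x
  -- hence B.coeff m = 0, contradiction
  have : B.coeff m = 0 := by
    apply Polynomial.eq_zero_of_infinite_isRoot
    have hsub : (fun t : ℝ => x₀ + t) '' (Set.Ioo 0 δ) ⊆ {x | (B.coeff m).IsRoot x} := by
      rintro _ ⟨t, ht, rfl⟩
      have hxball : x₀ + (t : ℂ) ∈ ball x₀ δ := by
        rw [mem_ball, dist_self_add_left]  -- ‖t‖ < δ
        rw [Complex.norm_real, Real.norm_eq_abs, abs_of_pos ht.1]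
        exact ht.2
      exact hvanish _ hxball
    refine Set.Infinite.mono hsub ?_
    refine Set.Infinite.image ?_ (Set.Ioo_infinite hδ)
    intro a _ b _ hab
    have : (a : ℂ) = b := by
      have := add_left_cancel hab
      exact_mod_cast this
    exact_mod_cast this
  exact hcm this


lemma key (c : ℝ) (hc : 0 < c) (i j : Fin n) (f : MvPolynomial (Fin n) ℂ)
    (hf : ∀ z : Fin n → ℂ, (∀ k, 0 < (z k).re) → MvPolynomial.eval z f ≠ 0)
    (z : Fin n → ℂ) (hz : ∀ k, 0 < (z k).re) :
    (c : ℂ) * MvPolynomial.eval z f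
      + MvPolynomial.eval z (MvPolynomial.pderiv i (MvPolynomial.pderiv j f)) ≠ 0 := by
  have hcne : (c : ℂ) ≠ 0 := by exact_mod_cast ne_of_gt hc
  have hfz : MvPolynomial.eval z f ≠ 0 := hf z hz
  -- updated points stay in the domain
  have hupd : ∀ (k : Fin n) (x : ℂ), 0 < x.re → ∀ l, 0 < ((Function.update z k x) l).re := by
    intro k x hx l
    rw [Function.update_apply]
    split
    · exact hx
    · exact hz l
  by_cases hij : i = j
  · -- diagonal case
    subst hij
    set s := slice i z f with hs
    have hsStb : Stb s := by
      intro x hx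
      rw [hs, eval_slice]
      exact hf _ (hupd i x hx)
    have hsz : eval (z i) s = MvPolynomial.eval z f := by
      rw [hs, eval_slice, Function.update_eq_self]
    have hdd : MvPolynomial.eval z (MvPolynomial.pderiv i (MvPolynomial.pderiv i f))
        = eval (z i) (derivative (derivative s)) := by
      rw [hs, ← slice_pderiv, ← slice_pderiv, eval_slice, Function.update_eq_self]
    rw [hdd, ← hsz]
    by_cases hzero : derivative (derivative s) = 0
    · rw [hzero, eval_zero, add_zero]
      exact mul_ne_zero hcne (by rw [hsz]; exact hfz)
    · have hs'ne : derivative s ≠ 0 := fun h => hzero (by rw [h, derivative_zero])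
      have hsdeg : 1 ≤ s.natDegree := by
        by_contra h
        push_neg at h
        exact hs'ne (derivative_of_natDegree_zero (by omega))
      have hs'deg : 1 ≤ (derivative s).natDegree := by
        by_contra h
        push_neg at h
        exact hzero (derivative_of_natDegree_zero (by omega))
      have hs'Stb : Stb (derivative s) := fun x hx => hsStb.eval_derivative_ne_zero hsdeg hx
      have hw2 := hsStb.ratio_re_pos hsdeg (hz i)
      have hw1 := hs'Stb.ratio_re_pos hs'deg (hz i)
      set E := eval (z i) s with hE
      set D1 := eval (z i) (derivative s) with hD1
      set D2 := eval (z i) (derivative (derivative s)) with hD2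
      have hEne : E ≠ 0 := hsStb _ (hz i)
      have hD1ne : D1 ≠ 0 := hsStb.eval_derivative_ne_zero hsdeg (hz i)
      intro heq
      have hD2eq : D2 = -(c : ℂ) * E := by linear_combination heq
      have : D2 / D1 = -(c : ℂ) * (D1 / E)⁻¹ := by
        rw [hD2eq]
        field_simp
      rw [this] at hw1
      have hinv := re_inv_pos hw2
      rw [neg_mul, Complex.neg_re, Complex.re_ofReal_mul] at hw1
      nlinarith
  · -- off-diagonal case
    set q := slice i z (MvPolynomial.pderiv j f) with hq
    set B := biv i j z f with hB
    have hslice : ∀ x : ℂ, B.map (evalRingHom x) = slice j (Function.update z i x) f :=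
      biv_map_eval i j hij z f
    have hupd2 : ∀ (x y : ℂ), 0 < x.re → 0 < y.re →
        ∀ l, 0 < ((Function.update (Function.update z i x) j y) l).re := by
      intro x y hx hy l
      rw [Function.update_apply]
      split
      · exact hy
      · exact hupd i x hx l
    have hBstab : ∀ x y : ℂ, 0 < x.re → 0 < y.re → eval y (B.map (evalRingHom x)) ≠ 0 := by
      intro x y hx hy
      rw [hslice x, eval_slice]
      exact hf _ (hupd2 x y hx hy)
    have hwj : ∀ x : ℂ, Function.update (Function.update z i x) j (z j)
        = Function.update z i x := by
      intro x
      have h1 : (Function.update z i x) j = z j := Function.update_of_ne (Ne.symm hij) _ _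
      conv_lhs => rw [← h1]
      rw [Function.update_eq_self]
    have hqx : ∀ x : ℂ, eval x q
        = eval (z j) (derivative (slice j (Function.update z i x) f)) := by
      intro x
      rw [hq, eval_slice, ← slice_pderiv j, eval_slice, hwj x]
    have hconst_to_q0 : ∀ x : ℂ, 0 < x.re →
        (slice j (Function.update z i x) f).natDegree = 0 → q = 0 := by
      intro x hx hdeg
      have hcoeffs : ∀ k, 1 ≤ k → eval x (B.coeff k) = 0 := by
        intro k hk
        have h1 : (B.map (evalRingHom x)).coeff k = eval x (B.coeff k) := by
          rw [coeff_map]; rfl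
        rw [← h1, hslice x]
        exact coeff_eq_zero_of_natDegree_lt (by omega)
      have hall := coeffs_vanish_of_slice_const B hBstab x hx hcoeffs
      apply Polynomial.funext
      intro x'
      rw [hqx x', eval_zero]
      have hsx' : (slice j (Function.update z i x') f)
          = Polynomial.C ((slice j (Function.update z i x') f).coeff 0) := by
        ext k
        rcases Nat.eq_zero_or_pos k with rfl | hk
        · simp
        · rw [coeff_C, if_neg (by omega), ← hslice x', coeff_map, hall k hk]
          simp
      rw [hsx', derivative_C, eval_zero]
    have htarget : MvPolynomial.eval z (MvPolynomial.pderiv i (MvPolynomial.pderiv j f))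
        = eval (z i) (derivative q) := by
      rw [hq, ← slice_pderiv i z, eval_slice, Function.update_eq_self]
    rw [htarget]
    by_cases hq0 : q = 0
    · rw [hq0, derivative_zero, eval_zero, add_zero]
      exact mul_ne_zero hcne hfz
    · have hqStb : Stb q := by
        intro x hx
        by_cases hdeg : 1 ≤ (slice j (Function.update z i x) f).natDegree
        · rw [hqx x]
          have hsxStb : Stb (slice j (Function.update z i x) f) := by
            intro y hy
            rw [eval_slice]
            exact hf _ (hupd2 x y hx hy)
          exact hsxStb.eval_derivative_ne_zero hdeg (hz j)
        · exact absurd (hconst_to_q0 x hx (by omega)) hq0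
      set s := slice j z f with hs
      have hsStb : Stb s := by
        intro y hy
        rw [hs, eval_slice]
        exact hf _ (hupd j y hy)
      have hsz : eval (z j) s = MvPolynomial.eval z f := by
        rw [hs, eval_slice, Function.update_eq_self]
      have hsq : eval (z i) q = eval (z j) (derivative s) := by
        rw [hqx (z i), Function.update_eq_self, ← hs]
      have hsdeg : 1 ≤ s.natDegree := by
        by_contra h
        push_neg at h
        refine hq0 (hconst_to_q0 (z i) (hz i) ?_)
        rw [Function.update_eq_self, ← hs]
        omega
      have hQne : eval (z i) q ≠ 0 := hqStb _ (hz i)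
      have hw2 := hsStb.ratio_re_pos hsdeg (hz j)
      have hw1 := hqStb.ratio_re_nonneg (hz i)
      intro heq
      have hEQ : MvPolynomial.eval z f / eval (z i) q
          = (eval (z j) (derivative s) / eval (z j) s)⁻¹ := by
        rw [inv_div, hsq, hsz]
      have h1 : (c:ℂ) * (MvPolynomial.eval z f / eval (z i) q)
          + eval (z i) (derivative q) / eval (z i) q = 0 := by
        field_simp
        linear_combination heq
      have h2 : 0 < (MvPolynomial.eval z f / eval (z i) q).re := by
        rw [hEQ]; exact re_inv_pos hw2
      have h3 := congrArg Complex.re h1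
      rw [Complex.add_re, Complex.re_ofReal_mul, Complex.zero_re] at h3
      nlinarith [hw1, h2, h3, hc]


end LeeYangAux

open MvPolynomial

/-- The key step in the proof of the Lee–Yang theorem: for `J ≥ 0` the linear operator
`cosh(J) + sinh(J) ∂²/∂z_i∂z_j` preserves stability with respect to the open right
half-plane `ℍ_{π/2} = {ζ : Re ζ > 0}`. -/
theorem cosh_sinh_pderiv_preserves_right_halfplane_stability
    (n : ℕ) (hn : 1 ≤ n) (i j : Fin n) (J : ℝ) (hJ : 0 ≤ J)
    (f : MvPolynomial (Fin n) ℂ)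
    (hf : ∀ z : Fin n → ℂ, (∀ k, 0 < (z k).re) → eval z f ≠ 0) :
    (C ((Real.cosh J : ℝ) : ℂ) * f + C ((Real.sinh J : ℝ) : ℂ) * pderiv i (pderiv j f)) = 0 ∨
      ∀ z : Fin n → ℂ, (∀ k, 0 < (z k).re) →
        eval z (C ((Real.cosh J : ℝ) : ℂ) * f
          + C ((Real.sinh J : ℝ) : ℂ) * pderiv i (pderiv j f)) ≠ 0 := by
  right
  intro z hz
  rw [map_add, map_mul, map_mul, eval_C, eval_C]
  rcases eq_or_lt_of_le hJ with rfl | hJpos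
  · simp only [Real.cosh_zero, Real.sinh_zero, Complex.ofReal_one, Complex.ofReal_zero,
      one_mul, zero_mul, add_zero]
    exact hf z hz
  · have hsinh : 0 < Real.sinh J := Real.sinh_pos_iff.mpr hJpos
    have hcosh : 0 < Real.cosh J := Real.cosh_pos J
    intro heq
    apply LeeYangAux.key (Real.cosh J / Real.sinh J) (div_pos hcosh hsinh) i j f hf z hz
    have hs : ((Real.sinh J : ℝ) : ℂ) ≠ 0 := by exact_mod_cast ne_of_gt hsinh
    rw [Complex.ofReal_div, div_mul_eq_mul_div, div_add' _ _ _ hs, div_eq_zero_iff]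
    left
    linear_combination heq
end

section
/- Let n ≥ 2 and let f ∈ ℂ[z₁,…,zₙ] have degree at most 1 in each of z₁ and z₂, so that f(z₁,…,zₙ) = a(z₃,…,zₙ) + b(z₃,…,zₙ)z₁ + c(z₃,…,zₙ)z₂ + d(z₃,…,zₙ)z₁z₂ for unique polynomials a,b,c,d in z₃,…,zₙ. If f is 𝔻-stable, then its Asano contraction A(f)(z₁,…,zₙ) = a(z₃,…,zₙ) + d(z₃,…,zₙ)z₁ is either 𝔻-stable or identically zero. -/
open MvPolynomial

/-- Evaluation of a polynomial not involving variables `i0, i1` only depends on the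
other coordinates. -/
lemma asano_eval_indep {n : ℕ} (p : MvPolynomial (Fin n) ℂ) (i0 i1 : Fin n)
    (hp : ∀ m ∈ p.support, m i0 = 0 ∧ m i1 = 0) (z z' : Fin n → ℂ)
    (hz : ∀ i, i ≠ i0 → i ≠ i1 → z i = z' i) : eval z p = eval z' p := by
  rw [eval_eq, eval_eq]
  refine Finset.sum_congr rfl fun m hm => ?_
  congr 1
  refine Finset.prod_congr rfl fun i hi => ?_
  have hi' : m i ≠ 0 := Finsupp.mem_support_iff.mp hi
  have h0 : i ≠ i0 := fun h => hi' (h ▸ (hp m hm).1)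
  have h1 : i ≠ i1 := fun h => hi' (h ▸ (hp m hm).2)
  rw [hz i h0 h1]

set_option maxHeartbeats 1000000
/-- **Asano contraction preserves `𝔻`-stability.** Let `n ≥ 2` and let
`f = a + b z₁ + c z₂ + d z₁ z₂` have degree at most 1 in each of `z₁, z₂`, where
`a, b, c, d` are polynomials in the remaining variables `z₃,…,zₙ`. If `f` is
`𝔻`-stable then its Asano contraction `A(f) = a + d z₁` is `𝔻`-stable or zero. -/
theorem asano_contraction (n : ℕ) (hn : 2 ≤ n)
    (f a b c d : MvPolynomial (Fin n) ℂ)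
    (ha : ∀ m ∈ a.support, m ⟨0, by omega⟩ = 0 ∧ m ⟨1, by omega⟩ = 0)
    (hb : ∀ m ∈ b.support, m ⟨0, by omega⟩ = 0 ∧ m ⟨1, by omega⟩ = 0)
    (hc : ∀ m ∈ c.support, m ⟨0, by omega⟩ = 0 ∧ m ⟨1, by omega⟩ = 0)
    (hd : ∀ m ∈ d.support, m ⟨0, by omega⟩ = 0 ∧ m ⟨1, by omega⟩ = 0)
    (hdeg1 : f.degreeOf ⟨0, by omega⟩ ≤ 1) (hdeg2 : f.degreeOf ⟨1, by omega⟩ ≤ 1)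
    (hrep : f = a + b * X ⟨0, by omega⟩ + c * X ⟨1, by omega⟩
      + d * X ⟨0, by omega⟩ * X ⟨1, by omega⟩)
    (hf : ∀ z : Fin n → ℂ, (∀ i, ‖z i‖ < 1) → eval z f ≠ 0) :
    (a + d * X ⟨0, by omega⟩) = 0 ∨
      ∀ z : Fin n → ℂ, (∀ i, ‖z i‖ < 1) →
        eval z (a + d * X ⟨0, by omega⟩) ≠ 0 := by
  right
  intro z hz hzero
  set i0 : Fin n := ⟨0, by omega⟩ with hi0
  set i1 : Fin n := ⟨1, by omega⟩ with hi1
  have hne : i0 ≠ i1 := by simp [hi0, hi1, Fin.ext_iff]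
  obtain ⟨α, hα'⟩ : ∃ x : ℂ, x = eval z a := ⟨_, rfl⟩
  obtain ⟨β, hβ'⟩ : ∃ x : ℂ, x = eval z b := ⟨_, rfl⟩
  obtain ⟨γ, hγ'⟩ : ∃ x : ℂ, x = eval z c := ⟨_, rfl⟩
  obtain ⟨δ, hδ'⟩ : ∃ x : ℂ, x = eval z d := ⟨_, rfl⟩
  -- evaluation at points agreeing with z off i0, i1
  have key : ∀ w : ℂ, ‖w‖ < 1 → α + β * w + γ * w + δ * (w * w) ≠ 0 := by
    intro w hw hcontra
    obtain ⟨z', hz'0, hz'1, hz'other⟩ :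
        ∃ z' : Fin n → ℂ, z' i0 = w ∧ z' i1 = w ∧ ∀ i, i ≠ i0 → i ≠ i1 → z i = z' i :=
      ⟨fun i => if i = i0 then w else if i = i1 then w else z i, by simp,
        by simp [hne.symm], fun i h0 h1 => by simp [h0, h1]⟩
    have hz'lt : ∀ i, ‖z' i‖ < 1 := by
      intro i
      by_cases h0 : i = i0
      · rw [h0, hz'0]; exact hw
      by_cases h1 : i = i1
      · rw [h1, hz'1]; exact hw
      · rw [← hz'other i h0 h1]; exact hz i
    apply hf z' hz'lt
    rw [hrep]
    simp only [map_add, map_mul, eval_X, hz'0, hz'1]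
    rw [← asano_eval_indep a i0 i1 ha z z' hz'other,
      ← asano_eval_indep b i0 i1 hb z z' hz'other,
      ← asano_eval_indep c i0 i1 hc z z' hz'other,
      ← asano_eval_indep d i0 i1 hd z z' hz'other]
    rw [← hα', ← hβ', ← hγ', ← hδ']
    linear_combination hcontra
  -- α ≠ 0
  have hαne : α ≠ 0 := by
    have := key 0 (by simp)
    simpa using this
  -- from hzero : α + δ * z i0 = 0
  have hzero' : α + δ * z i0 = 0 := by
    rw [map_add, map_mul, eval_X, ← hα', ← hδ'] at hzero
    exact hzero
  have hδne : δ ≠ 0 := by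
    intro h
    rw [h, zero_mul, add_zero] at hzero'
    exact hαne hzero'
  have hratio : ‖α / δ‖ < 1 := by
    have : α / δ = -(z i0) := by
      field_simp
      linear_combination hzero'
    rw [this, norm_neg]
    exact hz i0
  -- quadratic δ t² + (β+γ) t + α has a root in 𝔻
  obtain ⟨s, hs⟩ : ∃ s : ℂ, s ^ 2 = (β + γ) ^ 2 - 4 * δ * α :=
    IsAlgClosed.exists_pow_nat_eq _ (hn := by norm_num)
  obtain ⟨r₁, hr₁'⟩ : ∃ x : ℂ, x = (-(β + γ) + s) / (2 * δ) := ⟨_, rfl⟩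
  obtain ⟨r₂, hr₂'⟩ : ∃ x : ℂ, x = (-(β + γ) - s) / (2 * δ) := ⟨_, rfl⟩
  have hprod : r₁ * r₂ = α / δ := by
    rw [hr₁', hr₂']
    field_simp
    linear_combination -hs
  have hroot1 : α + β * r₁ + γ * r₁ + δ * (r₁ * r₁) = 0 := by
    rw [hr₁']; field_simp; linear_combination hs
  have hroot2 : α + β * r₂ + γ * r₂ + δ * (r₂ * r₂) = 0 := by
    rw [hr₂']; field_simp; linear_combination hs
  have hsmall : ‖r₁‖ < 1 ∨ ‖r₂‖ < 1 := by
    by_contra h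
    push_neg at h
    have : (1 : ℝ) ≤ ‖r₁ * r₂‖ := by
      rw [norm_mul]
      nlinarith [h.1, h.2]
    rw [hprod] at this
    linarith
  rcases hsmall with h | h
  · exact key r₁ h hroot1
  · exact key r₂ h hroot2
end
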